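/- arXiv:1005.3756 — 9 statements merged into one kernel-verified Lean document; each statement's English description precedes it below -/
import Mathlib

section
/- Let G be a finite simple group and C a non-trivial conjugacy class of G. Then C is not contained in the union of any two proper subgroups of G. -/
/-- A non-trivial conjugacy class of a finite simple group is not contained
in the union of two proper subgroups. -/
theorem stmt_0 (G : Type*) [Group G] [Finite G] [IsSimpleGroup G]
    (g : G) (hg : g ≠ 1) (X Y : Subgroup G) (hX : X ≠ ⊤) (hY : Y ≠ ⊤) :
    ¬ (∀ h : G, h * g * h⁻¹ ∈ X ∨ h * g * h⁻¹ ∈ Y) := by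
  intro hcov
  -- the normal closure of g is the whole group
  have hnc : Subgroup.normalClosure {g} = ⊤ := by
    rcases (Subgroup.normalClosure_normal (s := ({g} : Set G))).eq_bot_or_eq_top with h | h
    · have : g ∈ (⊥ : Subgroup G) := h ▸ Subgroup.subset_normalClosure rfl
      exact absurd (Subgroup.mem_bot.mp this) hg
    · exact h
  -- extend Y to a maximal subgroup B
  obtain ⟨B, hBco, hYB⟩ := (eq_top_or_exists_le_coatom Y).resolve_left hY
  -- some conjugate of g lies outside B
  have hnotall : ¬ ∀ h : G, h * g * h⁻¹ ∈ B := by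
    intro hall
    have hle : Subgroup.normalClosure {g} ≤ B := by
      refine (Subgroup.closure_le B).2 ?_
      intro x hx
      rcases Group.mem_conjugatesOfSet_iff.mp hx with ⟨b, hb, hconj⟩
      rcases isConj_iff.mp hconj with ⟨c, hc⟩
      rw [Set.mem_singleton_iff] at hb
      subst hb
      exact hc ▸ hall c
    rw [hnc, top_le_iff] at hle
    exact hBco.1 hle
  push_neg at hnotall
  obtain ⟨h₀, ha⟩ := hnotall
  set a : G := h₀ * g * h₀⁻¹ with ha_def
  have haX : ∀ w : G, w ∈ B → w * a * w⁻¹ ∈ X := by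
    intro w hw
    have key : w * a * w⁻¹ = (w * h₀) * g * (w * h₀)⁻¹ := by rw [ha_def]; group
    rcases hcov (w * h₀) with h | h
    · rw [key]; exact h
    · exfalso
      apply ha
      have : w * a * w⁻¹ ∈ B := hYB (key ▸ h)
      have := B.mul_mem (B.mul_mem (B.inv_mem hw) this) hw
      simpa [mul_assoc] using this
  -- D : subgroup generated by the B-conjugates of a
  set S : Set G := {x | ∃ w ∈ B, w * a * w⁻¹ = x} with hS_def
  set D : Subgroup G := Subgroup.closure S with hD_def
  have hDX : D ≤ X := (Subgroup.closure_le X).2 (by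
    rintro x ⟨w, hw, rfl⟩; exact haX w hw)
  have haD : a ∈ D := Subgroup.subset_closure ⟨1, B.one_mem, by group⟩
  have hconjD : ∀ w ∈ B, ∀ n ∈ D, w * n * w⁻¹ ∈ D := by
    intro w hw n hn
    induction hn using Subgroup.closure_induction with
    | mem x hx =>
        rcases hx with ⟨u, hu, rfl⟩
        refine Subgroup.subset_closure ⟨w * u, B.mul_mem hw hu, by group⟩
    | one => simpa using D.one_mem
    | mul x y hx hy ihx ihy =>
        have : w * (x * y) * w⁻¹ = (w * x * w⁻¹) * (w * y * w⁻¹) := by group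
        rw [this]; exact D.mul_mem ihx ihy
    | inv x hx ihx =>
        have : w * x⁻¹ * w⁻¹ = (w * x * w⁻¹)⁻¹ := by group
        rw [this]; exact D.inv_mem ihx
  have hBN : B ≤ Subgroup.normalizer (D : Set G) := by
    intro w hw
    rw [Subgroup.mem_normalizer_iff]
    intro n
    constructor
    · exact fun hn => hconjD w hw n hn
    · intro hn
      have := hconjD w⁻¹ (B.inv_mem hw) _ hn
      simpa [mul_assoc] using this
  have haN : a ∈ Subgroup.normalizer (D : Set G) := Subgroup.le_normalizer haD
  have hne : B ≠ Subgroup.normalizer (D : Set G) := by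
    intro h
    exact ha (by rw [h]; exact haN)
  have hlt : B < Subgroup.normalizer (D : Set G) := lt_of_le_of_ne hBN hne
  have htop : Subgroup.normalizer (D : Set G) = ⊤ := hBco.2 _ hlt
  have hDnormal : D.Normal := Subgroup.normalizer_eq_top_iff.mp htop
  rcases hDnormal.eq_bot_or_eq_top with h | h
  · rw [h] at haD
    have h1 : h₀ * g * h₀⁻¹ = 1 := Subgroup.mem_bot.mp haD
    apply hg
    have h2 : g = h₀⁻¹ * (h₀ * g * h₀⁻¹) * h₀ := by group
    rw [h2, h1]
    group
  · exact hX (top_le_iff.mp (h ▸ hDX))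
end

section
/- Let G be a finite group generated by elements x, y, z with xyz = 1, and let k be a field and V a finite-dimensional kG-module such that V has no nonzero G-fixed vectors and the dual module V* has no nonzero G-fixed vectors. Then dim C_V(x) + dim C_V(y) + dim C_V(z) ≤ dim V, where C_V(g) denotes the fixed-point subspace of g on V. -/
open Module LinearMap

/-- A product of submodules is linearly equivalent to the product of the pieces. -/
noncomputable def scottProdEquiv {k V : Type*} [Field k] [AddCommGroup V] [Module k V]
    (p q : Submodule k V) : (p.prod q : Submodule k (V × V)) ≃ₗ[k] p × q where
  toFun v := (⟨v.1.1, v.2.1⟩, ⟨v.1.2, v.2.2⟩)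
  map_add' v w := rfl
  map_smul' c v := rfl
  invFun w := ⟨(w.1.1, w.2.1), ⟨w.1.2, w.2.2⟩⟩
  left_inv v := rfl
  right_inv w := rfl

/-- Consequence of Scott's Lemma: if a finite group `G` is generated by
`x, y, z` with `x * y * z = 1`, and `V` is a finite dimensional `kG`-module
with no nonzero `G`-fixed vectors in `V` nor in its dual, then
`dim C_V(x) + dim C_V(y) + dim C_V(z) ≤ dim V`. -/
theorem stmt_1 (G : Type*) [Group G] [Finite G]
    (k : Type*) [Field k] (V : Type*) [AddCommGroup V] [Module k V]
    [FiniteDimensional k V] (ρ : Representation k G V)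
    (x y z : G) (hgen : Subgroup.closure {x, y, z} = ⊤) (hprod : x * y * z = 1)
    (hV : ∀ v : V, (∀ g : G, ρ g v = v) → v = 0)
    (hV' : ∀ φ : Module.Dual k V, (∀ g : G, ρ.dual g φ = φ) → φ = 0) :
    Module.finrank k (LinearMap.ker (ρ x - 1)) +
      Module.finrank k (LinearMap.ker (ρ y - 1)) +
      Module.finrank k (LinearMap.ker (ρ z - 1)) ≤ Module.finrank k V := by
  classical
  have mulv : ∀ (g h : G) (v : V), ρ (g * h) v = ρ g (ρ h v) := by
    intro g h v; rw [map_mul]; rfl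
  set A : V →ₗ[k] V := ρ x - 1 with hA
  set B : V →ₗ[k] V := ρ y - 1 with hB
  set C : V →ₗ[k] V := ρ (x * y) - 1 with hC
  have hz : z = (x * y)⁻¹ := eq_inv_of_mul_eq_one_right hprod
  have hzxy : z * (x * y) = 1 := by rw [hz, inv_mul_cancel]
  -- the fixed space of z coincides with that of x*y
  have hkerz : LinearMap.ker (ρ z - 1) = LinearMap.ker C := by
    ext v
    simp only [LinearMap.mem_ker, LinearMap.sub_apply, Module.End.one_apply, sub_eq_zero, hC]
    constructor
    · intro h
      have h2 : ρ (x * y * z) v = ρ (x * y) v := by rw [mulv, h]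
      rw [hprod, map_one, Module.End.one_apply] at h2
      exact h2.symm
    · intro h
      have h2 : ρ (z * (x * y)) v = ρ z v := by rw [mulv, h]
      rw [hzxy, map_one, Module.End.one_apply] at h2
      exact h2.symm
  -- vectors fixed by x and y are zero
  have fix_all : ∀ w : V, ρ x w = w → ρ y w = w → w = 0 := by
    intro w hx hy
    apply hV
    let H : Subgroup G :=
      { carrier := {g | ρ g w = w}
        one_mem' := by simp
        mul_mem' := by
          intro a b ha hb
          show ρ (a * b) w = w
          rw [mulv, hb, ha]
        inv_mem' := by
          intro a ha
          show ρ a⁻¹ w = w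
          have : ρ a⁻¹ w = ρ a⁻¹ (ρ a w) := by rw [ha]
          rw [this, ← mulv, inv_mul_cancel, map_one, Module.End.one_apply] }
    have hxH : x ∈ H := hx
    have hyH : y ∈ H := hy
    have hzH : z ∈ H := by rw [hz]; exact H.inv_mem (H.mul_mem hxH hyH)
    have hle : Subgroup.closure ({x, y, z} : Set G) ≤ H := by
      apply (Subgroup.closure_le H).mpr
      intro g hg
      rcases hg with rfl | rfl | rfl
      · exact hxH
      · exact hyH
      · exact hzH
    intro g
    exact hle (hgen.ge (Subgroup.mem_top g))
  -- range A ⊔ range B = ⊤, using the hypothesis on the dual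
  have hrange : LinearMap.range A ⊔ LinearMap.range B = ⊤ := by
    by_contra hne
    obtain ⟨φ, hφ0, hφ⟩ := Submodule.exists_dual_map_eq_bot_of_lt_top
      (p := LinearMap.range A ⊔ LinearMap.range B) (lt_top_iff_ne_top.mpr hne) inferInstance
    have hkillA : ∀ v : V, φ (A v) = 0 := by
      intro v
      have h1 : A v ∈ LinearMap.range A ⊔ LinearMap.range B :=
        le_sup_left (α := Submodule k V) (LinearMap.mem_range_self A v)
      have h2 : φ (A v) ∈ (LinearMap.range A ⊔ LinearMap.range B).map φ :=
        Submodule.mem_map_of_mem h1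
      rw [hφ] at h2
      exact (Submodule.mem_bot k).mp h2
    have hkillB : ∀ v : V, φ (B v) = 0 := by
      intro v
      have h1 : B v ∈ LinearMap.range A ⊔ LinearMap.range B :=
        le_sup_right (α := Submodule k V) (LinearMap.mem_range_self B v)
      have h2 : φ (B v) ∈ (LinearMap.range A ⊔ LinearMap.range B).map φ :=
        Submodule.mem_map_of_mem h1
      rw [hφ] at h2
      exact (Submodule.mem_bot k).mp h2
    let H : Subgroup G :=
      { carrier := {g | ∀ v : V, φ (ρ g v - v) = 0}
        one_mem' := by simp
        mul_mem' := by
          intro a b ha hb v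
          have key : ρ (a * b) v - v = (ρ a (ρ b v) - ρ b v) + (ρ b v - v) := by
            rw [mulv]; abel
          rw [key, map_add, ha (ρ b v), hb v, add_zero]
        inv_mem' := by
          intro a ha v
          have h1 : ρ a (ρ a⁻¹ v) = v := by
            rw [← mulv, mul_inv_cancel, map_one, Module.End.one_apply]
          have key : ρ a⁻¹ v - v = -(ρ a (ρ a⁻¹ v) - ρ a⁻¹ v) := by rw [h1]; abel
          rw [key, map_neg, ha (ρ a⁻¹ v), neg_zero] }
    have hxH : x ∈ H := by
      intro v
      have : ρ x v - v = A v := by rw [hA]; simp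
      rw [this]; exact hkillA v
    have hyH : y ∈ H := by
      intro v
      have : ρ y v - v = B v := by rw [hB]; simp
      rw [this]; exact hkillB v
    have hall : ∀ g : G, g ∈ H := by
      have hzH : z ∈ H := by rw [hz]; exact H.inv_mem (H.mul_mem hxH hyH)
      have hle : Subgroup.closure ({x, y, z} : Set G) ≤ H := by
        apply (Subgroup.closure_le H).mpr
        intro g hg
        rcases hg with rfl | rfl | rfl
        · exact hxH
        · exact hyH
        · exact hzH
      intro g
      exact hle (hgen.ge (Subgroup.mem_top g))
    apply hφ0
    apply hV'
    intro g
    ext v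
    have h1 : φ (ρ g⁻¹ v - v) = 0 := hall g⁻¹ v
    rw [map_sub, sub_eq_zero] at h1
    simpa [Representation.dual_apply, Module.Dual.transpose] using h1
  -- the coprod map and its kernel
  set Ψ : V × V →ₗ[k] V := A.coprod B with hΨ
  have hΨsurj : LinearMap.range Ψ = ⊤ := by
    rw [hΨ, LinearMap.range_coprod]; exact hrange
  have hΨker : finrank k (LinearMap.ker Ψ) = finrank k V := by
    have h1 := LinearMap.finrank_range_add_finrank_ker Ψ
    rw [hΨsurj, finrank_top, Module.finrank_prod] at h1
    omega
  set Φ : V →ₗ[k] V × V := (ρ y).prod LinearMap.id with hΦ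
  have hΦapp : ∀ w : V, Φ w = (ρ y w, w) := fun w => rfl
  have hΦinj : Function.Injective Φ := by
    intro a b h
    have := congrArg Prod.snd h
    simpa [hΦapp] using this
  set P : Submodule k (V × V) := (LinearMap.ker A).prod (LinearMap.ker B) with hP
  set Q : Submodule k (V × V) := (LinearMap.ker C).map Φ with hQ
  have hPle : P ≤ LinearMap.ker Ψ := by
    rintro ⟨u, v⟩ huv
    obtain ⟨hu, hv⟩ := huv
    simp only [LinearMap.mem_ker] at hu hv ⊢
    rw [hΨ, LinearMap.coprod_apply]
    rw [hu, hv, add_zero]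
  have hQle : Q ≤ LinearMap.ker Ψ := by
    rintro _ ⟨w, hw, rfl⟩
    simp only [LinearMap.mem_ker] at hw ⊢
    rw [hΦapp, hΨ, LinearMap.coprod_apply]
    have hCw : ρ (x * y) w - w = 0 := by
      have := hw
      rw [hC] at this
      simpa using this
    rw [hA, hB]
    simp only [LinearMap.sub_apply, Module.End.one_apply]
    rw [← mulv]
    have : ρ (x * y) w - ρ y w + (ρ y w - w) = ρ (x * y) w - w := by abel
    rw [this, hCw]
  have hdisj : Disjoint P Q := by
    rw [Submodule.disjoint_def]
    rintro u huP huQ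
    obtain ⟨w, hw, rfl⟩ := huQ
    obtain ⟨h1, h2⟩ := huP
    rw [hΦapp] at h1 h2
    have hyw : ρ y w = w := by
      have h2' : B w = 0 := h2
      rw [hB] at h2'
      simp only [LinearMap.sub_apply, Module.End.one_apply, sub_eq_zero] at h2'
      exact h2'
    have hxw : ρ x w = w := by
      have h1' : A (ρ y w) = 0 := h1
      rw [hyw, hA] at h1'
      simp only [LinearMap.sub_apply, Module.End.one_apply, sub_eq_zero] at h1'
      exact h1'
    have : w = 0 := fix_all w hxw hyw
    rw [this, map_zero]
  have hPrank : finrank k P = finrank k (LinearMap.ker A) + finrank k (LinearMap.ker B) := by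
    rw [hP, (scottProdEquiv (LinearMap.ker A) (LinearMap.ker B)).finrank_eq,
      Module.finrank_prod]
  have hQrank : finrank k Q = finrank k (LinearMap.ker C) := by
    rw [hQ, ← (Submodule.equivMapOfInjective Φ hΦinj (LinearMap.ker C)).finrank_eq]
  have hsum : finrank k P + finrank k Q ≤ finrank k (LinearMap.ker Ψ) := by
    have h1 := Submodule.finrank_sup_add_finrank_inf_eq P Q
    rw [hdisj.eq_bot, finrank_bot, add_zero] at h1
    rw [← h1]
    exact Submodule.finrank_mono (sup_le hPle hQle)
  rw [hkerz]
  rw [hPrank, hQrank, hΨker] at hsum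
  omega
end

section
/- Let k be an algebraically closed field, n ≥ 2, and let x, y ∈ GL_n(k) be conjugate elements such that xy is conjugate to x². Let G = ⟨x, y⟩ and let V = kⁿ be the natural module. If V contains no 1-dimensional kG-submodule and has no 1-dimensional kG-quotient module, then every eigenspace of x on V has dimension at most n/3. -/
open LinearMap Module

lemma scott_core {k V : Type*} [Field k] [AddCommGroup V] [Module k V]
    [FiniteDimensional k V] (P Q : V →ₗ[k] V)
    (hker : ker (P - 1) ⊓ ker (Q - 1) = ⊥)
    (hrange : range (P - 1) ⊔ range (Q - 1) = ⊤) :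
    finrank k (ker (P - 1)) + finrank k (ker (Q - 1)) + finrank k (ker (P ∘ₗ Q - 1))
      ≤ finrank k V := by
  set K1 := ker (P - 1) with hK1
  set K2 := ker (Q - 1) with hK2
  set K3 := ker (P ∘ₗ Q - 1) with hK3
  set α : (V × V) →ₗ[k] V := (P - 1).coprod (Q - 1) with hα
  have hαsurj : range α = ⊤ := by
    rw [hα, LinearMap.range_coprod, hrange]
  have hkerα : finrank k (ker α) = finrank k V := by
    have h := LinearMap.finrank_range_add_finrank_ker α
    rw [hαsurj, finrank_top] at h
    have h2 : finrank k (V × V) = finrank k V + finrank k V := Module.finrank_prod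
    omega
  set L0 : (K1 × K2 × K3) →ₗ[k] (V × V) :=
    { toFun := fun t => ((t.1 : V) + Q (t.2.2 : V), (t.2.1 : V) + (t.2.2 : V)),
      map_add' := by intro a b; ext <;> simp [map_add] <;> abel
      map_smul' := by intro c a; ext <;> simp } with hL0
  have hmem : ∀ t, L0 t ∈ ker α := by
    rintro ⟨⟨a, ha⟩, ⟨b, hb⟩, ⟨c, hc⟩⟩
    have ha' : P a - a = 0 := by simpa [hK1, LinearMap.sub_apply] using ha
    have hb' : Q b - b = 0 := by simpa [hK2, LinearMap.sub_apply] using hb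
    have hc' : P (Q c) - c = 0 := by simpa [hK3, LinearMap.sub_apply] using hc
    simp only [hL0, hα, LinearMap.mem_ker, coprod_apply, LinearMap.sub_apply, Module.End.one_apply, map_add,
      LinearMap.coe_mk, AddHom.coe_mk]
    have key : P a - a + (P (Q c) - Q c) + (Q b - b + (Q c - c)) = 0 := by
      rw [ha', hb']
      calc (0 : V) + (P (Q c) - Q c) + (0 + (Q c - c)) = P (Q c) - c := by abel
        _ = 0 := hc'
    linear_combination (norm := abel) key
  have hLinj : Function.Injective L0 := by
    rw [injective_iff_map_eq_zero]
    rintro ⟨⟨a, ha⟩, ⟨b, hb⟩, ⟨c, hc⟩⟩ h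
    simp only [hL0, LinearMap.coe_mk, AddHom.coe_mk, Prod.mk_eq_zero] at h
    obtain ⟨h1, h2⟩ := h
    have hb' : Q b = b := by
      have := hb; simp only [hK2, LinearMap.mem_ker, LinearMap.sub_apply, Module.End.one_apply, sub_eq_zero] at this
      exact this
    have hcb : c = -b := by
      rw [eq_neg_iff_add_eq_zero, add_comm]; exact h2
    have hQc : Q c = c := by rw [hcb, map_neg, hb']
    have hac : a = -c := by
      rw [hQc] at h1; rw [eq_neg_iff_add_eq_zero]; exact h1
    have hcK1 : c ∈ K1 := by
      have h4 : -c ∈ K1 := hac ▸ ha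
      simpa using K1.neg_mem h4
    have hcK2 : c ∈ K2 := hcb ▸ K2.neg_mem hb
    have hc0 : c = 0 := by
      have h5 : c ∈ K1 ⊓ K2 := ⟨hcK1, hcK2⟩
      rw [hker] at h5; simpa using h5
    have ha0 : a = 0 := by rw [hac, hc0, neg_zero]
    have hb0 : b = 0 := by
      have := hcb; rw [hc0] at this; simpa using this.symm
    simp only [Prod.ext_iff, Subtype.ext_iff]
    exact ⟨ha0, hb0, hc0⟩
  set L : (K1 × K2 × K3) →ₗ[k] ker α := L0.codRestrict (ker α) hmem with hL
  have hLinj' : Function.Injective L := by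
    intro u v huv
    apply hLinj
    have := congrArg Subtype.val huv
    simpa [hL, LinearMap.codRestrict_apply] using this
  have hle := LinearMap.finrank_le_finrank_of_injective hLinj'
  rw [hkerα] at hle
  have h3 : finrank k (K1 × K2 × K3) = finrank k K1 + (finrank k K2 + finrank k K3) := by
    rw [Module.finrank_prod, Module.finrank_prod]
  omega

section aux

variable {k : Type*} [Field k] {n : ℕ}

lemma aux_invmul (g : Matrix.GeneralLinearGroup (Fin n) k) :
    ((g : Matrix (Fin n) (Fin n) k))⁻¹ * (g : Matrix (Fin n) (Fin n) k) = 1 := by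
  rw [← Matrix.coe_units_inv, ← Units.val_mul, inv_mul_cancel, Units.val_one]

lemma aux_cancel (g : Matrix.GeneralLinearGroup (Fin n) k) (v : Fin n → k) :
    ((g⁻¹ : Matrix.GeneralLinearGroup (Fin n) k) : Matrix (Fin n) (Fin n) k).mulVec
      ((g : Matrix (Fin n) (Fin n) k).mulVec v) = v := by
  rw [Matrix.mulVec_mulVec, Matrix.coe_units_inv, aux_invmul, Matrix.one_mulVec]

lemma aux_inj (g : Matrix.GeneralLinearGroup (Fin n) k) :
    Function.Injective ((g : Matrix (Fin n) (Fin n) k).mulVecLin) := by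
  intro u v huv
  have h2 := congrArg (fun w => ((g⁻¹ : Matrix.GeneralLinearGroup (Fin n) k) :
    Matrix (Fin n) (Fin n) k).mulVec w) huv
  simpa [Matrix.mulVecLin_apply, Matrix.mulVec_mulVec, aux_invmul, Matrix.one_mulVec] using h2

lemma aux_inv_pres (g : Matrix.GeneralLinearGroup (Fin n) k) (W : Submodule k (Fin n → k))
    (h : ∀ v ∈ W, (g : Matrix (Fin n) (Fin n) k).mulVec v ∈ W) :
    ∀ v ∈ W, ((g⁻¹ : Matrix.GeneralLinearGroup (Fin n) k) :
      Matrix (Fin n) (Fin n) k).mulVec v ∈ W := by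
  set f := ((g : Matrix (Fin n) (Fin n) k)).mulVecLin with hf
  have hinj : Function.Injective f := aux_inj g
  have hmap : Submodule.map f W ≤ W := by
    rintro _ ⟨u, hu, rfl⟩
    simpa [hf, Matrix.mulVecLin_apply] using h u hu
  have hfr : finrank k (Submodule.map f W) = finrank k W :=
    (Submodule.equivMapOfInjective f hinj W).finrank_eq.symm
  have heq : Submodule.map f W = W := Submodule.eq_of_le_of_finrank_le hmap hfr.ge
  intro v hv
  rw [← heq] at hv
  obtain ⟨u, hu, rfl⟩ := hv
  simpa [hf, Matrix.mulVecLin_apply, Matrix.mulVec_mulVec, Matrix.coe_units_inv,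
    aux_invmul, Matrix.one_mulVec] using hu

lemma aux_closure_pres (x y : Matrix.GeneralLinearGroup (Fin n) k)
    (W : Submodule k (Fin n → k))
    (hx : ∀ v ∈ W, (x : Matrix (Fin n) (Fin n) k).mulVec v ∈ W)
    (hy : ∀ v ∈ W, (y : Matrix (Fin n) (Fin n) k).mulVec v ∈ W) :
    ∀ g ∈ Subgroup.closure ({x, y} : Set (Matrix.GeneralLinearGroup (Fin n) k)),
      ∀ v ∈ W, (g : Matrix (Fin n) (Fin n) k).mulVec v ∈ W := by
  intro g hg
  refine Subgroup.closure_induction ?_ ?_ ?_ ?_ hg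
  · rintro z (rfl | rfl)
    · exact hx
    · exact hy
  · intro v hv
    simpa [Matrix.one_mulVec] using hv
  · intro a b _ _ pa pb v hv
    have : ((a * b : Matrix.GeneralLinearGroup (Fin n) k) :
        Matrix (Fin n) (Fin n) k).mulVec v =
        (a : Matrix (Fin n) (Fin n) k).mulVec ((b : Matrix (Fin n) (Fin n) k).mulVec v) := by
      rw [Units.val_mul, ← Matrix.mulVec_mulVec]
    rw [this]
    exact pa _ (pb v hv)
  · intro a _ pa
    exact aux_inv_pres a W pa

lemma aux_conj_le (a c : Matrix.GeneralLinearGroup (Fin n) k) (μ : k) :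
    finrank k (Module.End.eigenspace ((a : Matrix (Fin n) (Fin n) k).mulVecLin) μ) ≤
    finrank k (Module.End.eigenspace
      (((c * a * c⁻¹ : Matrix.GeneralLinearGroup (Fin n) k) :
        Matrix (Fin n) (Fin n) k).mulVecLin) μ) := by
  set f := ((c : Matrix (Fin n) (Fin n) k)).mulVecLin with hf
  have hinj : Function.Injective f := aux_inj c
  set EA := Module.End.eigenspace ((a : Matrix (Fin n) (Fin n) k).mulVecLin) μ
  set EB := Module.End.eigenspace
      (((c * a * c⁻¹ : Matrix.GeneralLinearGroup (Fin n) k) :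
        Matrix (Fin n) (Fin n) k).mulVecLin) μ
  have hmap : Submodule.map f EA ≤ EB := by
    rintro _ ⟨v, hv, rfl⟩
    rw [SetLike.mem_coe] at hv
    rw [Module.End.mem_eigenspace_iff]
    rw [Module.End.mem_eigenspace_iff] at hv
    have key : ((c * a * c⁻¹ : Matrix.GeneralLinearGroup (Fin n) k) :
        Matrix (Fin n) (Fin n) k).mulVec ((c : Matrix (Fin n) (Fin n) k).mulVec v) =
        (c : Matrix (Fin n) (Fin n) k).mulVec ((a : Matrix (Fin n) (Fin n) k).mulVec v) := by
      rw [Matrix.mulVec_mulVec]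
      have : (c * a * c⁻¹ : Matrix.GeneralLinearGroup (Fin n) k) *
          (c : Matrix.GeneralLinearGroup (Fin n) k) = c * a := by group
      calc (((c * a * c⁻¹ : Matrix.GeneralLinearGroup (Fin n) k) :
            Matrix (Fin n) (Fin n) k) * (c : Matrix (Fin n) (Fin n) k)).mulVec v
          = ((c * a : Matrix.GeneralLinearGroup (Fin n) k) :
            Matrix (Fin n) (Fin n) k).mulVec v := by rw [← Units.val_mul, this]
        _ = (c : Matrix (Fin n) (Fin n) k).mulVec
            ((a : Matrix (Fin n) (Fin n) k).mulVec v) := by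
          rw [Units.val_mul, ← Matrix.mulVec_mulVec]
    show ((c * a * c⁻¹ : Matrix.GeneralLinearGroup (Fin n) k) :
        Matrix (Fin n) (Fin n) k).mulVecLin (f v) = μ • f v
    simp only [hf, Matrix.mulVecLin_apply] at *
    rw [key, hv]
    exact (Matrix.mulVec_smul _ _ _)
  calc finrank k EA = finrank k (Submodule.map f EA) :=
        (Submodule.equivMapOfInjective f hinj EA).finrank_eq
    _ ≤ finrank k EB := Submodule.finrank_mono hmap

lemma aux_eig_ker {V : Type*} [AddCommGroup V] [Module k V] (f : Module.End k V) (θ : k)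
    (hθ : θ ≠ 0) : ker (θ⁻¹ • f - 1) = Module.End.eigenspace f θ := by
  ext v
  rw [LinearMap.mem_ker, Module.End.mem_eigenspace_iff, LinearMap.sub_apply, LinearMap.smul_apply,
    Module.End.one_apply, sub_eq_zero]
  constructor
  · intro h
    calc f v = θ • θ⁻¹ • f v := by rw [smul_smul, mul_inv_cancel₀ hθ, one_smul]
      _ = θ • v := by rw [h]
  · intro h
    rw [h, smul_smul, inv_mul_cancel₀ hθ, one_smul]

end aux

/-- If `x, y ∈ GL_n(k)` (`k` algebraically closed, `n ≥ 2`) are conjugate with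
`x * y` conjugate to `x ^ 2`, `G = ⟨x, y⟩`, and the natural module `kⁿ` has no
`1`-dimensional `kG`-submodule and no `1`-dimensional `kG`-quotient, then every
eigenspace of `x` has dimension at most `n/3`. -/
theorem stmt_2 (k : Type*) [Field k] [IsAlgClosed k] (n : ℕ) (hn : 2 ≤ n)
    (x y : Matrix.GeneralLinearGroup (Fin n) k)
    (hconj : IsConj x y) (hconj2 : IsConj (x * y) (x ^ 2))
    (hsub : ∀ W : Submodule k (Fin n → k),
      (∀ g ∈ Subgroup.closure ({x, y} : Set (Matrix.GeneralLinearGroup (Fin n) k)),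
        ∀ v ∈ W, (g : Matrix (Fin n) (Fin n) k).mulVec v ∈ W) →
      Module.finrank k W ≠ 1 ∧ Module.finrank k ((Fin n → k) ⧸ W) ≠ 1) :
    ∀ θ : k,
      3 * Module.finrank k
        (Module.End.eigenspace ((x : Matrix (Fin n) (Fin n) k).mulVecLin) θ) ≤ n := by
  intro θ
  set X := ((x : Matrix (Fin n) (Fin n) k)).mulVecLin with hX
  set Y := ((y : Matrix (Fin n) (Fin n) k)).mulVecLin with hY
  by_cases hθ : θ = 0
  · subst hθ
    have hbot : Module.End.eigenspace X 0 = ⊥ := by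
      rw [eq_bot_iff]
      intro v hv
      rw [Module.End.mem_eigenspace_iff] at hv
      simp only [zero_smul] at hv
      have hv0 : v = 0 := by
        apply aux_inj x
        rw [← hX]
        simpa [map_zero] using hv
      simpa [Submodule.mem_bot] using hv0
    rw [hbot, finrank_bot]
    omega
  -- θ ≠ 0 case
  set P := θ⁻¹ • X with hP
  set Q := θ⁻¹ • Y with hQ
  have hfr : finrank k (Fin n → k) = n := Module.finrank_fin_fun k
  have hkerP : ker (P - 1) = Module.End.eigenspace X θ := aux_eig_ker X θ hθ
  have hkerQ : ker (Q - 1) = Module.End.eigenspace Y θ := aux_eig_ker Y θ hθ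
  have hPQcomp : P ∘ₗ Q = (θ * θ)⁻¹ •
      (((x * y : Matrix.GeneralLinearGroup (Fin n) k) :
        Matrix (Fin n) (Fin n) k)).mulVecLin := by
    rw [hP, hQ, Units.val_mul, Matrix.mulVecLin_mul, ← hX, ← hY,
      LinearMap.smul_comp, LinearMap.comp_smul, smul_smul, mul_inv]
  have hkerPQ : ker (P ∘ₗ Q - 1) = Module.End.eigenspace
      (((x * y : Matrix.GeneralLinearGroup (Fin n) k) :
        Matrix (Fin n) (Fin n) k)).mulVecLin (θ * θ) := by
    rw [hPQcomp]
    exact aux_eig_ker _ _ (mul_ne_zero hθ hθ)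
  -- kernel intersection is trivial
  have hker : ker (P - 1) ⊓ ker (Q - 1) = ⊥ := by
    by_contra hne
    obtain ⟨v, hv, hv0⟩ := Submodule.exists_mem_ne_zero_of_ne_bot hne
    have hXv : X v = θ • v := by
      have h1 := hv.1
      rw [hkerP] at h1
      rw [SetLike.mem_coe, Module.End.mem_eigenspace_iff] at h1
      exact h1
    have hYv : Y v = θ • v := by
      have h1 := hv.2
      rw [hkerQ] at h1
      rw [SetLike.mem_coe, Module.End.mem_eigenspace_iff] at h1
      exact h1
    set W := Submodule.span k {v} with hW
    have hvW : v ∈ W := Submodule.mem_span_singleton_self v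
    have hxW : ∀ w ∈ W, (x : Matrix (Fin n) (Fin n) k).mulVec w ∈ W := by
      intro w hw
      rw [hW, Submodule.mem_span_singleton] at hw
      obtain ⟨a, rfl⟩ := hw
      have heq : (x : Matrix (Fin n) (Fin n) k).mulVec (a • v) = a • θ • v := by
        rw [← Matrix.mulVecLin_apply, ← hX, map_smul, hXv]
      rw [heq]
      exact W.smul_mem _ (W.smul_mem _ hvW)
    have hyW : ∀ w ∈ W, (y : Matrix (Fin n) (Fin n) k).mulVec w ∈ W := by
      intro w hw
      rw [hW, Submodule.mem_span_singleton] at hw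
      obtain ⟨a, rfl⟩ := hw
      have heq : (y : Matrix (Fin n) (Fin n) k).mulVec (a • v) = a • θ • v := by
        rw [← Matrix.mulVecLin_apply, ← hY, map_smul, hYv]
      rw [heq]
      exact W.smul_mem _ (W.smul_mem _ hvW)
    exact (hsub W (aux_closure_pres x y W hxW hyW)).1 (finrank_span_singleton hv0)
  -- range sup is everything
  have hrange : range (P - 1) ⊔ range (Q - 1) = ⊤ := by
    by_contra hne
    set U := range (P - 1) ⊔ range (Q - 1) with hU
    haveI : Nontrivial ((Fin n → k) ⧸ U) :=
      Submodule.Quotient.nontrivial_iff.mpr hne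
    have hpos : 0 < finrank k ((Fin n → k) ⧸ U) := finrank_pos
    obtain ⟨φ0, hφ0⟩ : ∃ φ0 : ((Fin n → k) ⧸ U) →ₗ[k] k, Function.Surjective φ0 := by
      set b := Module.finBasis k ((Fin n → k) ⧸ U) with hb
      refine ⟨b.coord ⟨0, hpos⟩, fun c => ⟨c • b ⟨0, hpos⟩, ?_⟩⟩
      simp [Basis.coord_apply, Basis.repr_self]
    set φ := φ0 ∘ₗ U.mkQ with hφ
    set W := ker φ with hWk
    have hUW : U ≤ W := by
      intro u hu
      rw [hWk, LinearMap.mem_ker, hφ, LinearMap.comp_apply, Submodule.mkQ_apply,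
        (Submodule.Quotient.mk_eq_zero U).mpr hu, map_zero]
    have hxW : ∀ w ∈ W, (x : Matrix (Fin n) (Fin n) k).mulVec w ∈ W := by
      intro w hw
      have hxw : (x : Matrix (Fin n) (Fin n) k).mulVec w = θ • ((P - 1) w) + θ • w := by
        rw [← Matrix.mulVecLin_apply, ← hX]
        simp only [hP, LinearMap.sub_apply, LinearMap.smul_apply, Module.End.one_apply, smul_sub,
          smul_smul, mul_inv_cancel₀ hθ, one_smul]
        abel
      rw [hxw]
      exact W.add_mem (W.smul_mem _ (hUW (Submodule.mem_sup_left
        (LinearMap.mem_range_self _ w)))) (W.smul_mem _ hw)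
    have hyW : ∀ w ∈ W, (y : Matrix (Fin n) (Fin n) k).mulVec w ∈ W := by
      intro w hw
      have hyw : (y : Matrix (Fin n) (Fin n) k).mulVec w = θ • ((Q - 1) w) + θ • w := by
        rw [← Matrix.mulVecLin_apply, ← hY]
        simp only [hQ, LinearMap.sub_apply, LinearMap.smul_apply, Module.End.one_apply, smul_sub,
          smul_smul, mul_inv_cancel₀ hθ, one_smul]
        abel
      rw [hyw]
      exact W.add_mem (W.smul_mem _ (hUW (Submodule.mem_sup_right
        (LinearMap.mem_range_self _ w)))) (W.smul_mem _ hw)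
    apply (hsub W (aux_closure_pres x y W hxW hyW)).2
    have hrtop : range φ = ⊤ := range_eq_top.mpr
      (hφ0.comp (Submodule.mkQ_surjective U))
    rw [hWk, LinearEquiv.finrank_eq φ.quotKerEquivRange, hrtop, finrank_top, finrank_self]
  -- assemble
  have hscott := scott_core P Q hker hrange
  rw [hfr, hkerP, hkerQ, hkerPQ] at hscott
  -- e ≤ dim eigenspace Y θ
  obtain ⟨c, hc⟩ := isConj_iff.mp hconj
  have h2 : finrank k (Module.End.eigenspace X θ) ≤
      finrank k (Module.End.eigenspace Y θ) := by
    have := aux_conj_le x c θ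
    rw [hc] at this
    rw [hX, hY]
    exact this
  -- e ≤ dim eigenspace of x^2 at θ*θ
  have h3 : Module.End.eigenspace X θ ≤ Module.End.eigenspace
      (((x ^ 2 : Matrix.GeneralLinearGroup (Fin n) k) :
        Matrix (Fin n) (Fin n) k)).mulVecLin (θ * θ) := by
    intro v hv
    rw [Module.End.mem_eigenspace_iff] at hv ⊢
    have hxx : (x ^ 2 : Matrix.GeneralLinearGroup (Fin n) k) = x * x := sq x
    rw [hxx, Units.val_mul, Matrix.mulVecLin_mul, ← hX, LinearMap.comp_apply, hv, map_smul,
      hv, smul_smul]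
  have h3' : finrank k (Module.End.eigenspace X θ) ≤
      finrank k (Module.End.eigenspace
        (((x ^ 2 : Matrix.GeneralLinearGroup (Fin n) k) :
          Matrix (Fin n) (Fin n) k)).mulVecLin (θ * θ)) := Submodule.finrank_mono h3
  obtain ⟨c2, hc2⟩ := isConj_iff.mp hconj2.symm
  have h4 : finrank k (Module.End.eigenspace
      (((x ^ 2 : Matrix.GeneralLinearGroup (Fin n) k) :
        Matrix (Fin n) (Fin n) k)).mulVecLin (θ * θ)) ≤
      finrank k (Module.End.eigenspace
      (((x * y : Matrix.GeneralLinearGroup (Fin n) k) :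
        Matrix (Fin n) (Fin n) k)).mulVecLin (θ * θ)) := by
    have := aux_conj_le (x ^ 2) c2 (θ * θ)
    rw [hc2] at this
    exact this
  omega
end

section
/- Let G be a finite group generated by elements x, y, z with xyz = 1, and let d ≥ 1. Then there is a normal subgroup N of G such that G/N is cyclic of order dividing d, and N is generated by x^d, y^d together with d conjugates of z whose product (together with x^d and y^d in an appropriate order) is 1. In particular, N is generated by x^d, y^d and d conjugates of z. -/
/-- If conjugation by `g` sends the generating set `T` into `closure T`, it sends
all of `closure T` into `closure T`. -/
private lemma conj_closure_mem {G : Type*} [Group G] (T : Set G) (g : G)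
    (h : ∀ t ∈ T, g * t * g⁻¹ ∈ Subgroup.closure T) :
    ∀ a ∈ Subgroup.closure T, g * a * g⁻¹ ∈ Subgroup.closure T := by
  intro a ha
  induction ha using Subgroup.closure_induction with
  | mem t ht => exact h t ht
  | one => simpa using Subgroup.one_mem _
  | mul u v hu hv pu pv =>
      have huv : g * (u * v) * g⁻¹ = (g * u * g⁻¹) * (g * v * g⁻¹) := by group
      rw [huv]; exact Subgroup.mul_mem _ pu pv
  | inv u hu pu =>
      have hiu : g * u⁻¹ * g⁻¹ = (g * u * g⁻¹)⁻¹ := by group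
      rw [hiu]; exact Subgroup.inv_mem _ pu

/-- Product formula: `x^n * y^n * ∏ (y^(n-1-i))⁻¹ z y^(n-1-i) = 1` when `xyz = 1`. -/
private lemma prod_formula {G : Type*} [Group G] (x y z : G) (h : x * y * z = 1) :
    ∀ n : ℕ,
      x ^ n * y ^ n *
        (List.ofFn fun i : Fin n => (y ^ (n - 1 - (i : ℕ)))⁻¹ * z * y ^ (n - 1 - (i : ℕ))).prod
      = 1 := by
  have hz : z = (x * y)⁻¹ := eq_inv_of_mul_eq_one_right h
  intro n
  induction n with
  | zero => simp
  | succ n ih =>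
      rw [List.ofFn_succ]
      have hrest : (fun i : Fin n =>
          (y ^ (n + 1 - 1 - ((Fin.succ i : Fin (n + 1)) : ℕ)))⁻¹ * z *
            y ^ (n + 1 - 1 - ((Fin.succ i : Fin (n + 1)) : ℕ))) =
          (fun i : Fin n => (y ^ (n - 1 - (i : ℕ)))⁻¹ * z * y ^ (n - 1 - (i : ℕ))) := by
        funext i
        have hexp : n + 1 - 1 - ((Fin.succ i : Fin (n + 1)) : ℕ) = n - 1 - (i : ℕ) := by
          simp only [Fin.val_succ]; omega
        rw [hexp]
      rw [hrest]
      set P := (List.ofFn fun i : Fin n =>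
        (y ^ (n - 1 - (i : ℕ)))⁻¹ * z * y ^ (n - 1 - (i : ℕ))).prod with hP
      have hPval : P = (y ^ n)⁻¹ * (x ^ n)⁻¹ := by
        calc P = (y ^ n)⁻¹ * (x ^ n)⁻¹ * (x ^ n * y ^ n * P) := by group
        _ = (y ^ n)⁻¹ * (x ^ n)⁻¹ * 1 := by rw [ih]
        _ = (y ^ n)⁻¹ * (x ^ n)⁻¹ := by group
      simp only [Fin.val_zero, List.prod_cons]
      have hexp0 : n + 1 - 1 - 0 = n := by omega
      rw [hexp0, ← hP, hPval, hz]
      group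

/-- Translation principle: if a finite group `G` is generated by `x, y, z` with
`x * y * z = 1` and `d ≥ 1`, then there is a normal subgroup `N` with `G/N`
cyclic of order dividing `d`, such that `N` is generated by `x^d`, `y^d` and
`d` conjugates of `z` whose product together with `x^d`, `y^d` is `1`. -/
theorem stmt_3 (G : Type*) [Group G] [Finite G] (x y z : G)
    (hgen : Subgroup.closure {x, y, z} = ⊤) (hprod : x * y * z = 1)
    (d : ℕ) (hd : 1 ≤ d) :
    ∃ N : Subgroup G, N.Normal ∧
      (∀ hN : N.Normal, IsCyclic (G ⧸ N) ∧ Nat.card (G ⧸ N) ∣ d) ∧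
      ∃ c : Fin d → G, (∀ i, IsConj z (c i)) ∧
        x ^ d * y ^ d * (List.ofFn c).prod = 1 ∧
        Subgroup.closure ({x ^ d, y ^ d} ∪ Set.range c) = N := by
  classical
  have hz : z = (x * y)⁻¹ := eq_inv_of_mul_eq_one_right hprod
  have hxzy : x = z⁻¹ * y⁻¹ := by rw [hz]; group
  have hxinv : x⁻¹ = y * z := by rw [hz]; group
  -- the generating set of the normal subgroup N
  set T : Set G := {y ^ d} ∪ {g | ∃ k : ℕ, g = (y ^ k)⁻¹ * z * y ^ k} with hT
  set N : Subgroup G := Subgroup.closure T with hN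
  have hydN : y ^ d ∈ N := Subgroup.subset_closure (Or.inl rfl)
  have hconjN : ∀ k : ℕ, (y ^ k)⁻¹ * z * y ^ k ∈ N :=
    fun k => Subgroup.subset_closure (Or.inr ⟨k, rfl⟩)
  have hzN : z ∈ N := by simpa using hconjN 0
  -- the tuple of conjugates
  set c : Fin d → G :=
    (fun i => (y ^ (d - 1 - (i : ℕ)))⁻¹ * z * y ^ (d - 1 - (i : ℕ))) with hc
  have hprodc : x ^ d * y ^ d * (List.ofFn c).prod = 1 := prod_formula x y z hprod d
  have hcN : ∀ i, c i ∈ N := fun i => hconjN _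
  have hPN : (List.ofFn c).prod ∈ N := Subgroup.list_prod_mem _ (by
    intro a ha
    obtain ⟨i, rfl⟩ := List.mem_ofFn.1 ha
    exact hcN i)
  have hxd_eq : x ^ d = ((List.ofFn c).prod)⁻¹ * (y ^ d)⁻¹ := by
    have h1 : x ^ d * y ^ d = ((List.ofFn c).prod)⁻¹ :=
      eq_inv_of_mul_eq_one_left hprodc
    rw [← h1]; group
  have hxdN : x ^ d ∈ N := by
    rw [hxd_eq]; exact Subgroup.mul_mem _ (Subgroup.inv_mem _ hPN) (Subgroup.inv_mem _ hydN)
  -- conjugation by y and y⁻¹ preserves N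
  have hconj_y : ∀ a ∈ N, y * a * y⁻¹ ∈ N := by
    apply conj_closure_mem
    rintro t (rfl | ⟨k, rfl⟩)
    · have : y * y ^ d * y⁻¹ = y ^ d := by group
      rw [this]; exact hydN
    · rcases k with _ | k
      · -- y * z * y⁻¹ = y^d * ((y^(d-1))⁻¹ z y^(d-1)) * (y^d)⁻¹
        have hrw : y * ((y ^ 0)⁻¹ * z * y ^ 0) * y⁻¹
            = y ^ ((d - 1) + 1) * ((y ^ (d - 1))⁻¹ * z * y ^ (d - 1)) * (y ^ ((d - 1) + 1))⁻¹ := by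
          rw [pow_succ]; group
        rw [hrw, show (d - 1) + 1 = d by omega]
        exact Subgroup.mul_mem _ (Subgroup.mul_mem _ hydN (hconjN _)) (Subgroup.inv_mem _ hydN)
      · have hrw : y * ((y ^ (k + 1))⁻¹ * z * y ^ (k + 1)) * y⁻¹
            = (y ^ k)⁻¹ * z * y ^ k := by
          rw [pow_succ]; group
        rw [hrw]; exact hconjN k
  have hconj_yinv : ∀ a ∈ N, y⁻¹ * a * y ∈ N := by
    have := conj_closure_mem T y⁻¹ (by
      rintro t (rfl | ⟨k, rfl⟩)
      · have : y⁻¹ * y ^ d * y⁻¹⁻¹ = y ^ d := by group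
        rw [this]; exact hydN
      · have hrw : y⁻¹ * ((y ^ k)⁻¹ * z * y ^ k) * y⁻¹⁻¹
            = (y ^ (k + 1))⁻¹ * z * y ^ (k + 1) := by
          rw [pow_succ]; group
        rw [hrw]; exact hconjN (k + 1))
    intro a ha
    have h2 := this a ha
    simpa using h2
  -- conjugation by z, z⁻¹ preserves N (z ∈ N)
  have hconj_z : ∀ a ∈ N, z * a * z⁻¹ ∈ N :=
    fun a ha => Subgroup.mul_mem _ (Subgroup.mul_mem _ hzN ha) (Subgroup.inv_mem _ hzN)
  have hconj_zinv : ∀ a ∈ N, z⁻¹ * a * z ∈ N :=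
    fun a ha => Subgroup.mul_mem _ (Subgroup.mul_mem _ (Subgroup.inv_mem _ hzN) ha) hzN
  -- conjugation by x = z⁻¹ y⁻¹ and x⁻¹ = y z preserves N
  have hconj_x : ∀ a ∈ N, x * a * x⁻¹ ∈ N := by
    intro a ha
    have : x * a * x⁻¹ = z⁻¹ * (y⁻¹ * a * y) * z := by rw [hxzy]; group
    rw [this]; exact hconj_zinv _ (hconj_yinv a ha)
  have hconj_xinv : ∀ a ∈ N, x⁻¹ * a * x ∈ N := by
    intro a ha
    have : x⁻¹ * a * x = y * (z * a * z⁻¹) * y⁻¹ := by rw [hxzy]; group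
    rw [this]; exact hconj_y _ (hconj_z a ha)
  -- N is normal
  have hNnormal : N.Normal := by
    rw [← Subgroup.normalizer_eq_top_iff, eq_top_iff, ← hgen, Subgroup.closure_le]
    rintro g (rfl | rfl | rfl)
    · rw [SetLike.mem_coe, Subgroup.mem_normalizer_iff]
      intro h
      constructor
      · exact fun hh => hconj_x h hh
      · intro hh
        have h3 := hconj_xinv _ hh
        have h4 : g⁻¹ * (g * h * g⁻¹) * g = h := by group
        rwa [h4] at h3
    · rw [SetLike.mem_coe, Subgroup.mem_normalizer_iff]
      intro h
      constructor
      · exact fun hh => hconj_y h hh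
      · intro hh
        have h3 := hconj_yinv _ hh
        have h4 : g⁻¹ * (g * h * g⁻¹) * g = h := by group
        rwa [h4] at h3
    · exact SetLike.mem_coe.2 (Subgroup.le_normalizer hzN)
  refine ⟨N, hNnormal, ?_, c, ?_, hprodc, ?_⟩
  · intro hN'
    -- G/N is generated by the image of y
    have hy_gen : ∀ g : G ⧸ N, g ∈ Subgroup.zpowers ((y : G) : G ⧸ N) := by
      intro g
      obtain ⟨g', rfl⟩ := QuotientGroup.mk_surjective g
      have hg' : g' ∈ Subgroup.closure ({x, y, z} : Set G) := hgen ▸ Subgroup.mem_top g'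
      induction hg' using Subgroup.closure_induction with
      | mem t ht =>
          rcases ht with rfl | rfl | rfl
          · have hx1 : ((t : G) : G ⧸ N) = (((y : G) : G ⧸ N))⁻¹ := by
              have hzq : ((z : G) : G ⧸ N) = 1 := (QuotientGroup.eq_one_iff z).2 hzN
              rw [hxzy]
              push_cast [QuotientGroup.mk_mul, QuotientGroup.mk_inv]
              simp [QuotientGroup.mk_mul, QuotientGroup.mk_inv, hzq]
            rw [hx1]
            exact Subgroup.inv_mem _ (Subgroup.mem_zpowers _)
          · exact Subgroup.mem_zpowers _
          · have hzq : ((t : G) : G ⧸ N) = 1 := (QuotientGroup.eq_one_iff t).2 hzN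
            rw [hzq]; exact Subgroup.one_mem _
      | one => simpa using Subgroup.one_mem _
      | mul u v hu hv pu pv => simpa [QuotientGroup.mk_mul] using Subgroup.mul_mem _ pu pv
      | inv u hu pu => simpa [QuotientGroup.mk_inv] using Subgroup.inv_mem _ pu
    have hcyc : IsCyclic (G ⧸ N) := ⟨⟨((y : G) : G ⧸ N), hy_gen⟩⟩
    refine ⟨hcyc, ?_⟩
    have hyd1 : ((y : G) : G ⧸ N) ^ d = 1 := by
      rw [← QuotientGroup.mk_pow]
      exact (QuotientGroup.eq_one_iff _).2 hydN
    have hord : orderOf ((y : G) : G ⧸ N) ∣ d := orderOf_dvd_of_pow_eq_one hyd1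
    have hcard : Nat.card (G ⧸ N) = orderOf ((y : G) : G ⧸ N) := by
      rw [← Nat.card_zpowers, (Subgroup.zpowers _).eq_top_iff'.mpr hy_gen, Subgroup.card_top]
    rw [hcard]; exact hord
  · -- each c i is conjugate to z
    intro i
    rw [isConj_iff]
    exact ⟨(y ^ (d - 1 - (i : ℕ)))⁻¹, by rw [hc]; group⟩
  · -- closure ({x^d, y^d} ∪ range c) = N
    -- first: all natural conjugates (y^k)⁻¹ z y^k lie in the closure of the small set
    set S : Set G := {x ^ d, y ^ d} ∪ Set.range c with hS
    have hydS : y ^ d ∈ Subgroup.closure S := Subgroup.subset_closure (Or.inl (Or.inr rfl))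
    have key : ∀ k : ℕ, (y ^ k)⁻¹ * z * y ^ k ∈ Subgroup.closure S := by
      intro k
      induction k using Nat.strong_induction_on with
      | _ k ih =>
        by_cases hk : k < d
        · have : (y ^ k)⁻¹ * z * y ^ k = c ⟨d - 1 - k, by omega⟩ := by
            rw [hc]
            have : d - 1 - (d - 1 - k) = k := by omega
            simp only [this]
          rw [this]
          exact Subgroup.subset_closure (Or.inr ⟨_, rfl⟩)
        · obtain ⟨m, rfl⟩ : ∃ m, k = m + d := ⟨k - d, by omega⟩
          have hrw : (y ^ (m + d))⁻¹ * z * y ^ (m + d)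
              = (y ^ d)⁻¹ * ((y ^ m)⁻¹ * z * y ^ m) * y ^ d := by
            rw [pow_add]; group
          rw [hrw]
          exact Subgroup.mul_mem _
            (Subgroup.mul_mem _ (Subgroup.inv_mem _ hydS) (ih m (by omega))) hydS
    apply le_antisymm
    · rw [Subgroup.closure_le]
      rintro g ((rfl | rfl) | ⟨i, rfl⟩)
      · exact hxdN
      · exact hydN
      · exact hcN i
    · rw [hN, Subgroup.closure_le]
      rintro t (rfl | ⟨k, rfl⟩)
      · exact hydS
      · exact key k
end

section
/- Let q be a prime power and let F_q be the field with q elements. For every t ∈ F_q and every conjugacy class C of elements of order q−1 in SL_2(q) with q > 11 odd (equivalently, C is the class of a regular split semisimple element), there exist x, y ∈ C with trace(xy) = t. -/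
open Polynomial Matrix

private lemma stmt6_cayley2 {F : Type*} [Field F] (B : Matrix (Fin 2) (Fin 2) F)
    (h : B.det = 1) : B * B = B.trace • B - 1 := by
  rw [Matrix.det_fin_two] at h
  ext i j
  fin_cases i <;> fin_cases j <;>
    simp [Matrix.mul_apply, Fin.sum_univ_two, Matrix.trace_fin_two, Matrix.one_apply] <;>
    first
      | linear_combination h | linear_combination -h
      | linear_combination (2:F)*h | linear_combination (-2:F)*h | ring

private lemma stmt6_companion_mul {F : Type*} [Field F] (B : Matrix (Fin 2) (Fin 2) F)
    (hdet : B.det = 1) (e0 e1 : F) :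
    B * !![e0, B 0 0 * e0 + B 0 1 * e1; e1, B 1 0 * e0 + B 1 1 * e1] =
      !![e0, B 0 0 * e0 + B 0 1 * e1; e1, B 1 0 * e0 + B 1 1 * e1] * !![0, -1; 1, B.trace] := by
  rw [Matrix.det_fin_two] at hdet
  ext i j
  fin_cases i <;> fin_cases j <;>
    simp [Matrix.mul_apply, Fin.sum_univ_two, Matrix.trace_fin_two] <;>
    first
      | linear_combination e0*hdet | linear_combination -e0*hdet
      | linear_combination e1*hdet | linear_combination -e1*hdet

private lemma stmt6_companion {F : Type*} [Field F] (B : Matrix (Fin 2) (Fin 2) F)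
    (hdet : B.det = 1)
    (hns : B 1 0 ≠ 0 ∨ B 0 1 ≠ 0 ∨ B 0 0 ≠ B 1 1) :
    ∃ Q : Matrix (Fin 2) (Fin 2) F, Q.det ≠ 0 ∧
      B * Q = Q * !![0, -1; 1, B.trace] := by
  by_cases hc : B 1 0 ≠ 0
  · exact ⟨_, by simpa [Matrix.det_fin_two] using hc, stmt6_companion_mul B hdet 1 0⟩
  by_cases hb : B 0 1 ≠ 0
  · refine ⟨_, ?_, stmt6_companion_mul B hdet 0 1⟩
    simp [Matrix.det_fin_two]
    intro h
    first | exact hb h | exact hb (by linear_combination -h) | exact hb (by linear_combination h)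
  push_neg at hc hb
  have had : B 0 0 ≠ B 1 1 := by tauto
  refine ⟨_, ?_, stmt6_companion_mul B hdet 1 1⟩
  simp [Matrix.det_fin_two, hb, hc]
  intro h
  first | exact had h | exact had (by linear_combination -h) | exact had (by linear_combination h)

private lemma stmt6_pow_unipotent {F : Type*} [Field F] (N : Matrix (Fin 2) (Fin 2) F)
    (hN : N * N = 0) (c : F) :
    ∀ k : ℕ, (1 + c • N) ^ k = 1 + ((k : F) * c) • N := by
  intro k
  induction k with
  | zero => simp
  | succ k ih =>
    rw [pow_succ, ih, add_mul, mul_add, mul_add, one_mul, mul_one, smul_mul_smul_comm, hN,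
      smul_zero, add_zero, one_mul, add_assoc, ← add_smul]
    push_cast
    congr 2
    ring

private lemma stmt6_trace_conj {F : Type*} [Field F]
    (P Z : Matrix.SpecialLinearGroup (Fin 2) F) :
    Matrix.trace ((P * Z * P⁻¹ : Matrix.SpecialLinearGroup (Fin 2) F) :
        Matrix (Fin 2) (Fin 2) F) =
      Matrix.trace (Z : Matrix (Fin 2) (Fin 2) F) := by
  rw [Matrix.SpecialLinearGroup.coe_mul, Matrix.SpecialLinearGroup.coe_mul,
    Matrix.trace_mul_cycle, ← Matrix.SpecialLinearGroup.coe_mul,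
    inv_mul_cancel]
  simp

/-- For `q > 11` odd (`F` the field with `q` elements) and `C` the conjugacy
class of an element of order `q - 1` in `SL₂(q)`, the trace of a product of two
elements of `C` takes every value `t ∈ F`. -/
theorem stmt_6 (F : Type*) [Field F] [Fintype F]
    (hq : 11 < Fintype.card F) (hodd : Odd (Fintype.card F))
    (g : Matrix.SpecialLinearGroup (Fin 2) F)
    (hg : orderOf g = Fintype.card F - 1) (t : F) :
    ∃ x y : Matrix.SpecialLinearGroup (Fin 2) F, IsConj g x ∧ IsConj g y ∧
      Matrix.trace ((x * y : Matrix.SpecialLinearGroup (Fin 2) F) :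
        Matrix (Fin 2) (Fin 2) F) = t := by
  classical
  set q := Fintype.card F with hqdef
  set A : Matrix (Fin 2) (Fin 2) F := ↑g with hAdef
  have hAdet : A.det = 1 := g.prop
  set τ : F := A.trace with hτ
  have hgpow : g ^ (q - 1) = 1 := by rw [← hg]; exact pow_orderOf_eq_one g
  have hApow : A ^ (q - 1) = 1 := by
    have := congrArg (fun h : Matrix.SpecialLinearGroup (Fin 2) F =>
      (h : Matrix (Fin 2) (Fin 2) F)) hgpow
    simpa using this
  have hg2 : g ^ 2 ≠ 1 := by
    intro h
    have h2 := orderOf_dvd_of_pow_eq_one h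
    rw [hg] at h2
    have := Nat.le_of_dvd (by norm_num) h2
    omega
  have hCH : A * A = τ • A - 1 := by
    have := stmt6_cayley2 A hAdet; rw [← hτ] at this; exact this
  -- eigenvalue lam
  have hint : IsIntegral F A := .of_finite F A
  have hdvd1 : minpoly F A ∣ X ^ (q - 1) - 1 := minpoly.dvd F A (by simp [hApow])
  have hdvd2 : (X ^ (q - 1) - 1 : F[X]) ∣ (X ^ q - X : F[X]) := by
    refine ⟨X, ?_⟩
    rw [sub_mul, one_mul, ← pow_succ, Nat.sub_add_cancel (by omega)]
  have hXqX : (X ^ q - X : F[X]) ≠ 0 := FiniteField.X_pow_card_sub_X_ne_zero F (by omega)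
  have hsplit : Splits (X ^ q - X : F[X]) := by
    apply splits_iff_card_roots.mpr
    rw [FiniteField.roots_X_pow_card_sub_X, FiniteField.X_pow_card_sub_X_natDegree_eq F (by omega)]
    simpa using hqdef.symm
  have hminsplit : Splits (minpoly F A) :=
    hsplit.of_dvd hXqX (hdvd1.trans hdvd2)
  obtain ⟨lam, hlam⟩ := hminsplit.exists_eval_eq_zero (minpoly.degree_pos hint).ne'
  have hlamroot : (minpoly F A).IsRoot lam := by simpa using hlam
  have hquaddvd : minpoly F A ∣ (X ^ 2 - C τ * X + C 1 : F[X]) := minpoly.dvd F A (by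
    simp only [map_add, map_sub, _root_.map_mul, aeval_X_pow, aeval_X, aeval_C, _root_.map_one]
    rw [pow_two, hCH, Algebra.smul_def]
    simp)
  have hkey : lam ^ 2 - τ * lam + 1 = 0 := by
    have := hlamroot.dvd hquaddvd
    simpa [IsRoot] using this
  have hlam0 : lam ≠ 0 := by
    intro h; rw [h] at hkey; simp at hkey
  set μ : F := τ - lam with hμ
  have hmul : lam * μ = 1 := by rw [hμ]; linear_combination -hkey
  -- lam ≠ μ
  have hne : lam ≠ μ := by
    intro hlm
    have hτ2 : τ = 2 * lam := by rw [hμ] at hlm; linear_combination -hlm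
    have hl2 : lam * lam = 1 := by linear_combination -hkey - lam * hτ2
    set N : Matrix (Fin 2) (Fin 2) F := A - lam • 1 with hN
    have hNN : N * N = 0 := by
      have expand : N * N = A * A - (2 * lam) • A + (lam * lam) • (1 : Matrix (Fin 2) (Fin 2) F) := by
        rw [hN]
        simp only [sub_mul, mul_sub, smul_mul_assoc, mul_smul_comm, smul_smul, one_mul, mul_one]
        match_scalars <;> ring
      rw [expand, hCH, hτ2, hl2]
      match_scalars <;> ring
    have hA2 : A * A = 1 + (2 * lam) • N := by
      rw [hCH, hτ2, hN]
      match_scalars <;>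
        first | ring1 | linear_combination 2 * hl2 | linear_combination -2 * hl2
    obtain ⟨m, hm⟩ := hodd
    have hq2m : q - 1 = 2 * m := by omega
    have hAAm : (A * A) ^ m = 1 := by
      rw [← pow_two, ← pow_mul, ← hq2m, hApow]
    rw [hA2, stmt6_pow_unipotent N hNN (2 * lam) m] at hAAm
    have hsc : ((m : F) * (2 * lam)) • N = 0 := by
      have := congrArg (fun M => M - (1 : Matrix (Fin 2) (Fin 2) F)) hAAm
      simpa using this
    have hcard : ((q : ℕ) : F) = 0 := FiniteField.cast_card_eq_zero F
    have hmF : (m : F) * (2 * lam) = -lam := by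
      have h2m : ((2 * m : ℕ) : F) = -1 := by
        have : ((q : ℕ) : F) = ((2 * m + 1 : ℕ) : F) := by rw [← hm]
        push_cast at this
        rw [hcard] at this
        push_cast
        linear_combination -this
      push_cast at h2m
      linear_combination lam * h2m
    rw [hmF] at hsc
    have hNzero : N = 0 := by
      rcases smul_eq_zero.mp hsc with h | h
      · exact absurd (neg_eq_zero.mp h) hlam0
      · exact h
    have hAscalar : A = lam • 1 := by
      have := sub_eq_zero.mp (hN ▸ hNzero)
      exact this
    have : A * A = 1 := by
      rw [hAscalar, smul_mul_smul_comm, one_mul, hl2, one_smul]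
    have hg21 : g ^ 2 = 1 := by
      apply Subtype.ext
      show ((g ^ 2 : Matrix.SpecialLinearGroup (Fin 2) F) : Matrix (Fin 2) (Fin 2) F) = _
      rw [pow_two]
      simpa using this
    exact hg2 hg21
  -- A is non-scalar
  have hdet2 : A 0 0 * A 1 1 - A 0 1 * A 1 0 = 1 := by
    rw [← Matrix.det_fin_two]; exact hAdet
  have hτtr : τ = A 0 0 + A 1 1 := Matrix.trace_fin_two A
  have hns : A 1 0 ≠ 0 ∨ A 0 1 ≠ 0 ∨ A 0 0 ≠ A 1 1 := by
    by_contra h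
    push_neg at h
    obtain ⟨h1, h2, h3⟩ := h
    have hsq : (lam - A 0 0) ^ 2 = 0 := by
      linear_combination hkey + lam * hτtr + (A 0 0 - lam) * h3 + hdet2 + A 1 0 * h2
    have hla : lam = A 0 0 := by
      have h0 := pow_eq_zero_iff (n := 2) (by norm_num) |>.mp hsq
      linear_combination h0
    apply hne
    rw [hμ, hτtr]
    linear_combination 2 * hla + h3
  -- companion form for A
  obtain ⟨Q₁, hQ₁det, hQ₁⟩ := stmt6_companion A hAdet hns
  -- companion form for D
  set D : Matrix (Fin 2) (Fin 2) F := !![lam, 0; 0, μ] with hD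
  have hDdet : D.det = 1 := by rw [hD, Matrix.det_fin_two_of]; linear_combination hmul
  have hDtr : D.trace = τ := by rw [hD, Matrix.trace_fin_two_of, hμ]; ring
  have hDns : D 1 0 ≠ 0 ∨ D 0 1 ≠ 0 ∨ D 0 0 ≠ D 1 1 := by
    right; right; simpa [hD] using hne
  obtain ⟨Q₂, hQ₂det, hQ₂⟩ := stmt6_companion D hDdet hDns
  rw [hDtr] at hQ₂
  have hQ₂u : IsUnit Q₂.det := isUnit_iff_ne_zero.mpr hQ₂det
  -- conjugating matrix R with A R = R D
  set R : Matrix (Fin 2) (Fin 2) F := Q₁ * Q₂⁻¹ with hR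
  have hCQ : !![0, -1; 1, τ] * Q₂⁻¹ = Q₂⁻¹ * D := by
    have h1 : Q₂⁻¹ * (D * Q₂) * Q₂⁻¹ = Q₂⁻¹ * (Q₂ * !![0, -1; 1, τ]) * Q₂⁻¹ := by rw [hQ₂]
    rw [← mul_assoc, ← mul_assoc] at h1
    rw [Matrix.nonsing_inv_mul _ hQ₂u, one_mul, mul_assoc, Matrix.mul_nonsing_inv _ hQ₂u,
      mul_one] at h1
    exact h1.symm
  have hAR : A * R = R * D := by
    rw [hR, ← mul_assoc, hQ₁, mul_assoc, hCQ, ← mul_assoc]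
  have hRdet : R.det ≠ 0 := by
    rw [hR, Matrix.det_mul, Matrix.det_nonsing_inv, Ring.inverse_eq_inv']
    exact mul_ne_zero hQ₁det (inv_ne_zero hQ₂det)
  -- fix the determinant
  set r : F := R.det with hr
  set P : Matrix (Fin 2) (Fin 2) F := R * !![r⁻¹, 0; 0, 1] with hP
  have hPdet : P.det = 1 := by
    rw [hP, Matrix.det_mul, Matrix.det_fin_two_of]
    field_simp
    simp [hr]
  have hDdiag : D * !![r⁻¹, 0; 0, 1] = !![r⁻¹, 0; 0, 1] * D := by
    rw [hD]
    ext i j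
    fin_cases i <;> fin_cases j <;> simp [Matrix.mul_apply, Fin.sum_univ_two] <;> ring
  have hAP : A * P = P * D := by
    rw [hP, ← mul_assoc, hAR, mul_assoc, hDdiag, ← mul_assoc]
  -- package into SL₂
  set sP : Matrix.SpecialLinearGroup (Fin 2) F := ⟨P, hPdet⟩ with hsP
  set sD : Matrix.SpecialLinearGroup (Fin 2) F := ⟨D, hDdet⟩ with hsD
  have hgP : g * sP = sP * sD := by
    apply Subtype.ext
    show A * P = P * D
    exact hAP
  have hgPDP : g = sP * sD * sP⁻¹ := by
    rw [← hgP, mul_inv_cancel_right]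
  -- the matrix M
  set s : F := (t - 2) / (lam - μ) ^ 2 with hs
  have hlmne : (lam - μ) ^ 2 ≠ 0 := pow_ne_zero _ (sub_ne_zero.mpr hne)
  have hst : s * (lam - μ) ^ 2 = t - 2 := div_mul_cancel₀ _ hlmne
  have hMdet : (!![s, s - 1; 1, 1] : Matrix (Fin 2) (Fin 2) F).det = 1 := by
    rw [Matrix.det_fin_two_of]; ring
  set sM : Matrix.SpecialLinearGroup (Fin 2) F := ⟨!![s, s - 1; 1, 1], hMdet⟩ with hsM
  set u : Matrix.SpecialLinearGroup (Fin 2) F := sP * sM * sP⁻¹ with hu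
  refine ⟨g, u * g * u⁻¹, IsConj.refl g, isConj_iff.mpr ⟨u, rfl⟩, ?_⟩
  have hxy : g * (u * g * u⁻¹) = sP * (sD * sM * sD * sM⁻¹) * sP⁻¹ := by
    rw [hu, hgPDP]
    group
  rw [hxy, stmt6_trace_conj]
  have hMinv : ((sM⁻¹ : Matrix.SpecialLinearGroup (Fin 2) F) : Matrix (Fin 2) (Fin 2) F) =
      !![1, 1 - s; -1, s] := by
    rw [Matrix.SpecialLinearGroup.coe_inv]
    show Matrix.adjugate !![s, s - 1; 1, 1] = _
    rw [Matrix.adjugate_fin_two_of]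
    ext i j
    fin_cases i <;> fin_cases j <;> simp <;> ring
  have hcoe2 : ((sD * sM * sD * sM⁻¹ : Matrix.SpecialLinearGroup (Fin 2) F) :
      Matrix (Fin 2) (Fin 2) F) = D * !![s, s - 1; 1, 1] * D * !![1, 1 - s; -1, s] := by
    simp only [Matrix.SpecialLinearGroup.coe_mul, hMinv]
    try rfl
  rw [hcoe2, hD]
  rw [show (!![lam, 0; 0, μ] * !![s, s - 1; 1, 1] * !![lam, 0; 0, μ] *
      !![1, 1 - s; -1, s] : Matrix (Fin 2) (Fin 2) F).trace =
      lam * s * lam + lam * (s - 1) * μ * (-1) + μ * 1 * lam * (1 - s) + μ * 1 * μ * s from by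
    simp [Matrix.trace_fin_two, Matrix.mul_apply, Fin.sum_univ_two]
    ring]
  linear_combination hst + 2 * hmul
end

section
/- Let k be an algebraically closed field, V a finite-dimensional k-vector space with dim V ≥ 2, and G a finite subgroup of GL(V) acting irreducibly. Suppose N is a normal elementary abelian 2-subgroup of G which does not act homogeneously (i.e., V has m > 1 distinct N-homogeneous components V₁,…,V_m), and g ∈ G acts on the set of homogeneous components with no fixed points. Then the average of dim C_V(gy) over y ∈ N is at most (1/3) dim V; in particular some element h ∈ gN satisfies dim C_V(h) ≤ (1/3) dim V. -/
set_option maxHeartbeats 1000000 in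
/-- Let `G ≤ GL(V)` be finite and irreducible (`k` algebraically closed),
`N ⊴ G` a normal elementary abelian `2`-subgroup acting non-homogeneously, with
homogeneous components `W i` (`i : Fin m`, `m > 1`) given by distinct
characters `χ i` of `N`, and let `g ∈ G` act without fixed points on the set of
components. Then the average over `y ∈ N` of `dim C_V(g y)` is at most
`(1/3) dim V`; in particular some `h ∈ gN` has `dim C_V(h) ≤ (1/3) dim V`. -/
theorem stmt_10 (k : Type*) [Field k] [IsAlgClosed k]
    (V : Type*) [AddCommGroup V] [Module k V] [FiniteDimensional k V]
    (hdim : 2 ≤ Module.finrank k V)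
    (G : Type*) [Group G] [Finite G] (ρ : Representation k G V)
    (hfaithful : Function.Injective ρ)
    (hirr : ∀ U : Submodule k V, (∀ g : G, ∀ v ∈ U, ρ g v ∈ U) → U = ⊥ ∨ U = ⊤)
    (N : Subgroup G) [N.Normal] [Fintype N]
    (hN2 : ∀ y ∈ N, y ^ 2 = 1)
    (m : ℕ) (hm : 1 < m)
    (χ : Fin m → (N →* kˣ)) (hχ : Function.Injective χ)
    (W : Fin m → Submodule k V)
    (hW : ∀ (i : Fin m) (v : V), v ∈ W i ↔ ∀ y : N, ρ (y : G) v = (χ i y : k) • v)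
    (hsup : ⨆ i, W i = ⊤) (hne : ∀ i, W i ≠ ⊥)
    (g : G) (hg : ∀ i, Submodule.map (ρ g) (W i) ≠ W i) :
    3 * ∑ y : N, Module.finrank k (LinearMap.ker (ρ (g * (y : G)) - 1)) ≤
        Nat.card N * Module.finrank k V ∧
      ∃ y : N, 3 * Module.finrank k (LinearMap.ker (ρ (g * (y : G)) - 1)) ≤
        Module.finrank k V := by
  classical
  -- ## Basic facts about ρ
  have hρinj : ∀ x : G, Function.Injective (ρ x) := by
    intro x
    have h : Function.LeftInverse (ρ x⁻¹) (ρ x) := fun v => by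
      have h2 : (ρ (x⁻¹ * x)) v = v := by rw [inv_mul_cancel, map_one]; rfl
      rw [map_mul, Module.End.mul_apply] at h2
      exact h2
    exact h.injective
  have hρmap : ∀ (x : G) (p : Submodule k V),
      Submodule.map (ρ x⁻¹) (Submodule.map (ρ x) p) = p := by
    intro x p
    rw [← Submodule.map_comp]
    have h : (ρ x⁻¹).comp (ρ x) = LinearMap.id := by
      ext v
      rw [LinearMap.comp_apply, ← Module.End.mul_apply, ← map_mul, inv_mul_cancel, map_one]
      rfl
    rw [h, Submodule.map_id]
  -- ## Basic facts about N and χ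
  have hsq : ∀ y : N, y * y = 1 := by
    intro y
    have h1 : (y : G) * y = 1 := by have := hN2 y y.2; rwa [pow_two] at this
    exact Subtype.ext (by simpa using h1)
  have hpm : ∀ (i : Fin m) (y : N), (χ i y : k) = 1 ∨ (χ i y : k) = -1 := by
    intro i y
    have h : (χ i y : k) * (χ i y : k) = 1 := by
      have h0 : χ i y * χ i y = 1 := by rw [← map_mul, hsq, map_one]
      rw [← Units.val_mul, h0, Units.val_one]
    exact mul_self_eq_one_iff.mp h
  have hdval : ∀ i j : Fin m, i ≠ j → ∃ y : N, (χ i y : k) ≠ (χ j y : k) := by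
    intro i j hij
    by_contra hcon
    push_neg at hcon
    exact hij (hχ (MonoidHom.ext fun y => Units.ext (hcon y)))
  have hone_ne : (1 : k) ≠ -1 := by
    have h01 : (⟨0, by omega⟩ : Fin m) ≠ ⟨1, by omega⟩ := by
      intro h; simpa using congrArg Fin.val h
    obtain ⟨y, hy⟩ := hdval _ _ h01
    rcases hpm ⟨0, by omega⟩ y with h1 | h1 <;> rcases hpm ⟨1, by omega⟩ y with h2 | h2 <;>
      rw [h1, h2] at hy
    · exact absurd rfl hy
    · exact hy
    · exact fun h => hy h.symm
    · exact absurd rfl hy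
  have h2k : (2 : k) ≠ 0 := by
    intro h
    apply hone_ne
    have : (1 : k) + 1 = 0 := by rw [← h]; norm_num
    linear_combination this
  have hconjx : ∀ (x : G) (y : N), x⁻¹ * (y : G) * x ∈ N := by
    intro x y
    simpa using (‹N.Normal›.conj_mem (y : G) y.2 x⁻¹)
  -- ## Independence of the components
  have hWval : ∀ (i : Fin m) (v : V), v ∈ W i → ∀ y : N, ρ (y : G) v = (χ i y : k) • v :=
    fun i v h y => (hW i v).1 h y
  have indepS : ∀ (n : ℕ) (t : Finset (Fin m)) (f : Fin m → V), t.card ≤ n →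
      (∀ i, f i ∈ W i) → ∑ i ∈ t, f i = 0 → ∀ i ∈ t, f i = 0 := by
    intro n
    induction n with
    | zero =>
      intro t f ht _ _ i hi
      rw [Nat.le_zero, Finset.card_eq_zero] at ht
      simp [ht] at hi
    | succ n ih =>
      intro t f ht hf hsum i hi
      by_cases hj : ∃ j ∈ t, j ≠ i
      · obtain ⟨j, hjt, hji⟩ := hj
        obtain ⟨y, hy⟩ := hdval i j hji.symm
        set f' : Fin m → V := fun i' => ((χ i' y : k) - (χ j y : k)) • f i' with hf'
        have hf'mem : ∀ i', f' i' ∈ W i' := fun i' => Submodule.smul_mem _ _ (hf i')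
        have hsum' : ∑ i' ∈ t.erase j, f' i' = 0 := by
          have hzero : f' j = 0 := by simp [hf']
          have : ∑ i' ∈ t.erase j, f' i' = ∑ i' ∈ t, f' i' := by
            rw [← Finset.add_sum_erase t f' hjt, hzero, zero_add]
          rw [this]
          have heq : ∀ i' ∈ t, f' i' = ρ (y : G) (f i') - (χ j y : k) • f i' := by
            intro i' _
            show ((χ i' y : k) - (χ j y : k)) • f i' = _
            rw [sub_smul, ← hWval i' (f i') (hf i') y]
          rw [Finset.sum_congr rfl heq, Finset.sum_sub_distrib, ← map_sum, ← Finset.smul_sum,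
            hsum, map_zero, smul_zero, sub_zero]
        have hcard : (t.erase j).card ≤ n := by
          have := Finset.card_erase_of_mem hjt
          omega
        have hi' : i ∈ t.erase j := Finset.mem_erase.mpr ⟨fun h => hji h.symm, hi⟩
        have := ih (t.erase j) f' hcard hf'mem hsum' i hi'
        rw [hf'] at this
        rcases smul_eq_zero.mp this with h | h
        · exact absurd (sub_eq_zero.mp h) hy
        · exact h
      · push_neg at hj
        have ht1 : t = {i} := Finset.eq_singleton_iff_unique_mem.mpr ⟨hi, fun j hjt => hj j hjt⟩
        rw [ht1, Finset.sum_singleton] at hsum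
        exact hsum
  have indep : ∀ (f : Fin m → V), (∀ i, f i ∈ W i) → ∑ i, f i = 0 → ∀ i, f i = 0 :=
    fun f hf hs i => indepS (Finset.univ.card) Finset.univ f le_rfl hf hs i (Finset.mem_univ i)
  have hWdisj : ∀ i j : Fin m, i ≠ j → ∀ v, v ∈ W i → v ∈ W j → v = 0 := by
    intro i j hij v hvi hvj
    by_contra hv
    obtain ⟨y, hy⟩ := hdval i j hij
    have h1 := hWval i v hvi y
    have h2 := hWval j v hvj y
    rw [h1] at h2
    have : ((χ i y : k) - (χ j y : k)) • v = 0 := by rw [sub_smul, h2, sub_self]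
    rcases smul_eq_zero.mp this with h | h
    · exact hy (sub_eq_zero.mp h)
    · exact hv h
  have hWinj : Function.Injective W := by
    intro i j hij
    by_contra hne'
    obtain ⟨v, hv, hv0⟩ := Submodule.ne_bot_iff (W i) |>.mp (hne i)
    exact hv0 (hWdisj i j hne' v hv (hij ▸ hv))
  -- ## Decomposition: every vector is a sum of components
  have hdecomp : ∀ v : V, ∃ f : Fin m → V, (∀ i, f i ∈ W i) ∧ ∑ i, f i = v := by
    let U : Submodule k V :=
      { carrier := {v | ∃ f : Fin m → V, (∀ i, f i ∈ W i) ∧ ∑ i, f i = v}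
        add_mem' := by
          rintro a b ⟨f, hf, rfl⟩ ⟨f', hf', rfl⟩
          exact ⟨f + f', fun i => Submodule.add_mem _ (hf i) (hf' i), by
            simp [Finset.sum_add_distrib]⟩
        zero_mem' := ⟨0, fun i => Submodule.zero_mem _, by simp⟩
        smul_mem' := by
          rintro c a ⟨f, hf, rfl⟩
          exact ⟨c • f, fun i => Submodule.smul_mem _ _ (hf i), by
            simp [Finset.smul_sum]⟩ }
    have hle : ∀ i, W i ≤ U := by
      intro i w hw
      refine ⟨fun j => if j = i then w else 0, ?_, ?_⟩
      · intro j
        by_cases h : j = i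
        · subst h; simpa using hw
        · simp [h]
      · simp
    intro v
    have htop : (⊤ : Submodule k V) ≤ U := hsup ▸ iSup_le hle
    exact htop (Submodule.mem_top)
  -- ## The projections π
  obtain ⟨π, hπmem, hπsum, hπuniq, hdimV⟩ :
      ∃ π : Fin m → (V →ₗ[k] V),
        (∀ i v, π i v ∈ W i) ∧ (∀ v, ∑ i, π i v = v) ∧
        (∀ (v : V) (f : Fin m → V), (∀ i, f i ∈ W i) → ∑ i, f i = v → ∀ i, π i v = f i) ∧
        Module.finrank k V = ∑ i, Module.finrank k (W i) := by
    let Φ : (∀ i, W i) →ₗ[k] V := ∑ i, (W i).subtype.comp (LinearMap.proj i)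
    have hΦ : ∀ f : ∀ i, W i, Φ f = ∑ i, (f i : V) := by
      intro f
      simp [Φ, LinearMap.sum_apply]
    have hinj : Function.Injective Φ := by
      rw [← LinearMap.ker_eq_bot, LinearMap.ker_eq_bot']
      intro f hf0
      have h0 : ∑ i, ((f i : V)) = 0 := by rw [← hΦ]; exact hf0
      funext i
      exact Subtype.ext (indep (fun i => (f i : V)) (fun i => (f i).2) h0 i)
    have hsurj : Function.Surjective Φ := by
      intro v
      obtain ⟨f, hf, hsum⟩ := hdecomp v
      exact ⟨fun i => ⟨f i, hf i⟩, by rw [hΦ]; exact hsum⟩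
    let e := LinearEquiv.ofBijective Φ ⟨hinj, hsurj⟩
    have hesymm : ∀ v, ∑ i, ((e.symm v i : V)) = v := by
      intro v
      have h1 := e.apply_symm_apply v
      rwa [show e (e.symm v) = Φ (e.symm v) from rfl, hΦ] at h1
    refine ⟨fun i => (W i).subtype.comp ((LinearMap.proj i).comp (e.symm :
        V →ₗ[k] (∀ i, W i))), fun i v => (e.symm v i).2, hesymm, ?_, ?_⟩
    · intro v f hf hsum i
      have hF : e.symm v = fun j => (⟨f j, hf j⟩ : W j) := by
        rw [LinearEquiv.symm_apply_eq]
        have h2 : e (fun j => (⟨f j, hf j⟩ : W j)) = ∑ j, f j := by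
          rw [show e (fun j => (⟨f j, hf j⟩ : W j)) = Φ (fun j => (⟨f j, hf j⟩ : W j)) from rfl,
            hΦ]
        rw [h2, hsum]
      show ((e.symm v i : V)) = f i
      rw [hF]
    · rw [← e.finrank_eq, Module.finrank_pi_fintype]
  -- ## The permutation s induced by g
  obtain ⟨s, hs, hschar⟩ :
      ∃ s : Fin m → Fin m,
        (∀ i, Submodule.map (ρ g) (W i) = W (s i)) ∧
        (∀ (i : Fin m) (y : N), (χ (s i) y : k) = (χ i ⟨g⁻¹ * (y : G) * g, hconjx g y⟩ : k)) := by
    have key : ∀ (x : G) (i : Fin m), ∃ j : Fin m,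
        Submodule.map (ρ x) (W i) ≤ W j ∧
        ∀ y : N, (χ j y : k) = (χ i ⟨x⁻¹ * (y : G) * x, hconjx x y⟩ : k) := by
      intro x i
      obtain ⟨v₀, hv₀, hv₀0⟩ := Submodule.ne_bot_iff (W i) |>.mp (hne i)
      have heig : ∀ v ∈ W i, ∀ y : N,
          ρ (y : G) (ρ x v) = (χ i ⟨x⁻¹ * (y : G) * x, hconjx x y⟩ : k) • ρ x v := by
        intro v hv y
        have h1 : (y : G) * x = x * (x⁻¹ * (y : G) * x) := by group
        rw [← Module.End.mul_apply, ← map_mul, h1, map_mul, Module.End.mul_apply,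
          hWval i v hv ⟨x⁻¹ * (y : G) * x, hconjx x y⟩, map_smul]
      have hw₀0 : ρ x v₀ ≠ 0 := fun h => hv₀0 (by
        apply hρinj x; rw [h, map_zero])
      obtain ⟨j₀, hj₀⟩ : ∃ j₀, π j₀ (ρ x v₀) ≠ 0 := by
        by_contra hcon
        push_neg at hcon
        apply hw₀0
        rw [← hπsum (ρ x v₀)]
        exact Finset.sum_eq_zero fun j _ => hcon j
      have hcomp : ∀ (y : N) (j : Fin m),
          (χ j y : k) • π j (ρ x v₀) =
            (χ i ⟨x⁻¹ * (y : G) * x, hconjx x y⟩ : k) • π j (ρ x v₀) := by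
        intro y j
        have hA : ∀ j', (χ j' y : k) • π j' (ρ x v₀) ∈ W j' :=
          fun j' => Submodule.smul_mem _ _ (hπmem j' _)
        have hAs : ∑ j', (χ j' y : k) • π j' (ρ x v₀) = ρ (y : G) (ρ x v₀) := by
          rw [Finset.sum_congr rfl fun j' _ => (hWval j' _ (hπmem j' _) y).symm, ← map_sum,
            hπsum]
        have hB : ∀ j', (χ i ⟨x⁻¹ * (y : G) * x, hconjx x y⟩ : k) • π j' (ρ x v₀) ∈ W j' :=
          fun j' => Submodule.smul_mem _ _ (hπmem j' _)
        have hBs : ∑ j', (χ i ⟨x⁻¹ * (y : G) * x, hconjx x y⟩ : k) • π j' (ρ x v₀) =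
            ρ (y : G) (ρ x v₀) := by
          rw [← Finset.smul_sum, hπsum]
          exact (heig v₀ hv₀ y).symm
        exact (hπuniq (ρ (y : G) (ρ x v₀)) _ hA hAs j).symm.trans (hπuniq (ρ (y : G) (ρ x v₀)) _ hB hBs j)
      have hchar0 : ∀ y : N, (χ j₀ y : k) = (χ i ⟨x⁻¹ * (y : G) * x, hconjx x y⟩ : k) := by
        intro y
        have h8 := hcomp y j₀
        by_contra hne'
        have h9 : ((χ j₀ y : k) - (χ i ⟨x⁻¹ * (y : G) * x, hconjx x y⟩ : k)) • π j₀ (ρ x v₀)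
            = 0 := by rw [sub_smul, h8, sub_self]
        rcases smul_eq_zero.mp h9 with h | h
        · exact hne' (sub_eq_zero.mp h)
        · exact hj₀ h
      refine ⟨j₀, ?_, hchar0⟩
      rintro w ⟨v, hv, rfl⟩
      rw [hW]
      intro y
      rw [heig v hv y, hchar0 y]
    have hs_ex : ∀ i : Fin m, ∃ j, Submodule.map (ρ g) (W i) = W j ∧
        ∀ y : N, (χ j y : k) = (χ i ⟨g⁻¹ * (y : G) * g, hconjx g y⟩ : k) := by
      intro i
      obtain ⟨j, hj, hjc⟩ := key g i
      obtain ⟨j', hj', -⟩ := key g⁻¹ j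
      have h3 : W i ≤ W j' := by
        intro v hv
        have h3a : ρ g v ∈ W j := hj (Submodule.mem_map_of_mem hv)
        have h4 : ρ g⁻¹ (ρ g v) ∈ W j' := hj' (Submodule.mem_map_of_mem h3a)
        have h5 : ρ g⁻¹ (ρ g v) = v := by
          rw [← Module.End.mul_apply, ← map_mul, inv_mul_cancel, map_one]; rfl
        rwa [h5] at h4
      have hij' : i = j' := by
        by_contra hcon
        obtain ⟨v₀, hv₀, hv₀0⟩ := Submodule.ne_bot_iff (W i) |>.mp (hne i)
        exact hv₀0 (hWdisj i j' hcon v₀ hv₀ (h3 hv₀))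
      have h6 : Submodule.map (ρ g⁻¹) (W j) ≤ W i := by
        rintro w ⟨v, hv, rfl⟩
        exact hij' ▸ hj' (Submodule.mem_map_of_mem hv)
      have h7 : W j ≤ Submodule.map (ρ g) (W i) := by
        intro w hw
        have h7a : ρ g⁻¹ w ∈ W i := h6 (Submodule.mem_map_of_mem hw)
        refine ⟨ρ g⁻¹ w, h7a, ?_⟩
        rw [← Module.End.mul_apply, ← map_mul, mul_inv_cancel, map_one]; rfl
      exact ⟨j, le_antisymm hj h7, hjc⟩
    choose s hs hschar using hs_ex
    exact ⟨s, hs, hschar⟩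
  have hsne : ∀ i, s i ≠ i := fun i h => hg i ((hs i).trans (congrArg W h))
  have hsinj : Function.Injective s := by
    intro a b hab
    apply hWinj
    have h1 : Submodule.map (ρ g) (W a) = Submodule.map (ρ g) (W b) := by
      rw [hs a, hs b, hab]
    have h2 := congrArg (Submodule.map (ρ g⁻¹)) h1
    rwa [hρmap, hρmap] at h2
  have hsbij : Function.Bijective s := Finite.injective_iff_bijective.mp hsinj
  -- g·y maps W i to W (s i)
  have hmapin : ∀ (y : N) (i : Fin m) (w : V), w ∈ W i → ρ (g * (y : G)) w ∈ W (s i) := by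
    intro y i w hw
    have : ρ (g * (y : G)) w = (χ i y : k) • ρ g w := by
      rw [map_mul, Module.End.mul_apply, hWval i w hw y, map_smul]
    rw [this]
    exact Submodule.smul_mem _ _ (hs i ▸ Submodule.mem_map_of_mem hw)
  -- ## Step relations for fixed vectors
  have hstep : ∀ (y : N) (v : V), ρ (g * (y : G)) v = v →
      ∀ i, π (s i) v = ρ (g * (y : G)) (π i v) := by
    intro y v hv i
    set σ := Equiv.ofBijective s hsbij with hσdef
    have hf : ∀ j, ρ (g * (y : G)) (π (σ.symm j) v) ∈ W j := by
      intro j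
      have h1 := hmapin y (σ.symm j) (π (σ.symm j) v) (hπmem _ _)
      rwa [show s (σ.symm j) = j from σ.apply_symm_apply j] at h1
    have hfs : ∑ j, ρ (g * (y : G)) (π (σ.symm j) v) = v := by
      rw [← map_sum, Equiv.sum_comp σ.symm (fun i' => π i' v), hπsum, hv]
    refine (hπuniq v _ hf hfs (s i)).trans ?_
    show ρ (g * (y : G)) (π (σ.symm (s i)) v) = ρ (g * (y : G)) (π i v)
    rw [show σ.symm (s i) = i from σ.symm_apply_apply i]
  have hiter : ∀ (y : N) (v : V), ρ (g * (y : G)) v = v →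
      ∀ (n : ℕ) (i : Fin m), π (s^[n] i) v = ρ ((g * (y : G)) ^ n) (π i v) := by
    intro y v hv n
    induction n with
    | zero => intro i; simp
    | succ n ih =>
      intro i
      rw [Function.iterate_succ_apply', hstep y v hv (s^[n] i), ih i,
        ← Module.End.mul_apply, ← map_mul, ← pow_succ']
  -- ## Orbits of s
  have hper : ∀ i : Fin m, i ∈ Function.periodicPts s := by
    intro i
    obtain ⟨a, b, hab, hfab⟩ : ∃ a b : ℕ, a < b ∧ s^[a] i = s^[b] i := by
      obtain ⟨a, b, hne', heq⟩ := Finite.exists_ne_map_eq_of_infinite (fun n : ℕ => s^[n] i)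
      rcases lt_or_gt_of_ne hne' with h | h
      · exact ⟨a, b, h, heq⟩
      · exact ⟨b, a, h, heq.symm⟩
    refine Function.mk_mem_periodicPts (n := b - a) (by omega) ?_
    have hinj : Function.Injective (s^[a]) := Function.Injective.iterate hsinj a
    have h1 : s^[a + (b - a)] i = s^[a] i := by
      rw [show a + (b - a) = b by omega]; exact hfab.symm
    rw [Function.iterate_add_apply] at h1
    exact hinj h1
  have hrel_refl : ∀ i : Fin m, ∃ n : ℕ, s^[n] i = i := fun i => ⟨0, rfl⟩
  have hrel_symm : ∀ {i j : Fin m}, (∃ n : ℕ, s^[n] i = j) → ∃ n : ℕ, s^[n] j = i := by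
    rintro i j ⟨n, rfl⟩
    have hp : 0 < Function.minimalPeriod s i :=
      Function.minimalPeriod_pos_of_mem_periodicPts (hper i)
    have hnp : s^[n * Function.minimalPeriod s i] i = i :=
      (Function.isPeriodicPt_minimalPeriod s i).const_mul n
    refine ⟨n * Function.minimalPeriod s i - n, ?_⟩
    have h1 : s^[n * Function.minimalPeriod s i - n + n] i = i := by
      rw [Nat.sub_add_cancel (Nat.le_mul_of_pos_right n hp)]; exact hnp
    rw [Function.iterate_add_apply] at h1
    exact h1
  have hrel_trans : ∀ {i j l : Fin m}, (∃ n : ℕ, s^[n] i = j) → (∃ n : ℕ, s^[n] j = l) →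
      ∃ n : ℕ, s^[n] i = l := by
    rintro i j l ⟨a, rfl⟩ ⟨b, rfl⟩
    exact ⟨b + a, Function.iterate_add_apply s b a i⟩
  let st : Setoid (Fin m) := ⟨fun i j => ∃ n : ℕ, s^[n] i = j,
    ⟨hrel_refl, hrel_symm, hrel_trans⟩⟩
  letI : Fintype (Quotient st) := Fintype.ofFinite _
  let rep : Quotient st → Fin m := Quotient.out
  let per : Quotient st → ℕ := fun q => Function.minimalPeriod s (rep q)
  have hper_pos : ∀ q, 0 < per q :=
    fun q => Function.minimalPeriod_pos_of_mem_periodicPts (hper _)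
  have hper_ne1 : ∀ q, per q ≠ 1 := by
    intro q h
    have h1 := Function.isPeriodicPt_minimalPeriod s (rep q)
    rw [show Function.minimalPeriod s (rep q) = 1 from h] at h1
    have h2 : s (rep q) = rep q := by exact h1
    exact hsne (rep q) h2
  have hper2 : ∀ q, 2 ≤ per q := fun q => by
    have h1 := hper_pos q; have h2 := hper_ne1 q; omega
  have hfixper : ∀ q, s^[per q] (rep q) = rep q :=
    fun q => Function.isPeriodicPt_minimalPeriod s (rep q)
  have horbit : ∀ i : Fin m, ∃ n, n < per (Quotient.mk st i) ∧
      s^[n] (rep (Quotient.mk st i)) = i := by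
    intro i
    obtain ⟨n, hn⟩ : ∃ n : ℕ, s^[n] (rep (Quotient.mk st i)) = i :=
      Quotient.exact (Quotient.out_eq (Quotient.mk st i))
    refine ⟨n % per (Quotient.mk st i), Nat.mod_lt _ (hper_pos _), ?_⟩
    show s^[n % Function.minimalPeriod s (rep (Quotient.mk st i))]
      (rep (Quotient.mk st i)) = i
    rw [Function.iterate_mod_minimalPeriod_eq]
    exact hn
  have hsum_orbit : ∀ F : Fin m → ℕ,
      ∑ i, F i = ∑ q : Quotient st, ∑ j : Fin (per q), F (s^[(j : ℕ)] (rep q)) := by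
    intro F
    have hclass : ∀ (q : Quotient st) (j : ℕ), Quotient.mk st (s^[j] (rep q)) = q := by
      intro q j
      exact (Quotient.sound ⟨j, rfl⟩ :
        Quotient.mk st (rep q) = Quotient.mk st (s^[j] (rep q))).symm.trans
        (Quotient.out_eq q)
    have hbij : Function.Bijective (fun p : (Σ q : Quotient st, Fin (per q)) =>
        s^[(p.2 : ℕ)] (rep p.1)) := by
      constructor
      · rintro ⟨q, j⟩ ⟨q', j'⟩ h
        simp only at h
        have hq : q = q' := by
          rw [← hclass q (j : ℕ), h, hclass q' (j' : ℕ)]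
        subst hq
        have hj : (j : ℕ) = (j' : ℕ) :=
          Function.iterate_injOn_Iio_minimalPeriod (Set.mem_Iio.mpr j.2)
            (Set.mem_Iio.mpr j'.2) h
        rw [Fin.ext hj]
      · intro i
        obtain ⟨n, hlt, hn⟩ := horbit i
        exact ⟨⟨Quotient.mk st i, ⟨n, hlt⟩⟩, hn⟩
    calc ∑ i, F i
        = ∑ p : (Σ q : Quotient st, Fin (per q)), F (s^[(p.2 : ℕ)] (rep p.1)) :=
          (Fintype.sum_bijective _ hbij _ F (fun p => rfl)).symm
      _ = ∑ q : Quotient st, ∑ j : Fin (per q), F (s^[(j : ℕ)] (rep q)) := by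
          rw [← Finset.univ_sigma_univ, Finset.sum_sigma]
  -- ## dimension invariance
  have hd : ∀ i, Module.finrank k (W (s i)) = Module.finrank k (W i) := by
    intro i
    rw [← hs i]
    exact (LinearEquiv.finrank_eq (Submodule.equivMapOfInjective (ρ g) (hρinj g) (W i))).symm
  have hditer : ∀ (n : ℕ) (i : Fin m),
      Module.finrank k (W (s^[n] i)) = Module.finrank k (W i) := by
    intro n
    induction n with
    | zero => intro i; rfl
    | succ n ih => intro i; rw [Function.iterate_succ_apply', hd, ih]
  -- ## The per-orbit fixed subspaces
  let E : Quotient st → N → Submodule k V := fun q y =>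
    W (rep q) ⊓ LinearMap.ker (ρ ((g * (y : G)) ^ (per q)) - 1)
  have hker : ∀ (y : N) (v : V),
      v ∈ LinearMap.ker (ρ (g * (y : G)) - 1) ↔ ρ (g * (y : G)) v = v := by
    intro y v
    rw [LinearMap.mem_ker, LinearMap.sub_apply, Module.End.one_apply, sub_eq_zero]
  have hCE : ∀ y : N, Module.finrank k (LinearMap.ker (ρ (g * (y : G)) - 1)) ≤
      ∑ q : Quotient st, Module.finrank k (E q y) := by
    intro y
    have hmem : ∀ (v : LinearMap.ker (ρ (g * (y : G)) - 1)) (q : Quotient st),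
        π (rep q) (v : V) ∈ E q y := by
      intro v q
      refine Submodule.mem_inf.mpr ⟨hπmem _ _, ?_⟩
      rw [LinearMap.mem_ker, LinearMap.sub_apply, Module.End.one_apply, sub_eq_zero]
      have hv : ρ (g * (y : G)) (v : V) = v := (hker y v).mp v.2
      have h1 := hiter y v hv (per q) (rep q)
      rw [hfixper q] at h1
      exact h1.symm
    let Ψ : LinearMap.ker (ρ (g * (y : G)) - 1) →ₗ[k] (∀ q : Quotient st, E q y) :=
      { toFun := fun v q => ⟨π (rep q) (v : V), hmem v q⟩
        map_add' := by intro a b; funext q; exact Subtype.ext (by simp)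
        map_smul' := by intro c a; funext q; exact Subtype.ext (by simp) }
    have hΨinj : Function.Injective Ψ := by
      rw [← LinearMap.ker_eq_bot, LinearMap.ker_eq_bot']
      intro v hv0
      have hzero : ∀ q, π (rep q) (v : V) = 0 := by
        intro q
        exact congrArg Subtype.val (congrFun hv0 q)
      have hall : ∀ i, π i (v : V) = 0 := by
        intro i
        obtain ⟨n, hlt, hn⟩ := horbit i
        have hv : ρ (g * (y : G)) (v : V) = v := (hker y v).mp v.2
        have h2 := hiter y v hv n (rep (Quotient.mk st i))
        rw [hn] at h2
        rw [h2, hzero, map_zero]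
      exact Subtype.ext (by rw [← hπsum (v : V)]; exact Finset.sum_eq_zero fun i _ => hall i)
    calc Module.finrank k (LinearMap.ker (ρ (g * (y : G)) - 1))
        ≤ Module.finrank k (∀ q : Quotient st, E q y) :=
          LinearMap.finrank_le_finrank_of_injective hΨinj
      _ = ∑ q, Module.finrank k (E q y) := Module.finrank_pi_fintype k
  -- ## Per-orbit bound
  have hEd : ∀ (q : Quotient st) (y : N),
      Module.finrank k (E q y) ≤ Module.finrank k (W (rep q)) :=
    fun q y => Submodule.finrank_mono inf_le_left
  have horbbound : ∀ q : Quotient st,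
      3 * ∑ y : N, Module.finrank k (E q y) ≤
        Fintype.card N * (per q * Module.finrank k (W (rep q))) := by
    intro q
    rcases eq_or_lt_of_le (hper2 q) with h2 | h3
    · -- the 2-cycle case
      have hrs : rep q ≠ s (rep q) := Ne.symm (hsne (rep q))
      have hεpm : ∀ y : N, (χ (rep q) y : k) * (χ (s (rep q)) y : k) = 1 ∨
          (χ (rep q) y : k) * (χ (s (rep q)) y : k) = -1 := by
        intro y
        rcases hpm (rep q) y with h | h <;> rcases hpm (s (rep q)) y with h' | h' <;>
          rw [h, h']
        · left; ring
        · right; ring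
        · right; ring
        · left; ring
      obtain ⟨y₀, hy₀⟩ : ∃ y₀ : N, (χ (rep q) y₀ : k) * (χ (s (rep q)) y₀ : k) = -1 := by
        obtain ⟨y, hy⟩ := hdval (rep q) (s (rep q)) hrs
        refine ⟨y, ?_⟩
        rcases hpm (rep q) y with h | h <;> rcases hpm (s (rep q)) y with h' | h' <;>
          rw [h, h'] at hy ⊢
        · exact absurd rfl hy
        · ring
        · ring
        · exact absurd rfl hy
      have hεmul : ∀ a b : N, ((χ (rep q)) (a * b) : k) * ((χ (s (rep q))) (a * b) : k)
          = (((χ (rep q)) a : k) * ((χ (s (rep q))) a : k)) *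
            (((χ (rep q)) b : k) * ((χ (s (rep q))) b : k)) := by
        intro a b
        rw [map_mul, map_mul, Units.val_mul, Units.val_mul]
        ring
      have hgy2 : ∀ (y : N), ∀ w ∈ W (rep q),
          ρ ((g * (y : G)) ^ 2) w
            = ((χ (rep q) y : k) * (χ (s (rep q)) y : k)) • ρ (g * g) w := by
        intro y w hw
        have hz : ((g * (y : G)) ^ 2) = (g * g) * ((g⁻¹ * (y : G) * g) * (y : G)) := by
          rw [pow_two]
          group
        have h4 : ρ ((g⁻¹ * (y : G) * g) * (y : G)) w
            = ((χ (rep q) (⟨g⁻¹ * (y : G) * g, hconjx g y⟩ * y) : k)) • w :=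
          hWval (rep q) w hw (⟨g⁻¹ * (y : G) * g, hconjx g y⟩ * y)
        rw [hz, map_mul, Module.End.mul_apply, h4, map_smul, map_mul, Units.val_mul,
          ← hschar (rep q) y, mul_comm]
      have hEeq : ∀ y : N, E q y = W (rep q) ⊓ LinearMap.ker
          (ρ (g * g) - ((χ (rep q) y : k) * (χ (s (rep q)) y : k)) • (1 : V →ₗ[k] V)) := by
        intro y
        have hee : ((χ (rep q) y : k) * (χ (s (rep q)) y : k)) *
            ((χ (rep q) y : k) * (χ (s (rep q)) y : k)) = 1 := by
          rcases hpm (rep q) y with h | h <;> rcases hpm (s (rep q)) y with h' | h' <;>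
            rw [h, h'] <;> ring
        show W (rep q) ⊓ LinearMap.ker (ρ ((g * (y : G)) ^ per q) - 1) = _
        rw [← h2]
        ext w
        simp only [Submodule.mem_inf, LinearMap.mem_ker, LinearMap.sub_apply,
          Module.End.one_apply, LinearMap.smul_apply, sub_eq_zero]
        constructor
        · rintro ⟨hw, hfix⟩
          rw [hgy2 y w hw] at hfix
          refine ⟨hw, ?_⟩
          calc ρ (g * g) w = (1 : k) • ρ (g * g) w := (one_smul k _).symm
            _ = (((χ (rep q) y : k) * (χ (s (rep q)) y : k)) *
                ((χ (rep q) y : k) * (χ (s (rep q)) y : k))) • ρ (g * g) w := by rw [hee]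
            _ = ((χ (rep q) y : k) * (χ (s (rep q)) y : k)) •
                (((χ (rep q) y : k) * (χ (s (rep q)) y : k)) • ρ (g * g) w) := by
                  rw [← smul_smul]
            _ = ((χ (rep q) y : k) * (χ (s (rep q)) y : k)) • w := by rw [hfix]
        · rintro ⟨hw, heq⟩
          refine ⟨hw, ?_⟩
          rw [hgy2 y w hw, heq, smul_smul, hee, one_smul]
      have hdisjF : (W (rep q) ⊓ LinearMap.ker (ρ (g * g) - (1 : k) • (1 : V →ₗ[k] V))) ⊓
          (W (rep q) ⊓ LinearMap.ker (ρ (g * g) - (-1 : k) • (1 : V →ₗ[k] V))) = ⊥ := by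
        rw [Submodule.eq_bot_iff]
        intro w hw
        have h5 := Submodule.mem_inf.mp hw
        have h6 := Submodule.mem_inf.mp h5.1
        have h7 := Submodule.mem_inf.mp h5.2
        have ha : ρ (g * g) w = (1 : k) • w := by
          have h8 := h6.2
          rwa [LinearMap.mem_ker, LinearMap.sub_apply, LinearMap.smul_apply,
            Module.End.one_apply, sub_eq_zero] at h8
        have hb : ρ (g * g) w = (-1 : k) • w := by
          have h8 := h7.2
          rwa [LinearMap.mem_ker, LinearMap.sub_apply, LinearMap.smul_apply,
            Module.End.one_apply, sub_eq_zero] at h8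
        have hc : ((1 : k) - (-1 : k)) • w = 0 := by
          rw [sub_smul, ← ha, ← hb, sub_self]
        rw [show ((1 : k) - (-1 : k)) = 2 by norm_num] at hc
        rcases smul_eq_zero.mp hc with h | h
        · exact absurd h h2k
        · exact h
      have hF12 : Module.finrank k
            ↥(W (rep q) ⊓ LinearMap.ker (ρ (g * g) - (1 : k) • (1 : V →ₗ[k] V)))
          + Module.finrank k
            ↥(W (rep q) ⊓ LinearMap.ker (ρ (g * g) - (-1 : k) • (1 : V →ₗ[k] V)))
          ≤ Module.finrank k (W (rep q)) := by
        have h9 := Submodule.finrank_sup_add_finrank_inf_eq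
          (W (rep q) ⊓ LinearMap.ker (ρ (g * g) - (1 : k) • (1 : V →ₗ[k] V)))
          (W (rep q) ⊓ LinearMap.ker (ρ (g * g) - (-1 : k) • (1 : V →ₗ[k] V)))
        rw [hdisjF, finrank_bot, add_zero] at h9
        rw [← h9]
        exact Submodule.finrank_mono (sup_le inf_le_left inf_le_left)
      set A := Finset.univ.filter
        (fun y : N => (χ (rep q) y : k) * (χ (s (rep q)) y : k) = 1) with hA
      set B := Finset.univ.filter
        (fun y : N => (χ (rep q) y : k) * (χ (s (rep q)) y : k) = -1) with hB
      have h10 : Finset.univ.filter (fun y : N =>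
          ¬ ((χ (rep q) y : k) * (χ (s (rep q)) y : k) = 1)) = B := by
        rw [hB]
        apply Finset.filter_congr
        intro y _
        exact ⟨fun h => (hεpm y).resolve_left h,
          fun h hc => hone_ne ((h.symm.trans hc).symm)⟩
      have hsplit : ∀ f : N → ℕ, ∑ y : N, f y = ∑ y ∈ A, f y + ∑ y ∈ B, f y := by
        intro f
        rw [← h10, hA]
        exact (Finset.sum_filter_add_sum_filter_not Finset.univ _ f).symm
      have hABcard : A.card + B.card = Fintype.card N := by
        have h11 := hsplit (fun _ => 1)
        simp only [Finset.sum_const, smul_eq_mul, mul_one, Finset.card_univ] at h11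
        omega
      have hcardAB : A.card = B.card := by
        refine Finset.card_bij' (fun y _ => y₀ * y) (fun y _ => y₀ * y) ?_ ?_ ?_ ?_
        · intro a ha
          rw [hB, Finset.mem_filter]
          refine ⟨Finset.mem_univ _, ?_⟩
          rw [hεmul, hy₀, (Finset.mem_filter.mp ha).2]
          ring
        · intro b hb
          rw [hA, Finset.mem_filter]
          refine ⟨Finset.mem_univ _, ?_⟩
          rw [hεmul, hy₀, (Finset.mem_filter.mp hb).2]
          ring
        · intro a _
          show y₀ * (y₀ * a) = a
          rw [← mul_assoc, hsq y₀, one_mul]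
        · intro b _
          show y₀ * (y₀ * b) = b
          rw [← mul_assoc, hsq y₀, one_mul]
      have hsumA : ∑ y ∈ A, Module.finrank k (E q y) = A.card * Module.finrank k
          ↥(W (rep q) ⊓ LinearMap.ker (ρ (g * g) - (1 : k) • (1 : V →ₗ[k] V))) := by
        have h12 : ∀ y ∈ A, Module.finrank k (E q y) = Module.finrank k
            ↥(W (rep q) ⊓ LinearMap.ker (ρ (g * g) - (1 : k) • (1 : V →ₗ[k] V))) := by
          intro y hy
          have hy1 : (χ (rep q) y : k) * (χ (s (rep q)) y : k) = 1 :=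
            (Finset.mem_filter.mp hy).2
          rw [hEeq y, hy1]
        rw [Finset.sum_congr rfl h12, Finset.sum_const, smul_eq_mul]
      have hsumB : ∑ y ∈ B, Module.finrank k (E q y) = B.card * Module.finrank k
          ↥(W (rep q) ⊓ LinearMap.ker (ρ (g * g) - (-1 : k) • (1 : V →ₗ[k] V))) := by
        have h12 : ∀ y ∈ B, Module.finrank k (E q y) = Module.finrank k
            ↥(W (rep q) ⊓ LinearMap.ker (ρ (g * g) - (-1 : k) • (1 : V →ₗ[k] V))) := by
          intro y hy
          have hy1 : (χ (rep q) y : k) * (χ (s (rep q)) y : k) = -1 :=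
            (Finset.mem_filter.mp hy).2
          rw [hEeq y, hy1]
        rw [Finset.sum_congr rfl h12, Finset.sum_const, smul_eq_mul]
      rw [hsplit (fun y => Module.finrank k (E q y)), hsumA, hsumB, ← h2]
      have h13 := Nat.mul_le_mul_left A.card hF12
      nlinarith [h13, hABcard, hcardAB]
    · have hb : ∑ y : N, Module.finrank k (E q y) ≤
          Fintype.card N * Module.finrank k (W (rep q)) := by
        calc ∑ y : N, Module.finrank k (E q y)
            ≤ ∑ _y : N, Module.finrank k (W (rep q)) :=
              Finset.sum_le_sum fun y _ => hEd q y
          _ = Fintype.card N * Module.finrank k (W (rep q)) := by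
              rw [Finset.sum_const, Finset.card_univ, smul_eq_mul]
      calc 3 * ∑ y : N, Module.finrank k (E q y)
          ≤ 3 * (Fintype.card N * Module.finrank k (W (rep q))) := by omega
        _ ≤ per q * (Fintype.card N * Module.finrank k (W (rep q))) :=
            Nat.mul_le_mul_right _ h3
        _ = Fintype.card N * (per q * Module.finrank k (W (rep q))) := by ring
  -- ## Assembly
  have hQsum : ∑ q : Quotient st, per q * Module.finrank k (W (rep q)) =
      Module.finrank k V := by
    rw [hdimV, hsum_orbit (fun i => Module.finrank k (W i))]
    refine Finset.sum_congr rfl fun q _ => ?_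
    rw [show (∑ j : Fin (per q), Module.finrank k (W (s^[(j : ℕ)] (rep q))))
        = ∑ _j : Fin (per q), Module.finrank k (W (rep q)) from
      Finset.sum_congr rfl fun j _ => hditer (j : ℕ) (rep q)]
    rw [Finset.sum_const, Finset.card_univ, Fintype.card_fin, smul_eq_mul]
  have main : 3 * ∑ y : N, Module.finrank k (LinearMap.ker (ρ (g * (y : G)) - 1)) ≤
      Fintype.card N * Module.finrank k V := by
    calc 3 * ∑ y : N, Module.finrank k (LinearMap.ker (ρ (g * (y : G)) - 1))
        ≤ 3 * ∑ y : N, ∑ q : Quotient st, Module.finrank k (E q y) :=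
          Nat.mul_le_mul_left 3 (Finset.sum_le_sum fun y _ => hCE y)
      _ = ∑ q : Quotient st, 3 * ∑ y : N, Module.finrank k (E q y) := by
          rw [Finset.sum_comm, Finset.mul_sum]
      _ ≤ ∑ q : Quotient st, Fintype.card N * (per q * Module.finrank k (W (rep q))) :=
          Finset.sum_le_sum fun q _ => horbbound q
      _ = Fintype.card N * Module.finrank k V := by rw [← Finset.mul_sum, hQsum]
  have hcardN : Nat.card N = Fintype.card N := Nat.card_eq_fintype_card
  constructor
  · rw [hcardN]; exact main
  · by_contra hcon
    push_neg at hcon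
    have hsum2 : Fintype.card N * (Module.finrank k V + 1) ≤
        ∑ y : N, 3 * Module.finrank k (LinearMap.ker (ρ (g * (y : G)) - 1)) := by
      calc Fintype.card N * (Module.finrank k V + 1)
          = ∑ _y : N, (Module.finrank k V + 1) := by
            rw [Finset.sum_const, Finset.card_univ, smul_eq_mul]
        _ ≤ _ := Finset.sum_le_sum fun y _ => hcon y
    rw [← Finset.mul_sum] at hsum2
    have hpos : 0 < Fintype.card N := Fintype.card_pos
    nlinarith [main, hsum2, hpos]
end

section
/- Let L = A₄ and let W be the irreducible 3-dimensional representation of L over a field of characteristic ≠ 2. For m ≥ 1 let G(m) = L^m act on V(m) = W^{⊗m}. Then for every g ∈ G(m), dim C_{V(m)}(g) ≥ (1/9) dim V(m). -/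
open scoped TensorProduct

namespace Stmt14Aux

open Module



abbrev A4 := alternatingGroup (Fin 4)

def at1 : A4 := ⟨Equiv.swap 0 1 * Equiv.swap 2 3, by rw [Equiv.Perm.mem_alternatingGroup]; decide⟩
def at2 : A4 := ⟨Equiv.swap 0 2 * Equiv.swap 1 3, by rw [Equiv.Perm.mem_alternatingGroup]; decide⟩
def ac : A4 := ⟨Equiv.swap 0 1 * Equiv.swap 1 2, by rw [Equiv.Perm.mem_alternatingGroup]; decide⟩

lemma a4_decomp (g : A4) : ∃ j : Fin 3,
    g = ac ^ (j:ℕ) ∨ g = at1 * ac ^ (j:ℕ) ∨ g = at2 * ac ^ (j:ℕ) ∨ g = at1 * at2 * ac ^ (j:ℕ) := by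
  revert g; decide

lemma at1_sq : at1 * at1 = 1 := by decide
lemma at2_sq : at2 * at2 = 1 := by decide
lemma ac_cube : ac * (ac * ac) = 1 := by decide
lemma comm12 : at1 * at2 = at2 * at1 := by decide
lemma rel1 : at1 * ac = ac * at2 := by decide
lemma rel2 : at2 * ac = ac * (at1 * at2) := by decide

variable {k : Type} [Field k] {W : Type} [AddCommGroup W] [Module k W] [FiniteDimensional k W]

lemma two_ne_zero' (hchar : ringChar k ≠ 2) : (2:k) ≠ 0 := by
  intro h
  have hd : ringChar k ∣ 2 := (ringChar.spec k 2).mp (by exact_mod_cast h)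
  rcases (Nat.dvd_prime Nat.prime_two).mp hd with h1 | h2
  · have : ((1:ℕ):k) = 0 := (ringChar.spec k 1).mpr (h1 ▸ dvd_refl _)
    simp at this
  · exact hchar h2

lemma neg_one_ne_one (hchar : ringChar k ≠ 2) : (-1:k) ≠ 1 := by
  intro h
  apply two_ne_zero' hchar
  linear_combination -h

/-- The key structure: a basis-like family on which `A₄` acts monomially. -/
lemma exists_good_family (hchar : ringChar k ≠ 2)
    (ρ : Representation k A4 W)
    (hirr : ∀ U : Submodule k W,
      (∀ g : A4, ∀ w ∈ U, ρ g w ∈ U) → U = ⊥ ∨ U = ⊤)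
    (hdim : Module.finrank k W = 3) :
    ∃ e : Fin 3 → W, LinearIndependent k e ∧
      (∀ r : Fin 3, ρ ac (e r) = e (r + 1)) ∧
      (∀ r : Fin 3, ρ at1 (e r) = (if r = 0 then (1:k) else -1) • e r) ∧
      (∀ r : Fin 3, ρ at2 (e r) = (if r = 2 then (1:k) else -1) • e r) := by
  classical
  have h2 : (2:k) ≠ 0 := two_ne_zero' hchar
  set T1 : W →ₗ[k] W := ρ at1 with hT1def
  set T2 : W →ₗ[k] W := ρ at2 with hT2def
  set C : W →ₗ[k] W := ρ ac with hCdef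
  have h11 : ∀ w, T1 (T1 w) = w := by
    intro w
    have : ρ (at1 * at1) = ρ at1 * ρ at1 := map_mul ρ at1 at1
    rw [at1_sq, map_one] at this
    have := congrArg (fun f => f w) this.symm
    simpa using this
  have h22 : ∀ w, T2 (T2 w) = w := by
    intro w
    have : ρ (at2 * at2) = ρ at2 * ρ at2 := map_mul ρ at2 at2
    rw [at2_sq, map_one] at this
    have := congrArg (fun f => f w) this.symm
    simpa using this
  have hC3 : ∀ w, C (C (C w)) = w := by
    intro w
    have : ρ (ac * (ac * ac)) = ρ ac * (ρ ac * ρ ac) := by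
      rw [map_mul, map_mul]
    rw [ac_cube, map_one] at this
    have := congrArg (fun f => f w) this.symm
    simpa using this
  have hcomm : ∀ w, T1 (T2 w) = T2 (T1 w) := by
    intro w
    have : ρ (at1 * at2) = ρ (at2 * at1) := by rw [comm12]
    rw [map_mul, map_mul] at this
    have := congrArg (fun f => f w) this
    simpa using this
  have hrel1 : ∀ w, T1 (C w) = C (T2 w) := by
    intro w
    have : ρ (at1 * ac) = ρ (ac * at2) := by rw [rel1]
    rw [map_mul, map_mul] at this
    have := congrArg (fun f => f w) this
    simpa using this
  have hrel2 : ∀ w, T2 (C w) = C (T1 (T2 w)) := by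
    intro w
    have : ρ (at2 * ac) = ρ (ac * (at1 * at2)) := by rw [rel2]
    rw [map_mul, map_mul, map_mul] at this
    have := congrArg (fun f => f w) this
    simpa using this

  -- invariance helper
  have hCpow : ∀ (n : ℕ) (w : W), w ∈ (⊥ : Submodule k W) → True := fun _ _ _ => trivial
  clear hCpow
  have hinv : ∀ (U : Submodule k W), (∀ w ∈ U, T1 w ∈ U) → (∀ w ∈ U, T2 w ∈ U) →
      (∀ w ∈ U, C w ∈ U) → ∀ g : A4, ∀ w ∈ U, ρ g w ∈ U := by
    intro U hU1 hU2 hUC g w hw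
    obtain ⟨j, hj⟩ := a4_decomp g
    have hpow : ∀ (n : ℕ), ∀ w ∈ U, ρ (ac ^ n) w ∈ U := by
      intro n
      induction n with
      | zero => intro w hw; simpa using hw
      | succ n ih =>
        intro w hw
        have : ρ (ac ^ (n+1)) w = ρ (ac ^ n) (C (w)) := by
          rw [pow_succ, map_mul]; rfl
        rw [this]
        exact ih _ (hUC _ hw)
    rcases hj with h | h | h | h <;> subst h
    · exact hpow _ _ hw
    · rw [map_mul]
      exact hU1 _ (hpow _ _ hw)
    · rw [map_mul]
      exact hU2 _ (hpow _ _ hw)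
    · rw [map_mul, map_mul]
      exact hU1 _ (hU2 _ (hpow _ _ hw))
  -- the joint fixed space
  set U0 : Submodule k W := LinearMap.ker (T1 - LinearMap.id) ⊓ LinearMap.ker (T2 - LinearMap.id)
    with hU0def
  have hmemU0 : ∀ w, w ∈ U0 ↔ (T1 w = w ∧ T2 w = w) := by
    intro w
    simp [hU0def, LinearMap.mem_ker, LinearMap.sub_apply, sub_eq_zero]
  have hW3 : Module.finrank k W = 3 := hdim
  have hnt : Nontrivial W := by
    apply Module.nontrivial_of_finrank_pos (R := k)
    rw [hW3]; norm_num
  obtain ⟨w₀, hw₀⟩ := exists_ne (0 : W)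
  have hCinj : ∀ w : W, C w = 0 → w = 0 := by
    intro w h
    have h3 := hC3 w
    rw [h, map_zero, map_zero] at h3
    exact h3.symm
  rcases hirr U0 (by
    apply hinv
    · intro w hw; rcases (hmemU0 w).mp hw with ⟨h1, h2⟩
      rw [h1]; exact hw
    · intro w hw; rcases (hmemU0 w).mp hw with ⟨h1, h2⟩
      rw [h2]; exact hw
    · intro w hw; rcases (hmemU0 w).mp hw with ⟨h1, h2⟩
      rw [hmemU0]
      constructor
      · rw [hrel1, h2]
      · rw [hrel2, h2, h1]) with hU0 | hU0
  ·
    -- U0 = ⊥ : build the monomial family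
    have hbot : ∀ w : W, T1 w = w → T2 w = w → w = 0 := by
      intro w h1 h2
      have : w ∈ U0 := (hmemU0 w).mpr ⟨h1, h2⟩
      rw [hU0] at this
      simpa using this
    -- four components of w₀
    set ypp : W := w₀ + T1 w₀ + T2 w₀ + T1 (T2 w₀) with hypp
    set ypm : W := w₀ + T1 w₀ - T2 w₀ - T1 (T2 w₀) with hypm
    set ymp : W := w₀ - T1 w₀ + T2 w₀ - T1 (T2 w₀) with hymp
    set ymm : W := w₀ - T1 w₀ - T2 w₀ + T1 (T2 w₀) with hymm
    have hT2T1 : T2 (T1 w₀) = T1 (T2 w₀) := (hcomm w₀).symm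
    have hT2T1T2 : T2 (T1 (T2 w₀)) = T1 w₀ := by
      rw [← hcomm (T2 w₀), h22 w₀]
    have hT1T1T2 : T1 (T1 (T2 w₀)) = T2 w₀ := h11 (T2 w₀)
    have eypp1 : T1 ypp = ypp := by
      rw [hypp]
      simp only [map_add]
      rw [h11, hT1T1T2]
      abel
    have eypp2 : T2 ypp = ypp := by
      rw [hypp]
      simp only [map_add]
      rw [h22, hT2T1, hT2T1T2]
      abel
    have eypm1 : T1 ypm = ypm := by
      rw [hypm]
      simp only [map_add, map_sub]
      rw [h11, hT1T1T2]
      abel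
    have eypm2 : T2 ypm = -ypm := by
      rw [hypm]
      simp only [map_add, map_sub]
      rw [h22, hT2T1, hT2T1T2]
      abel
    have eymp1 : T1 ymp = -ymp := by
      rw [hymp]
      simp only [map_add, map_sub]
      rw [h11, hT1T1T2]
      abel
    have eymp2 : T2 ymp = ymp := by
      rw [hymp]
      simp only [map_add, map_sub]
      rw [h22, hT2T1, hT2T1T2]
      abel
    have eymm1 : T1 ymm = -ymm := by
      rw [hymm]
      simp only [map_add, map_sub]
      rw [h11, hT1T1T2]
      abel
    have eymm2 : T2 ymm = -ymm := by
      rw [hymm]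
      simp only [map_add, map_sub]
      rw [h22, hT2T1, hT2T1T2]
      abel
    have hypp0 : ypp = 0 := hbot _ eypp1 eypp2
    have hsum : ypp + ypm + ymp + ymm = (4:k) • w₀ := by
      rw [hypp, hypm, hymp, hymm]
      module
    have h4 : (4:k) ≠ 0 := by
      have : (4:k) = 2 * 2 := by norm_num
      rw [this]
      exact mul_ne_zero h2 h2
    have hsome : ypm ≠ 0 ∨ ymp ≠ 0 ∨ ymm ≠ 0 := by
      by_contra hcon
      push_neg at hcon
      obtain ⟨hxa, hb, hc⟩ := hcon
      rw [hypp0, hxa, hb, hc] at hsum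
      simp only [add_zero, zero_add] at hsum
      exact hw₀ ((smul_eq_zero.mp hsum.symm).resolve_left h4)
    -- produce e0 with T1 e0 = e0, T2 e0 = -e0, e0 ≠ 0
    have hkey : ∃ e0 : W, e0 ≠ 0 ∧ T1 e0 = e0 ∧ T2 e0 = -e0 := by
      have hmove : ∀ x : W, ∀ a b : k, T1 x = a • x → T2 x = b • x →
          T1 (C x) = b • C x ∧ T2 (C x) = (a * b) • C x := by
        intro x a b hx1 hx2
        constructor
        · rw [hrel1, hx2, map_smul]
        · rw [hrel2, hx2, map_smul, hx1, smul_smul, map_smul, mul_comm b a]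
      rcases hsome with hx | hx | hx
      · exact ⟨ypm, hx, eypm1, eypm2⟩
      · -- (a,b) = (-1,1) ↦ apply C once : (1,-1)
        obtain ⟨ha, hb⟩ := hmove ymp (-1) 1 (by rw [eymp1]; module) (by rw [eymp2]; module)
        refine ⟨C ymp, fun h => hx (hCinj _ h), by rw [ha]; try module, by rw [hb]; try module⟩
      · -- (a,b) = (-1,-1) ↦ C: (-1,1) ↦ C: (1,-1)
        obtain ⟨ha, hb⟩ := hmove ymm (-1) (-1) (by rw [eymm1]; module) (by rw [eymm2]; module)
        obtain ⟨ha2, hb2⟩ := hmove (C ymm) (-1) 1 (by rw [ha]; try module) (by rw [hb]; try module)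
        refine ⟨C (C ymm), fun h => hx (hCinj _ (hCinj _ h)), by rw [ha2]; try module,
          by rw [hb2]; try module⟩
    obtain ⟨e0, he0, he01, he02⟩ := hkey
    set e1 : W := C e0 with he1def
    set e2 : W := C e1 with he2def
    have he1 : e1 ≠ 0 := fun h => he0 (hCinj _ h)
    have he2 : e2 ≠ 0 := fun h => he1 (hCinj _ h)
    have hCe2 : C e2 = e0 := by
      rw [he2def, he1def]
      exact hC3 e0
    have he11 : T1 e1 = -e1 := by
      rw [he1def, hrel1, he02, map_neg]
    have he12 : T2 e1 = -e1 := by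
      rw [he1def, hrel2, he02, map_neg, he01, map_neg]
    have he21 : T1 e2 = -e2 := by
      rw [he2def, hrel1, he12, map_neg]
    have he22 : T2 e2 = e2 := by
      have : T1 (T2 e1) = e1 := by rw [he12, map_neg, he11]; module
      rw [he2def, hrel2, this]
    -- linear independence
    have hli : LinearIndependent k ![e0, e1, e2] := by
      rw [Fintype.linearIndependent_iff]
      intro f hf
      rw [Fin.sum_univ_three] at hf
      simp only [Matrix.cons_val_zero, Matrix.cons_val_one, Matrix.head_cons,
        Matrix.cons_val_two, Matrix.tail_cons] at hf
      -- apply T1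
      have hf1 : f 0 • e0 - f 1 • e1 - f 2 • e2 = 0 := by
        have := congrArg T1 hf
        simp only [map_add, map_smul, map_zero, he01, he11, he21] at this
        rw [← this]
        module
      have hf0 : f 0 = 0 := by
        have hcomb : (2 * f 0) • e0 = (f 0 • e0 + f 1 • e1 + f 2 • e2) +
            (f 0 • e0 - f 1 • e1 - f 2 • e2) := by module
        rw [hf, hf1, add_zero] at hcomb
        rcases smul_eq_zero.mp hcomb with h | h
        · have : f 0 = 0 ∨ (2:k) = 0 := by
            rcases mul_eq_zero.mp h with h' | h'
            · exact Or.inr h'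
            · exact Or.inl h'
          exact this.resolve_right h2
        · exact absurd h he0
      rw [hf0, zero_smul, zero_add] at hf
      have hf2' : -(f 1 • e1) + f 2 • e2 = 0 := by
        have := congrArg T2 hf
        simp only [map_add, map_smul, map_zero, he12, he22] at this
        rw [← this]
        module
      have hf2 : f 2 = 0 := by
        have hcomb : (2 * f 2) • e2 = (f 1 • e1 + f 2 • e2) + (-(f 1 • e1) + f 2 • e2) := by
          module
        rw [hf, hf2', add_zero] at hcomb
        rcases smul_eq_zero.mp hcomb with h | h
        · rcases mul_eq_zero.mp h with h' | h'
          · exact absurd h' h2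
          · exact h'
        · exact absurd h he2
      have hf1' : f 1 = 0 := by
        rw [hf2, zero_smul, add_zero] at hf
        rcases smul_eq_zero.mp hf with h | h
        · exact h
        · exact absurd h he1
      intro i
      fin_cases i <;> assumption
    refine ⟨![e0, e1, e2], hli, ?_, ?_, ?_⟩
    · intro r
      fin_cases r
      · show C (![e0, e1, e2] 0) = ![e0, e1, e2] (0 + 1)
        have h1 : (![e0, e1, e2] : Fin 3 → W) 0 = e0 := rfl
        have h2' : (![e0, e1, e2] : Fin 3 → W) (0 + 1) = e1 := rfl
        rw [h1, h2', he1def]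
      · show C (![e0, e1, e2] 1) = ![e0, e1, e2] (1 + 1)
        have h1 : (![e0, e1, e2] : Fin 3 → W) 1 = e1 := rfl
        have h2' : (![e0, e1, e2] : Fin 3 → W) (1 + 1) = e2 := rfl
        rw [h1, h2', he2def]
      · show C (![e0, e1, e2] 2) = ![e0, e1, e2] (2 + 1)
        have h1 : (![e0, e1, e2] : Fin 3 → W) 2 = e2 := rfl
        have h2' : (![e0, e1, e2] : Fin 3 → W) ((2 : Fin 3) + 1) = e0 := rfl
        rw [h1, h2', hCe2]
    · intro r
      fin_cases r
      · show T1 (![e0, e1, e2] 0) = (if (0 : Fin 3) = 0 then (1:k) else -1) • ![e0, e1, e2] 0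
        rw [if_pos rfl]
        show T1 e0 = (1:k) • e0
        rw [he01, one_smul]
      · show T1 (![e0, e1, e2] 1) = (if (1 : Fin 3) = 0 then (1:k) else -1) • ![e0, e1, e2] 1
        rw [if_neg (by decide)]
        show T1 e1 = (-1:k) • e1
        rw [he11]; module
      · show T1 (![e0, e1, e2] 2) = (if (2 : Fin 3) = 0 then (1:k) else -1) • ![e0, e1, e2] 2
        rw [if_neg (by decide)]
        show T1 e2 = (-1:k) • e2
        rw [he21]; module
    · intro r
      fin_cases r
      · show T2 (![e0, e1, e2] 0) = (if (0 : Fin 3) = 2 then (1:k) else -1) • ![e0, e1, e2] 0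
        rw [if_neg (by decide)]
        show T2 e0 = (-1:k) • e0
        rw [he02]; module
      · show T2 (![e0, e1, e2] 1) = (if (1 : Fin 3) = 2 then (1:k) else -1) • ![e0, e1, e2] 1
        rw [if_neg (by decide)]
        show T2 e1 = (-1:k) • e1
        rw [he12]; module
      · show T2 (![e0, e1, e2] 2) = (if (2 : Fin 3) = 2 then (1:k) else -1) • ![e0, e1, e2] 2
        rw [if_pos rfl]
        show T2 e2 = (1:k) • e2
        rw [he22, one_smul]
  ·
    -- U0 = ⊤ : contradiction
    exfalso
    have hfix1 : ∀ w : W, T1 w = w := by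
      intro w
      have : w ∈ U0 := by rw [hU0]; trivial
      exact ((hmemU0 w).mp this).1
    have hfix2 : ∀ w : W, T2 w = w := by
      intro w
      have : w ∈ U0 := by rw [hU0]; trivial
      exact ((hmemU0 w).mp this).2
    -- every ρ g acts as a power of C
    have hact : ∀ g : A4, ∀ w : W, ρ g w = w ∨ ρ g w = C w ∨ ρ g w = C (C w) := by
      intro g w
      obtain ⟨j, hj⟩ := a4_decomp g
      have hpow : ∀ x : W, ρ (ac ^ (j:ℕ)) x = x ∨ ρ (ac ^ (j:ℕ)) x = C x ∨
          ρ (ac ^ (j:ℕ)) x = C (C x) := by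
        intro x
        fin_cases j
        · left; simp
        · right; left
          simp only [pow_one]; rfl
        · right; right
          have : ρ (ac ^ (2:ℕ)) x = C (C x) := by
            rw [pow_two, map_mul]; rfl
          simpa using this
      rcases hj with h | h | h | h <;> subst h
      · exact hpow w
      · rw [map_mul]
        have := hpow w
        have hT1eq : ∀ x : W, T1 x = x := hfix1
        rcases this with h' | h' | h'
        · left; show T1 (ρ (ac ^ (j:ℕ)) w) = w; rw [h']; exact hfix1 w
        · right; left; show T1 (ρ (ac ^ (j:ℕ)) w) = C w; rw [h']; exact hfix1 _
        · right; right; show T1 (ρ (ac ^ (j:ℕ)) w) = C (C w); rw [h']; exact hfix1 _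
      · rw [map_mul]
        have := hpow w
        rcases this with h' | h' | h'
        · left; show T2 (ρ (ac ^ (j:ℕ)) w) = w; rw [h']; exact hfix2 w
        · right; left; show T2 (ρ (ac ^ (j:ℕ)) w) = C w; rw [h']; exact hfix2 _
        · right; right; show T2 (ρ (ac ^ (j:ℕ)) w) = C (C w); rw [h']; exact hfix2 _
      · rw [map_mul, map_mul]
        have := hpow w
        rcases this with h' | h' | h'
        · left
          show T1 (T2 (ρ (ac ^ (j:ℕ)) w)) = w
          rw [h', hfix2, hfix1]
        · right; left
          show T1 (T2 (ρ (ac ^ (j:ℕ)) w)) = C w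
          rw [h', hfix2, hfix1]
        · right; right
          show T1 (T2 (ρ (ac ^ (j:ℕ)) w)) = C (C w)
          rw [h', hfix2, hfix1]
    -- invariant small subspaces give contradictions with finrank = 3
    have hdim_span_ne : ∀ x : W, x ≠ 0 → C x = x → False := by
      intro x hx hCx
      have hCCx : C (C x) = x := by rw [hCx, hCx]
      have hinv' : ∀ g : A4, ∀ w ∈ Submodule.span k {x}, ρ g w ∈ Submodule.span k {x} := by
        intro g w hw
        obtain ⟨a, ha⟩ := Submodule.mem_span_singleton.mp hw
        rcases hact g w with h | h | h <;> rw [h]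
        · exact hw
        · rw [← ha, map_smul, hCx]
          exact Submodule.smul_mem _ _ (Submodule.mem_span_singleton_self x)
        · rw [← ha, map_smul, map_smul, hCCx]
          exact Submodule.smul_mem _ _ (Submodule.mem_span_singleton_self x)
      rcases hirr _ hinv' with h | h
      · have : x ∈ (⊥ : Submodule k W) := h ▸ Submodule.mem_span_singleton_self x
        exact hx (by simpa using this)
      · have h1 : Module.finrank k (Submodule.span k ({x} : Set W)) = 1 :=
          finrank_span_singleton hx
        rw [h, finrank_top, hW3] at h1
        norm_num at h1
    -- main contradiction
    by_cases hCw : C w₀ = w₀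
    · exact hdim_span_ne w₀ hw₀ hCw
    · set s : W := w₀ + C w₀ + C (C w₀) with hs
      have hCs : C s = s := by
        rw [hs]
        simp only [map_add]
        rw [hC3]
        abel
      by_cases hs0 : s = 0
      · -- use u = w₀ - C w₀ and span {u, C u}
        set u : W := w₀ - C w₀ with hu
        have hu0 : u ≠ 0 := by
          rw [hu, sub_ne_zero]
          exact fun h => hCw h.symm
        have h' : (w₀ + C w₀) + C (C w₀) = 0 := by
          rw [hs] at hs0
          exact hs0
        have hCC : C (C w₀) = -(w₀ + C w₀) := eq_neg_of_add_eq_zero_right h'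
        have hCCu : C (C u) = -u - C u := by
          have h1 : C (C u) = C (C w₀) - w₀ := by
            rw [hu]
            simp only [map_sub]
            rw [hC3]
          rw [h1, hCC, hu]
          simp only [map_sub]
          rw [hCC]
          abel
        set Upair := Submodule.span k ({u, C u} : Set W) with hUp
        have hinv' : ∀ g : A4, ∀ w ∈ Upair, ρ g w ∈ Upair := by
          have humem : u ∈ Upair := Submodule.subset_span (by left; rfl)
          have hcumem : C u ∈ Upair := Submodule.subset_span (by right; rfl)
          have hCU : ∀ w ∈ Upair, C w ∈ Upair := by
            intro w hw
            rw [hUp, Submodule.mem_span_pair] at hw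
            obtain ⟨a, b, hab⟩ := hw
            rw [← hab]
            simp only [map_add, map_smul]
            rw [hCCu]
            have : a • C u + b • (-u - C u) = (-b) • u + (a - b) • C u := by module
            rw [this]
            exact Submodule.add_mem _ (Submodule.smul_mem _ _ humem)
              (Submodule.smul_mem _ _ hcumem)
          intro g w hw
          rcases hact g w with h | h | h <;> rw [h]
          · exact hw
          · exact hCU _ hw
          · exact hCU _ (hCU _ hw)
        rcases hirr _ hinv' with h | h
        · have : u ∈ (⊥ : Submodule k W) := h ▸ Submodule.subset_span (by left; rfl)
          exact hu0 (by simpa using this)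
        · have hle : Module.finrank k Upair ≤ 2 := by
            have := finrank_span_le_card (R := k) (M := W) ({u, C u} : Set W)
            refine le_trans this ?_
            rw [Set.toFinset_insert, Set.toFinset_singleton]
            exact (Finset.card_insert_le _ _).trans (by simp)
          rw [h, finrank_top, hW3] at hle
          norm_num at hle
      · exact hdim_span_ne s hs0 hCs





lemma fin3_add3 : ∀ a b : Fin 3, a + b + b + b = a := by decide
lemma fin3_two_ne : ∀ b : Fin 3, b ≠ 0 → b + b ≠ 0 := by decide

lemma tri {k : Type} [Field k] (f : Fin 3 → k) (x y : Fin 3) (hy : y ≠ 0) :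
    f (x + y) * (f (x + y + y) * f (x + y + y + y)) = f 0 * (f 1 * f 2) := by
  fin_cases y
  · exact absurd rfl hy
  · fin_cases x
    · show f 1 * (f 2 * f 0) = f 0 * (f 1 * f 2); ring
    · show f 2 * (f 0 * f 1) = f 0 * (f 1 * f 2); ring
    · show f 0 * (f 1 * f 2) = f 0 * (f 1 * f 2); ring
  · fin_cases x
    · show f 2 * (f 1 * f 0) = f 0 * (f 1 * f 2); ring
    · show f 0 * (f 2 * f 1) = f 0 * (f 1 * f 2); ring
    · show f 1 * (f 0 * f 2) = f 0 * (f 1 * f 2); ring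

lemma core {k : Type} [Field k] (hn1 : (-1 : k) ≠ 1) {m : ℕ}
    {M : Type} [AddCommGroup M] [Module k M] [Module.Finite k M]
    (B : (Fin m → Fin 3) → M)
    (φ : (Fin m → Fin 3) → (M →ₗ[k] k))
    (hφ : ∀ J J', φ J (B J') = if J' = J then 1 else 0)
    (T : M →ₗ[k] M)
    (d : Fin m → Fin 3) (s : Fin m → Fin 3 → k)
    (hT : ∀ J, T (B J) = (∏ i, s i (J i + d i)) • B (fun i => J i + d i))
    (hpm : ∀ i r, s i r = 1 ∨ s i r = -1)
    (hprod : ∀ i, s i 0 * (s i 1 * s i 2) = 1) :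
    3 ^ m ≤ 9 * finrank k (LinearMap.ker (T - LinearMap.id)) := by
  classical
  set σ : (Fin m → Fin 3) → (Fin m → Fin 3) := fun J i => J i + d i with hσdef
  set Λ : (Fin m → Fin 3) → k := fun J => ∏ i, s i (J i + d i) with hΛdef
  set π : (Fin m → Fin 3) → k := fun J => ∏ i, (if d i = 0 then s i (J i) else 1) with hπdef
  have hTB : ∀ J, T (B J) = Λ J • B (σ J) := hT
  have hσ3 : ∀ J, σ (σ (σ J)) = J := by
    intro J
    funext i
    show J i + d i + d i + d i = J i
    exact fin3_add3 _ _
  have htriple : ∀ J, Λ J * (Λ (σ J) * Λ (σ (σ J))) = π J := by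
    intro J
    rw [hΛdef, hπdef]
    simp only
    rw [← Finset.prod_mul_distrib, ← Finset.prod_mul_distrib]
    apply Finset.prod_congr rfl
    intro i _
    show s i (J i + d i) * (s i (J i + d i + d i) * s i (J i + d i + d i + d i)) = _
    by_cases hdi : d i = 0
    · rw [if_pos hdi, hdi, add_zero, add_zero, add_zero]
      rcases hpm i (J i) with h | h <;> rw [h] <;> norm_num
    · rw [if_neg hdi, tri (s i) (J i) (d i) hdi]
      exact hprod i
  -- the sufficient statement
  suffices h : ∃ (sp : Finset (Fin m)) (K : ({ i // i ∈ spᶜ } → Fin 3) → (Fin m → Fin 3))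
      (v : ({ i // i ∈ spᶜ } → Fin 3) → M), sp.card ≤ 2 ∧
      (∀ f, (T - LinearMap.id : M →ₗ[k] M) (v f) = 0) ∧
      (∀ f f', φ (K f') (v f) = if f' = f then 1 else 0) by
    obtain ⟨sp, K, v, hsp2, hker, hδ⟩ := h
    have hli : LinearIndependent k v := by
      rw [Fintype.linearIndependent_iff]
      intro cf hcf f0
      have hev := congrArg (φ (K f0)) hcf
      rw [map_sum, map_zero] at hev
      simp only [map_smul, smul_eq_mul, hδ] at hev
      rw [Finset.sum_congr rfl (fun f _ => by rw [mul_ite, mul_one, mul_zero])] at hev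
      rw [Finset.sum_ite_eq Finset.univ f0 cf] at hev
      simpa using hev
    set u : ({ i // i ∈ spᶜ } → Fin 3) → LinearMap.ker (T - LinearMap.id) :=
      fun f => ⟨v f, by rw [LinearMap.mem_ker]; exact hker f⟩ with hudef
    have hliu : LinearIndependent k u := by
      apply LinearIndependent.of_comp ((LinearMap.ker (T - LinearMap.id)).subtype)
      have : ⇑(LinearMap.ker (T - LinearMap.id)).subtype ∘ u = v := rfl
      rw [this]
      exact hli
    have hcount := hliu.fintype_card_le_finrank
    have hcard : Fintype.card ({ i // i ∈ spᶜ } → Fin 3) = 3 ^ (spᶜ.card) := by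
      rw [Fintype.card_fun, Fintype.card_coe, Fintype.card_fin]
    calc (3:ℕ) ^ m = 3 ^ (sp.card + spᶜ.card) := by
          rw [Finset.card_add_card_compl, Fintype.card_fin]
      _ = 3 ^ sp.card * 3 ^ spᶜ.card := pow_add 3 _ _
      _ ≤ 9 * 3 ^ spᶜ.card := by
          have : (3:ℕ) ^ sp.card ≤ 9 := by
            calc (3:ℕ) ^ sp.card ≤ 3 ^ 2 := Nat.pow_le_pow_right (by norm_num) hsp2
              _ = 9 := by norm_num
          exact Nat.mul_le_mul_right _ this
      _ ≤ 9 * finrank k (LinearMap.ker (T - LinearMap.id)) := by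
          apply Nat.mul_le_mul_left
          rw [← hcard]
          exact hcount
  -- now construct the data, by cases
  have hπpm : ∀ J, π J = 1 ∨ π J = -1 := by
    intro J
    apply Finset.prod_induction _ (fun x => x = 1 ∨ x = -1)
    · rintro a b (ha | ha) (hb | hb) <;> rw [ha, hb] <;> norm_num
    · left; rfl
    · intro i _
      by_cases hdi : d i = 0
      · rw [if_pos hdi]; exact hpm i _
      · rw [if_neg hdi]; left; rfl
  by_cases hay : ∃ i, d i = 0 ∧ ∃ r, s i r ≠ 1
  · -- there is an "involution" coordinate i₁; build the completion E
    obtain ⟨i₁, hd1, rmw, hrmw⟩ := hay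
    have hrm : ∃ r, s i₁ r = -1 := ⟨rmw, (hpm i₁ rmw).resolve_left hrmw⟩
    obtain ⟨rm, hrm⟩ := hrm
    have hrp : ∃ r, s i₁ r = 1 := by
      rcases hpm i₁ 0 with h0 | h0
      · exact ⟨0, h0⟩
      rcases hpm i₁ 1 with h1 | h1
      · exact ⟨1, h1⟩
      rcases hpm i₁ 2 with h2 | h2
      · exact ⟨2, h2⟩
      exfalso
      have := hprod i₁
      rw [h0, h1, h2] at this
      norm_num at this
      exact hn1 this
    obtain ⟨rp, hrp⟩ := hrp
    set q : (Fin m → Fin 3) → k :=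
      fun J => ∏ i ∈ Finset.univ.erase i₁, (if d i = 0 then s i (J i) else 1) with hqdef
    have hqpm : ∀ J, q J = 1 ∨ q J = -1 := by
      intro J
      apply Finset.prod_induction _ (fun x => x = 1 ∨ x = -1)
      · rintro a b (ha | ha) (hb | hb) <;> rw [ha, hb] <;> norm_num
      · left; rfl
      · intro i _
        by_cases hdi : d i = 0
        · rw [if_pos hdi]; exact hpm i _
        · rw [if_neg hdi]; left; rfl
    have hπq : ∀ J, π J = s i₁ (J i₁) * q J := by
      intro J
      rw [hπdef, hqdef]
      simp only
      rw [← Finset.mul_prod_erase Finset.univ _ (Finset.mem_univ i₁), if_pos hd1]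
    set E : (Fin m → Fin 3) → (Fin m → Fin 3) :=
      fun J => Function.update J i₁ (if q J = 1 then rp else rm) with hEdef
    have hEoff : ∀ J i, i ≠ i₁ → E J i = J i := by
      intro J i hi
      exact Function.update_of_ne hi _ _
    have hqE : ∀ J, q (E J) = q J := by
      intro J
      rw [hqdef]
      simp only
      apply Finset.prod_congr rfl
      intro i hi
      rw [hEoff J i (Finset.ne_of_mem_erase hi)]
    have hπE : ∀ J, π (E J) = 1 := by
      intro J
      rw [hπq, hqE]
      have hEi₁ : E J i₁ = if q J = 1 then rp else rm := Function.update_self _ _ _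
      rw [hEi₁]
      rcases hqpm J with hq | hq
      · rw [if_pos hq, hrp, hq, one_mul]
      · rw [if_neg (by rw [hq]; exact hn1), hrm, hq]
        norm_num
    by_cases hby : ∃ i, d i ≠ 0
    · -- case A : both special coordinates
      obtain ⟨i₀, hd0⟩ := hby
      have hne01 : i₀ ≠ i₁ := fun h => hd0 (by rw [h]; exact hd1)
      refine ⟨{i₀, i₁}, ?_⟩
      set sp : Finset (Fin m) := {i₀, i₁} with hspdef
      have hi₀sp : i₀ ∈ sp := by simp [hspdef]
      have hi₁sp : i₁ ∈ sp := by simp [hspdef]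
      set ext : ({ i // i ∈ spᶜ } → Fin 3) → (Fin m → Fin 3) :=
        fun f i => if h : i ∈ sp then 0 else f ⟨i, Finset.mem_compl.mpr h⟩ with hextdef
      set K : ({ i // i ∈ spᶜ } → Fin 3) → (Fin m → Fin 3) := fun f => E (ext f) with hKdef
      have hKoff : ∀ f (i : Fin m) (hi : i ∉ sp), K f i = f ⟨i, Finset.mem_compl.mpr hi⟩ := by
        intro f i hi
        rw [hKdef]
        simp only
        rw [hEoff _ i (fun h => hi (h ▸ hi₁sp)), hextdef]
        simp only
        rw [dif_neg hi]
      have hK0 : ∀ f, K f i₀ = 0 := by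
        intro f
        rw [hKdef]
        simp only
        rw [hEoff _ i₀ hne01, hextdef]
        simp only
        rw [dif_pos hi₀sp]
      have hKinj : ∀ f f', K f = K f' → f = f' := by
        intro f f' hK
        funext i
        have := congrFun hK i.1
        rw [hKoff f i.1 (Finset.mem_compl.mp i.2), hKoff f' i.1 (Finset.mem_compl.mp i.2)] at this
        simpa using this
      have hπK : ∀ f, π (K f) = 1 := fun f => hπE _
      refine ⟨K, fun f => B (K f) + Λ (K f) • B (σ (K f)) +
        (Λ (K f) * Λ (σ (K f))) • B (σ (σ (K f))), ?_, ?_, ?_⟩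
      · calc sp.card ≤ ({i₁} : Finset (Fin m)).card + 1 := Finset.card_insert_le _ _
          _ ≤ 2 := by simp
      · intro f
        set X := K f with hXdef
        have hcoef : Λ X * (Λ (σ X) * Λ (σ (σ X))) = 1 := by rw [htriple]; exact hπK f
        rw [LinearMap.sub_apply, LinearMap.id_apply, sub_eq_zero]
        rw [map_add, map_add, map_smul, map_smul, hTB, hTB, hTB, hσ3]
        rw [smul_smul, smul_smul, mul_assoc, hcoef, one_smul]
        abel
      · intro f f'
        have hσ0 : σ (K f) i₀ = d i₀ := by
          show K f i₀ + d i₀ = d i₀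
          rw [hK0, zero_add]
        have hσσ0 : σ (σ (K f)) i₀ = d i₀ + d i₀ := by
          show σ (K f) i₀ + d i₀ = _
          rw [hσ0]
        have hne1 : σ (K f) ≠ K f' := by
          intro h
          have := congrFun h i₀
          rw [hσ0, hK0] at this
          exact hd0 this
        have hne2 : σ (σ (K f)) ≠ K f' := by
          intro h
          have := congrFun h i₀
          rw [hσσ0, hK0] at this
          exact fin3_two_ne _ hd0 this
        rw [map_add, map_add, map_smul, map_smul, hφ, hφ, hφ]
        rw [if_neg hne1, if_neg hne2, smul_zero, smul_zero, add_zero, add_zero]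
        by_cases hff : f' = f
        · rw [if_pos (by rw [hff]), if_pos hff]
        · rw [if_neg (fun h => hff (hKinj _ _ h.symm)), if_neg hff]
    · -- case C : no cyclic coordinate, only the involution completion
      push_neg at hby
      refine ⟨{i₁}, ?_⟩
      set sp : Finset (Fin m) := {i₁} with hspdef
      have hi₁sp : i₁ ∈ sp := by simp [hspdef]
      set ext : ({ i // i ∈ spᶜ } → Fin 3) → (Fin m → Fin 3) :=
        fun f i => if h : i ∈ sp then 0 else f ⟨i, Finset.mem_compl.mpr h⟩ with hextdef
      set K : ({ i // i ∈ spᶜ } → Fin 3) → (Fin m → Fin 3) := fun f => E (ext f) with hKdef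
      have hKoff : ∀ f (i : Fin m) (hi : i ∉ sp), K f i = f ⟨i, Finset.mem_compl.mpr hi⟩ := by
        intro f i hi
        rw [hKdef]
        simp only
        rw [hEoff _ i (fun h => hi (h ▸ hi₁sp)), hextdef]
        simp only
        rw [dif_neg hi]
      have hKinj : ∀ f f', K f = K f' → f = f' := by
        intro f f' hK
        funext i
        have := congrFun hK i.1
        rw [hKoff f i.1 (Finset.mem_compl.mp i.2), hKoff f' i.1 (Finset.mem_compl.mp i.2)] at this
        simpa using this
      have hσX : ∀ X : Fin m → Fin 3, σ X = X := by
        intro X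
        funext i
        show X i + d i = X i
        rw [hby i, add_zero]
      have hΛπ : ∀ X, Λ X = π X := by
        intro X
        rw [hΛdef, hπdef]
        simp only
        apply Finset.prod_congr rfl
        intro i _
        have hdi : d i = 0 := hby i
        rw [if_pos hdi, hdi, add_zero]
      refine ⟨K, fun f => B (K f), ?_, ?_, ?_⟩
      · simp [hspdef]
      · intro f
        rw [LinearMap.sub_apply, LinearMap.id_apply, sub_eq_zero]
        rw [hTB, hσX, hΛπ, hπE, one_smul]
      · intro f f'
        rw [hφ]
        by_cases hff : f' = f
        · rw [if_pos (by rw [hff]), if_pos hff]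
        · rw [if_neg (fun h => hff (hKinj _ _ h.symm)), if_neg hff]
  · -- no involution coordinate : π ≡ 1
    push_neg at hay
    have hπ1 : ∀ J, π J = 1 := by
      intro J
      rw [hπdef]
      simp only
      apply Finset.prod_eq_one
      intro i _
      by_cases hdi : d i = 0
      · rw [if_pos hdi]
        exact hay i hdi _
      · rw [if_neg hdi]
    by_cases hby : ∃ i, d i ≠ 0
    · -- case B : only cyclic special coordinate
      obtain ⟨i₀, hd0⟩ := hby
      refine ⟨{i₀}, ?_⟩
      set sp : Finset (Fin m) := {i₀} with hspdef
      have hi₀sp : i₀ ∈ sp := by simp [hspdef]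
      set K : ({ i // i ∈ spᶜ } → Fin 3) → (Fin m → Fin 3) :=
        fun f i => if h : i ∈ sp then 0 else f ⟨i, Finset.mem_compl.mpr h⟩ with hKdef
      have hKoff : ∀ f (i : Fin m) (hi : i ∉ sp), K f i = f ⟨i, Finset.mem_compl.mpr hi⟩ := by
        intro f i hi
        rw [hKdef]
        simp only
        rw [dif_neg hi]
      have hK0 : ∀ f, K f i₀ = 0 := by
        intro f
        rw [hKdef]
        simp only
        rw [dif_pos hi₀sp]
      have hKinj : ∀ f f', K f = K f' → f = f' := by
        intro f f' hK
        funext i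
        have := congrFun hK i.1
        rw [hKoff f i.1 (Finset.mem_compl.mp i.2), hKoff f' i.1 (Finset.mem_compl.mp i.2)] at this
        simpa using this
      refine ⟨K, fun f => B (K f) + Λ (K f) • B (σ (K f)) +
        (Λ (K f) * Λ (σ (K f))) • B (σ (σ (K f))), ?_, ?_, ?_⟩
      · simp [hspdef]
      · intro f
        set X := K f with hXdef
        have hcoef : Λ X * (Λ (σ X) * Λ (σ (σ X))) = 1 := by rw [htriple]; exact hπ1 _
        rw [LinearMap.sub_apply, LinearMap.id_apply, sub_eq_zero]
        rw [map_add, map_add, map_smul, map_smul, hTB, hTB, hTB, hσ3]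
        rw [smul_smul, smul_smul, mul_assoc, hcoef, one_smul]
        abel
      · intro f f'
        have hσ0 : σ (K f) i₀ = d i₀ := by
          show K f i₀ + d i₀ = d i₀
          rw [hK0, zero_add]
        have hσσ0 : σ (σ (K f)) i₀ = d i₀ + d i₀ := by
          show σ (K f) i₀ + d i₀ = _
          rw [hσ0]
        have hne1 : σ (K f) ≠ K f' := by
          intro h
          have := congrFun h i₀
          rw [hσ0, hK0] at this
          exact hd0 this
        have hne2 : σ (σ (K f)) ≠ K f' := by
          intro h
          have := congrFun h i₀
          rw [hσσ0, hK0] at this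
          exact fin3_two_ne _ hd0 this
        rw [map_add, map_add, map_smul, map_smul, hφ, hφ, hφ]
        rw [if_neg hne1, if_neg hne2, smul_zero, smul_zero, add_zero, add_zero]
        by_cases hff : f' = f
        · rw [if_pos (by rw [hff]), if_pos hff]
        · rw [if_neg (fun h => hff (hKinj _ _ h.symm)), if_neg hff]
    · -- case D : everything is trivial
      push_neg at hby
      refine ⟨∅, ?_⟩
      set sp : Finset (Fin m) := ∅ with hspdef
      set K : ({ i // i ∈ spᶜ } → Fin 3) → (Fin m → Fin 3) :=
        fun f i => if h : i ∈ sp then 0 else f ⟨i, Finset.mem_compl.mpr h⟩ with hKdef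
      have hKoff : ∀ f (i : Fin m) (hi : i ∉ sp), K f i = f ⟨i, Finset.mem_compl.mpr hi⟩ := by
        intro f i hi
        rw [hKdef]
        simp only
        rw [dif_neg hi]
      have hKinj : ∀ f f', K f = K f' → f = f' := by
        intro f f' hK
        funext i
        have := congrFun hK i.1
        rw [hKoff f i.1 (Finset.mem_compl.mp i.2), hKoff f' i.1 (Finset.mem_compl.mp i.2)] at this
        simpa using this
      have hσX : ∀ X : Fin m → Fin 3, σ X = X := by
        intro X
        funext i
        show X i + d i = X i
        rw [hby i, add_zero]
      have hΛπ : ∀ X, Λ X = π X := by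
        intro X
        rw [hΛdef, hπdef]
        simp only
        apply Finset.prod_congr rfl
        intro i _
        have hdi : d i = 0 := hby i
        rw [if_pos hdi, hdi, add_zero]
      refine ⟨K, fun f => B (K f), ?_, ?_, ?_⟩
      · simp [hspdef]
      · intro f
        rw [LinearMap.sub_apply, LinearMap.id_apply, sub_eq_zero]
        rw [hTB, hσX, hΛπ, hπ1, one_smul]
      · intro f f'
        rw [hφ]
        by_cases hff : f' = f
        · rw [if_pos (by rw [hff]), if_pos hff]
        · rw [if_neg (fun h => hff (hKinj _ _ h.symm)), if_neg hff]

lemma good_family_element (hn1 : (-1:k) ≠ 1) (ρ : Representation k A4 W) (e : Fin 3 → W)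
    (hC : ∀ r : Fin 3, ρ ac (e r) = e (r + 1))
    (h1 : ∀ r : Fin 3, ρ at1 (e r) = (if r = 0 then (1:k) else -1) • e r)
    (h2 : ∀ r : Fin 3, ρ at2 (e r) = (if r = 2 then (1:k) else -1) • e r)
    (h : A4) :
    ∃ (dd : Fin 3) (ss : Fin 3 → k),
      (∀ r, ρ h (e r) = ss (r + dd) • e (r + dd)) ∧
      (∀ r, ss r = 1 ∨ ss r = -1) ∧ (ss 0 * (ss 1 * ss 2) = 1) := by
  obtain ⟨j, hj⟩ := a4_decomp h
  have hpow : ∀ r : Fin 3, ρ (ac ^ (j:ℕ)) (e r) = e (r + j) := by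
    have haux : ∀ r : Fin 3, r + 1 + 1 = r + 2 := by decide
    intro r
    fin_cases j
    · show ρ (ac ^ ((0 : Fin 3) : ℕ)) (e r) = e (r + 0)
      norm_num
    · show ρ (ac ^ ((1 : Fin 3) : ℕ)) (e r) = e (r + 1)
      rw [show (((1 : Fin 3)) : ℕ) = 1 from rfl, pow_one, hC]
    · show ρ (ac ^ ((2 : Fin 3) : ℕ)) (e r) = e (r + 2)
      rw [show (((2 : Fin 3)) : ℕ) = 2 from rfl, pow_two, map_mul]
      show ρ ac (ρ ac (e r)) = _
      rw [hC, hC, haux]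
  rcases hj with hg | hg | hg | hg <;> subst hg
  · exact ⟨j, fun _ => 1, fun r => by rw [one_smul]; exact hpow r,
      fun r => Or.inl rfl, by norm_num⟩
  · refine ⟨j, fun r => if r = 0 then (1:k) else -1, ?_, ?_, ?_⟩
    · intro r
      rw [map_mul]
      show ρ at1 (ρ (ac ^ (j:ℕ)) (e r)) = _
      rw [hpow, h1]
    · intro r
      show (if r = 0 then (1:k) else -1) = 1 ∨ (if r = 0 then (1:k) else -1) = -1
      by_cases hr : r = 0
      · rw [if_pos hr]; exact Or.inl rfl
      · rw [if_neg hr]; exact Or.inr rfl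
    · show (if (0:Fin 3) = 0 then (1:k) else -1) *
        ((if (1:Fin 3) = 0 then (1:k) else -1) * (if (2:Fin 3) = 0 then (1:k) else -1)) = 1
      rw [if_pos rfl, if_neg (by decide), if_neg (by decide)]
      norm_num
  · refine ⟨j, fun r => if r = 2 then (1:k) else -1, ?_, ?_, ?_⟩
    · intro r
      rw [map_mul]
      show ρ at2 (ρ (ac ^ (j:ℕ)) (e r)) = _
      rw [hpow, h2]
    · intro r
      show (if r = 2 then (1:k) else -1) = 1 ∨ (if r = 2 then (1:k) else -1) = -1
      by_cases hr : r = 2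
      · rw [if_pos hr]; exact Or.inl rfl
      · rw [if_neg hr]; exact Or.inr rfl
    · show (if (0:Fin 3) = 2 then (1:k) else -1) *
        ((if (1:Fin 3) = 2 then (1:k) else -1) * (if (2:Fin 3) = 2 then (1:k) else -1)) = 1
      rw [if_neg (by decide), if_neg (by decide), if_pos rfl]
      norm_num
  · refine ⟨j, fun r => (if r = 0 then (1:k) else -1) * (if r = 2 then (1:k) else -1),
      ?_, ?_, ?_⟩
    · intro r
      rw [map_mul, map_mul]
      show ρ at1 (ρ at2 (ρ (ac ^ (j:ℕ)) (e r))) = _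
      rw [hpow, h2, map_smul, h1, smul_smul, mul_comm]
    · intro r
      show (if r = 0 then (1:k) else -1) * (if r = 2 then (1:k) else -1) = 1 ∨
        (if r = 0 then (1:k) else -1) * (if r = 2 then (1:k) else -1) = -1
      by_cases hr : r = 0
      · rw [if_pos hr, if_neg (by rw [hr]; decide), one_mul]; exact Or.inr rfl
      · by_cases hr2 : r = 2
        · rw [if_neg hr, if_pos hr2, mul_one]; exact Or.inr rfl
        · rw [if_neg hr, if_neg hr2]; left; norm_num
    · show ((if (0:Fin 3) = 0 then (1:k) else -1) * (if (0:Fin 3) = 2 then (1:k) else -1)) *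
        (((if (1:Fin 3) = 0 then (1:k) else -1) * (if (1:Fin 3) = 2 then (1:k) else -1)) *
         ((if (2:Fin 3) = 0 then (1:k) else -1) * (if (2:Fin 3) = 2 then (1:k) else -1))) = 1
      rw [if_pos rfl, if_neg (by decide), if_neg (by decide), if_neg (by decide),
        if_neg (by decide), if_pos rfl]
      norm_num


end Stmt14Aux

open Module in
/-- Let `W` be the irreducible `3`-dimensional representation of `L = A₄` over
a field `k` of characteristic `≠ 2`, and let `G(m) = L^m` act on
`V(m) = W^{⊗m}`. Then every `g ∈ G(m)` has fixed space of dimension at least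
`(1/9) dim V(m)`. -/
theorem stmt_14 (k : Type) [Field k] (hchar : ringChar k ≠ 2)
    (W : Type) [AddCommGroup W] [Module k W] [FiniteDimensional k W]
    (ρ : Representation k (alternatingGroup (Fin 4)) W)
    (hirr : ∀ U : Submodule k W,
      (∀ g : alternatingGroup (Fin 4), ∀ w ∈ U, ρ g w ∈ U) → U = ⊥ ∨ U = ⊤)
    (hdim : Module.finrank k W = 3)
    (m : ℕ) (hm : 1 ≤ m) (g : Fin m → alternatingGroup (Fin 4)) :
    Module.finrank k (⨂[k] (_ : Fin m), W) ≤
      9 * Module.finrank k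
        (LinearMap.ker
          (PiTensorProduct.map (fun i => (ρ (g i) : W →ₗ[k] W)) - LinearMap.id)) := by
  classical
  have hn1 : (-1:k) ≠ 1 := Stmt14Aux.neg_one_ne_one hchar
  obtain ⟨e, hli, hCe, h1e, h2e⟩ := Stmt14Aux.exists_good_family hchar ρ hirr hdim
  have hcard : Fintype.card (Fin 3) = Module.finrank k W := by rw [hdim]; simp
  set b : Basis (Fin 3) k W := basisOfLinearIndependentOfCardEqFinrank hli hcard with hbdef
  have hb : ∀ r, b r = e r := fun r =>
    congrFun (coe_basisOfLinearIndependentOfCardEqFinrank hli hcard) r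
  choose d s hact hpm hprod using fun i =>
    Stmt14Aux.good_family_element hn1 ρ e hCe h1e h2e (g i)
  set B : (Fin m → Fin 3) → (⨂[k] (_ : Fin m), W) :=
    fun J => PiTensorProduct.tprod k (fun i => b (J i)) with hBdef
  set T : (⨂[k] (_ : Fin m), W) →ₗ[k] (⨂[k] (_ : Fin m), W) :=
    PiTensorProduct.map (fun i => (ρ (g i) : W →ₗ[k] W)) with hTdef
  set φ : (Fin m → Fin 3) → ((⨂[k] (_ : Fin m), W) →ₗ[k] k) :=
    fun J => PiTensorProduct.lift
      ((MultilinearMap.mkPiAlgebra k (Fin m) k).compLinearMap (fun i => b.coord (J i)))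
    with hφdef
  have hφB : ∀ J J', φ J (B J') = if J' = J then 1 else 0 := by
    intro J J'
    rw [hφdef, hBdef]
    simp only
    rw [PiTensorProduct.lift.tprod, MultilinearMap.compLinearMap_apply,
      MultilinearMap.mkPiAlgebra_apply]
    have hcoord : ∀ i, b.coord (J i) (b (J' i)) = if J' i = J i then 1 else 0 := by
      intro i
      rw [Basis.coord_apply, Basis.repr_self, Finsupp.single_apply]
    by_cases h : J' = J
    · subst h
      rw [if_pos rfl]
      apply Finset.prod_eq_one
      intro i _
      rw [hcoord i, if_pos rfl]
    · rw [if_neg h]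
      obtain ⟨i0, hi0⟩ : ∃ i, J' i ≠ J i := by
        by_contra hcon
        push_neg at hcon
        exact h (funext hcon)
      apply Finset.prod_eq_zero (Finset.mem_univ i0)
      rw [hcoord i0, if_neg hi0]
  have hTB : ∀ J, T (B J) = (∏ i, s i (J i + d i)) • B (fun i => J i + d i) := by
    intro J
    rw [hTdef, hBdef]
    simp only
    rw [PiTensorProduct.map_tprod]
    have heq : (fun i => (ρ (g i) : W →ₗ[k] W) (b (J i)))
        = fun i => s i (J i + d i) • b (J i + d i) := by
      funext i
      rw [hb, hb]
      exact hact i (J i)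
    rw [heq]
    exact MultilinearMap.map_smul_univ (PiTensorProduct.tprod k) _ _
  have hspan : Submodule.span k (Set.range B) = ⊤ := by
    apply le_antisymm le_top
    rw [← PiTensorProduct.span_tprod_eq_top]
    apply Submodule.span_le.mpr
    rintro x ⟨v, rfl⟩
    have hv : v = fun i => ∑ r : Fin 3, b.repr (v i) r • b r :=
      funext fun i => (b.sum_repr (v i)).symm
    rw [hv, MultilinearMap.map_sum_finset (PiTensorProduct.tprod k)]
    apply Submodule.sum_mem
    intro r _
    rw [MultilinearMap.map_smul_univ (PiTensorProduct.tprod k)]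
    exact Submodule.smul_mem _ _ (Submodule.subset_span ⟨r, rfl⟩)
  haveI hfin : Module.Finite k (⨂[k] (_ : Fin m), W) :=
    ⟨⟨Finset.univ.image B, by
      rw [Finset.coe_image, Finset.coe_univ, Set.image_univ]
      exact hspan⟩⟩
  have hup : Module.finrank k (⨂[k] (_ : Fin m), W) ≤ 3 ^ m := by
    have h1 : Module.finrank k (⨂[k] (_ : Fin m), W)
        = Module.finrank k (Submodule.span k (Set.range B)) := by
      rw [hspan, finrank_top]
    rw [h1]
    refine le_trans (finrank_span_le_card (R := k) (Set.range B)) ?_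
    rw [Set.toFinset_range]
    refine le_trans (Finset.card_image_le) ?_
    rw [Finset.card_univ, Fintype.card_fun, Fintype.card_fin, Fintype.card_fin]
  have hcore := Stmt14Aux.core hn1 B φ hφB T d s hTB hpm hprod
  exact le_trans hup hcore
end

section
/- Let q be a prime power and e > 2, with Φ*_e(q) the largest divisor of q^e − 1 coprime to q^m − 1 for all 1 ≤ m < e. If Φ*_e(q) = 1 then q = 2 and e = 6. -/
open Polynomial Finset

-- 2^(p-2) ≥ p for p ≥ 5
lemma auxZ_two_pow : ∀ p : ℕ, 5 ≤ p → p ≤ 2 ^ (p - 2) := by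
  intro p hp
  induction p with
  | zero => omega
  | succ n ih =>
    rcases Nat.lt_or_ge n 5 with h | h
    · interval_cases n <;> simp_all <;> omega
    · have := ih (by omega)
      have h2 : n + 1 - 2 = (n - 2) + 1 := by omega
      rw [h2, pow_succ]
      omega

lemma auxZ_p_lt (p : ℕ) (hp : 2 ≤ p) : p + 1 < 2 ^ p := by
  induction p with
  | zero => omega
  | succ n ih =>
    rcases Nat.lt_or_ge n 2 with h | h
    · interval_cases n <;> omega
    · have := ih h
      rw [pow_succ]; omega

lemma auxZ_final {p Q : ℕ} (hp : p.Prime) (hodd : Odd p) (hQ : 2 ≤ Q)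
    (h : Q ^ p - 1 < p * (Q + 1)) : p = 3 ∧ Q = 2 := by
  have hp3 : 3 ≤ p := by
    rcases hodd with ⟨k, hk⟩
    have := hp.two_le
    omega
  have hkey : Q ^ p ≤ p * (Q + 1) := by
    have h1 : 1 ≤ Q ^ p := Nat.one_le_pow _ _ (by omega)
    omega
  rcases Nat.lt_or_ge p 5 with h5 | h5
  · have hp3' : p = 3 := by
      interval_cases p
      · rfl
      · norm_num at hp
    subst hp3'
    refine ⟨rfl, ?_⟩
    by_contra hQ3
    have hQ3 : 3 ≤ Q := by omega
    have : Q ^ 3 = Q * Q * Q := by ring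
    nlinarith
  · exfalso
    have h1 : p ≤ 2 ^ (p - 2) := auxZ_two_pow p h5
    have h2 : 2 ^ (p - 2) ≤ Q ^ (p - 2) := Nat.pow_le_pow_left hQ _
    have h3 : Q ^ p = Q ^ (p - 2) * Q ^ 2 := by
      rw [← pow_add]; congr 1; omega
    have h4 : Q + 2 ≤ Q ^ 2 := by nlinarith
    have h5' : p * (Q + 2) ≤ Q ^ (p-2) * Q ^ 2 :=
      Nat.mul_le_mul (h1.trans h2) h4
    nlinarith

lemma auxZ_sq_zero {R : Type*} [CommRing R] {x : R} (hx : x ^ 2 = 0) :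
    ∀ i : ℕ, (1 + x) ^ i = 1 + i * x := by
  intro i
  induction i with
  | zero => simp
  | succ n ih =>
    rw [pow_succ, ih]
    have : (1 + (n : R) * x) * (1 + x) = 1 + ((n : R) + 1) * x + (n : R) * x ^ 2 := by ring
    rw [this, hx]
    push_cast
    ring

lemma auxZ_key2 {p : ℕ} (hp : p.Prime) (hodd : Odd p) {y : ℤ} (hy : (p : ℤ) ∣ y - 1) :
    ¬ ((p : ℤ) ^ 2 ∣ ∑ i ∈ Finset.range p, y ^ i) := by
  intro h
  obtain ⟨c, hc⟩ := hy
  have hy' : y = 1 + p * c := by linarith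
  -- cast to ZMod (p^2)
  have hcast : ((∑ i ∈ Finset.range p, y ^ i : ℤ) : ZMod (p ^ 2)) = 0 := by
    rw [ZMod.intCast_zmod_eq_zero_iff_dvd]
    exact_mod_cast h
  set R := ZMod (p ^ 2)
  have hpR : ((p : R)) ^ 2 = 0 := by
    have : ((p ^ 2 : ℕ) : R) = 0 := ZMod.natCast_self _
    push_cast at this
    exact this
  have hx2 : ((p : R) * (c : R)) ^ 2 = 0 := by
    rw [mul_pow, hpR, zero_mul]
  obtain ⟨k, hk⟩ : ∃ k, p = 2 * k + 1 := hodd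
  have hsum : ((∑ i ∈ Finset.range p, y ^ i : ℤ) : R) = (p : R) := by
    rw [hy']
    rw [Int.cast_sum]
    simp only [Int.cast_pow, Int.cast_add, Int.cast_one]
    rw [Int.cast_mul, Int.cast_natCast]
    calc (∑ i ∈ Finset.range p, ((1 : R) + (p : R) * (c : R)) ^ i)
        = ∑ i ∈ Finset.range p, (1 + (i : R) * ((p : R) * (c : R))) := by
          exact Finset.sum_congr rfl fun i _ => auxZ_sq_zero hx2 i
      _ = (p : R) + (∑ i ∈ Finset.range p, (i : ℕ)) * ((p : R) * (c : R)) := by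
          rw [Finset.sum_add_distrib, Finset.sum_const, Finset.card_range]
          rw [Nat.cast_sum, Finset.sum_mul, nsmul_eq_mul, mul_one]
      _ = (p : R) := by
          have hgauss : (∑ i ∈ Finset.range p, (i : ℕ)) = p * k := by
            have h2 : (∑ i ∈ Finset.range p, i) * 2 = p * (p - 1) :=
              Finset.sum_range_id_mul_two p
            have h3 : p - 1 = 2 * k := by omega
            rw [h3] at h2
            have h4 : p * (2 * k) = p * k * 2 := by ring
            rw [h4] at h2
            omega
          rw [hgauss]
          rw [Nat.cast_mul]
          have : (p : R) * (k : R) * ((p : R) * (c : R)) = ((p:R))^2 * ((k:R) * (c:R)) := by ring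
          rw [this, hpR]
          ring
  rw [hsum] at hcast
  have hd := (ZMod.natCast_eq_zero_iff p (p ^ 2)).mp hcast
  have h1 : p ^ 2 ≤ p := Nat.le_of_dvd hp.pos hd
  have h2 := hp.two_le
  nlinarith

lemma auxZ_cycl_dvd {e : ℕ} (he : 0 < e) (x : ℤ) :
    (cyclotomic e ℤ).eval x ∣ x ^ e - 1 := by
  have h1 : (cyclotomic e ℤ) ∣ X ^ e - 1 := by
    rw [← prod_cyclotomic_eq_X_pow_sub_one he ℤ]
    exact Finset.dvd_prod_of_mem _ (Nat.mem_divisors_self e he.ne')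
  have := eval_dvd (x := x) h1
  simpa using this

lemma auxZ_cycl_dvd_geom {e p : ℕ} (hp : p.Prime) (hpe : p ∣ e) (he : 0 < e) :
    (cyclotomic e ℤ) ∣ ∑ i ∈ Finset.range p, ((X : ℤ[X]) ^ (e / p)) ^ i := by
  have hep : e / p ∈ e.properDivisors := by
    rw [Nat.mem_properDivisors]
    exact ⟨Nat.div_dvd_of_dvd hpe, Nat.div_lt_self he hp.one_lt⟩
  obtain ⟨k, hk⟩ := X_pow_sub_one_mul_cyclotomic_dvd_X_pow_sub_one_of_dvd ℤ hep
  have hgeom : ((X : ℤ[X]) ^ (e / p) - 1) * ∑ i ∈ Finset.range p, ((X : ℤ[X]) ^ (e / p)) ^ i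
      = (X : ℤ[X]) ^ e - 1 := by
    rw [mul_comm, geom_sum_mul, ← pow_mul, Nat.div_mul_cancel hpe]
  have hne : ((X : ℤ[X]) ^ (e / p) - 1) ≠ 0 := by
    have hep0 : 0 < e / p := Nat.div_pos (Nat.le_of_dvd he hpe) hp.pos
    have := X_pow_sub_C_ne_zero (R := ℤ) hep0 1
    simpa using this
  refine ⟨k, mul_left_cancel₀ hne ?_⟩
  rw [hgeom, hk]
  ring

lemma auxZ_prime {q e r : ℕ} (hq2 : 2 ≤ q) (he : 2 < e)
    (hstep : ∀ r' : ℕ, r'.Prime → r' ∣ q ^ e - 1 → ∃ m, 1 ≤ m ∧ m < e ∧ r' ∣ q ^ m - 1)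
    (hr : r.Prime) (hrZ : (r : ℤ) ∣ (cyclotomic e ℤ).eval (q : ℤ)) :
    r ∣ e ∧ ordCompl[r] e = orderOf (q : ZMod r) ∧ ordCompl[r] e ∣ r - 1 := by
  haveI : Fact r.Prime := ⟨hr⟩
  have he0 : 0 < e := by omega
  have hqe1 : 1 ≤ q ^ e := Nat.one_le_pow _ _ (by omega)
  -- r divides q^e - 1
  have hrqe : r ∣ q ^ e - 1 := by
    have h1 : (r : ℤ) ∣ (q : ℤ) ^ e - 1 := hrZ.trans (auxZ_cycl_dvd he0 _)
    have h2 : ((q ^ e - 1 : ℕ) : ℤ) = (q : ℤ) ^ e - 1 := by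
      push_cast [Nat.cast_sub hqe1]
      ring
    rw [← h2] at h1
    exact_mod_cast h1
  -- q is a unit mod r
  have hq0 : (q : ZMod r) ≠ 0 := by
    intro h0
    have hrq : r ∣ q := (ZMod.natCast_eq_zero_iff q r).mp h0
    have : r ∣ q ^ e := hrq.trans (dvd_pow_self q he0.ne')
    have hsub := Nat.dvd_sub this hrqe
    have heq : q ^ e - (q ^ e - 1) = 1 := by omega
    rw [heq] at hsub
    exact Nat.Prime.one_lt hr |>.ne' (Nat.dvd_one.mp hsub)
  have hpowe : (q : ZMod r) ^ e = 1 := by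
    have h0 : ((q ^ e - 1 : ℕ) : ZMod r) = 0 := (ZMod.natCast_eq_zero_iff _ r).mpr hrqe
    rw [Nat.cast_sub hqe1] at h0
    push_cast at h0
    have := sub_eq_zero.mp h0
    exact this
  set o := orderOf (q : ZMod r) with ho_def
  have ho_e : o ∣ e := orderOf_dvd_of_pow_eq_one hpowe
  have ho_lt : o < e := by
    obtain ⟨m, hm1, hme, hrm⟩ := hstep r hr hrqe
    have hqm1 : 1 ≤ q ^ m := Nat.one_le_pow _ _ (by omega)
    have hpowm : (q : ZMod r) ^ m = 1 := by
      have h0 : ((q ^ m - 1 : ℕ) : ZMod r) = 0 := (ZMod.natCast_eq_zero_iff _ r).mpr hrm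
      rw [Nat.cast_sub hqm1] at h0
      push_cast at h0
      have := sub_eq_zero.mp h0
      exact this
    have := Nat.le_of_dvd (by omega) (orderOf_dvd_of_pow_eq_one hpowm)
    omega
  have ho_r1 : o ∣ r - 1 :=
    orderOf_dvd_of_pow_eq_one (ZMod.pow_card_sub_one_eq_one hq0)
  -- q̄ is a root of cyclotomic e over ZMod r
  have hroot : IsRoot (cyclotomic e (ZMod r)) (q : ZMod r) := by
    have h1 := cyclotomic.eval_apply (q : ℤ) e (Int.castRingHom (ZMod r))
    have h2 : (((cyclotomic e ℤ).eval (q : ℤ) : ℤ) : ZMod r) = 0 :=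
      (ZMod.intCast_zmod_eq_zero_iff_dvd _ r).mpr hrZ
    rw [IsRoot]
    have h3 : ((Int.castRingHom (ZMod r)) (q : ℤ)) = (q : ZMod r) := by
      simp
    rw [← h3, h1]
    exact h2
  have hre : r ∣ e := by
    by_contra hne
    haveI : NeZero (e : ZMod r) :=
      ⟨fun h0 => hne ((ZMod.natCast_eq_zero_iff e r).mp h0)⟩
    have := (isRoot_cyclotomic_iff.mp hroot).eq_orderOf
    omega
  have hord : ordCompl[r] e = orderOf (q : ZMod r) := by
    set j := e.factorization r with hj_def
    set s := ordCompl[r] e with hs_def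
    have hj1 : 0 < j := hr.factorization_pos_of_dvd he0.ne' hre
    have hes : r ^ j * s = e := Nat.ordProj_mul_ordCompl_eq_self e r
    have hrs : ¬ r ∣ s := Nat.not_dvd_ordCompl hr he0.ne'
    haveI : NeZero (s : ZMod r) :=
      ⟨fun h0 => hrs ((ZMod.natCast_eq_zero_iff s r).mp h0)⟩
    have hroot' : IsRoot (cyclotomic (r ^ j * s) (ZMod r)) (q : ZMod r) := by
      rwa [hes]
    exact (isRoot_cyclotomic_prime_pow_mul_iff_of_charP.mp hroot').eq_orderOf
  exact ⟨hre, hord, hord ▸ ho_r1⟩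

lemma auxZ_chain {p : ℕ} (hp : p.Prime) (s : ℕ) :
    ∀ i : ℕ, 1 ≤ i → ∀ x : ℤ,
      (cyclotomic (p ^ i * s) ℤ).eval x = (cyclotomic (p * s) ℤ).eval (x ^ (p ^ (i - 1))) := by
  intro i
  induction i with
  | zero => omega
  | succ n ih =>
    intro _ x
    rcases Nat.eq_zero_or_pos n with hn | hn
    · subst hn
      simp
    · have h1 : p ^ (n + 1) * s = (p ^ n * s) * p := by ring
      have h2 : cyclotomic (p ^ (n + 1) * s) ℤ = expand ℤ p (cyclotomic (p ^ n * s) ℤ) := by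
        rw [h1, ← cyclotomic_expand_eq_cyclotomic hp ⟨p ^ (n - 1) * s, by
          rw [← mul_assoc, ← pow_succ']
          congr 2
          omega⟩ ℤ]
      rw [h2, expand_eval, ih hn (x ^ p), ← pow_mul]
      congr 2
      rw [← pow_succ']
      congr 1
      omega

/-- Let `q` be a prime power, `e > 2`, and `Φ` the largest divisor of
`q^e - 1` coprime to `q^m - 1` for all `1 ≤ m < e`. If `Φ = 1` then `q = 2`
and `e = 6` (Zsigmondy). -/
theorem stmt_17 (q e Φ : ℕ)
    (hq : ∃ p n : ℕ, p.Prime ∧ 0 < n ∧ q = p ^ n) (he : 2 < e)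
    (hΦ : IsGreatest
      {d : ℕ | d ∣ q ^ e - 1 ∧ ∀ m, 1 ≤ m → m < e → Nat.Coprime d (q ^ m - 1)} Φ)
    (h1 : Φ = 1) :
    q = 2 ∧ e = 6 := by
  obtain ⟨P, n, hP, hn, hqP⟩ := hq
  have hq2 : 2 ≤ q := by
    have h1 : P ≤ P ^ n := Nat.le_self_pow hn.ne' P
    have := hP.two_le
    omega
  have he0 : 0 < e := by omega
  have hqe1 : 1 ≤ q ^ e := Nat.one_le_pow _ _ (by omega)
  have hub := hΦ.2
  have hstep : ∀ r' : ℕ, r'.Prime → r' ∣ q ^ e - 1 → ∃ m, 1 ≤ m ∧ m < e ∧ r' ∣ q ^ m - 1 := by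
    intro r hr hdvd
    by_contra hcon
    push_neg at hcon
    have hmem : r ∈ {d : ℕ | d ∣ q ^ e - 1 ∧ ∀ m, 1 ≤ m → m < e → Nat.Coprime d (q ^ m - 1)} :=
      ⟨hdvd, fun m hm1 hm2 => (Nat.Prime.coprime_iff_not_dvd hr).mpr (hcon m hm1 hm2)⟩
    have h2 := hub hmem
    rw [h1] at h2
    have := hr.two_le
    omega
  set Z := (cyclotomic e ℤ).eval (q : ℤ) with hZ_def
  have hq1Z : (1 : ℤ) < (q : ℤ) := by exact_mod_cast hq2
  have hZpos : 0 < Z := cyclotomic_pos' e hq1Z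
  set N := Z.natAbs with hN_def
  have hZN : (N : ℤ) = Z := Int.natAbs_of_nonneg hZpos.le
  have hNlb : (q - 1) ^ e.totient < N :=
    sub_one_pow_totient_lt_natAbs_cyclotomic_eval (by omega) (by omega)
  have hN2 : 2 ≤ N := by
    have h1 : 1 ≤ (q - 1) ^ e.totient := Nat.one_le_pow _ _ (by omega)
    omega
  have hNdvd : N ∣ q ^ e - 1 := by
    have hd1 : Z ∣ (q : ℤ) ^ e - 1 := auxZ_cycl_dvd he0 _
    have hd2 : ((q ^ e - 1 : ℕ) : ℤ) = (q : ℤ) ^ e - 1 := by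
      push_cast [Nat.cast_sub hqe1]
      ring
    rw [← hZN, ← hd2] at hd1
    exact_mod_cast hd1
  set p := N.minFac with hp_def
  have hp : p.Prime := Nat.minFac_prime (by omega)
  have hpN : p ∣ N := Nat.minFac_dvd N
  have hdvdZ : ∀ d : ℕ, d ∣ N → (d : ℤ) ∣ Z := fun d hd => hZN ▸ Int.natCast_dvd_natCast.mpr hd
  obtain ⟨hpe, hs_ord, hs_r1⟩ := auxZ_prime hq2 he hstep hp (hdvdZ p hpN)
  have huniq : ∀ d : ℕ, d.Prime → d ∣ N → d = p := by
    intro d hd hdN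
    by_contra hne
    obtain ⟨hde, hd_ord, hd_r1⟩ := auxZ_prime hq2 he hstep hd (hdvdZ d hdN)
    have hcop : Nat.Coprime d (p ^ e.factorization p) :=
      Nat.Coprime.pow_right _ ((Nat.coprime_primes hd hp).mpr hne)
    have hde' : d ∣ p ^ e.factorization p * ordCompl[p] e := by
      rw [Nat.ordProj_mul_ordCompl_eq_self]
      exact hde
    have hds : d ∣ ordCompl[p] e := hcop.dvd_of_dvd_mul_left hde'
    have hd_lt : d < p := by
      have h3 := Nat.le_of_dvd (by have := hp.two_le; omega) (hds.trans hs_r1)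
      omega
    have hcop2 : Nat.Coprime p (d ^ e.factorization d) :=
      Nat.Coprime.pow_right _ ((Nat.coprime_primes hp hd).mpr (Ne.symm hne))
    have hpe' : p ∣ d ^ e.factorization d * ordCompl[d] e := by
      rw [Nat.ordProj_mul_ordCompl_eq_self]
      exact hpe
    have hps' : p ∣ ordCompl[d] e := hcop2.dvd_of_dvd_mul_left hpe'
    have hp_lt : p < d := by
      have h3 := Nat.le_of_dvd (by have := hd.two_le; omega) (hps'.trans hd_r1)
      omega
    omega
  have hN0 : N ≠ 0 := by omega
  have hNK := Nat.eq_prime_pow_of_unique_prime_dvd hN0 (fun {d} hd hdN => huniq d hd hdN)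
  set K := N.primeFactorsList.length with hK_def
  set j := e.factorization p with hj_def
  set s := ordCompl[p] e with hs_def
  have hj1 : 0 < j := hp.factorization_pos_of_dvd he0.ne' hpe
  have hes : p ^ j * s = e := Nat.ordProj_mul_ordCompl_eq_self e p
  have hs0 : 0 < s := Nat.ordCompl_pos p he0.ne'
  have hpns : ¬ p ∣ s := Nat.not_dvd_ordCompl hp he0.ne'
  have hep : e / p = p ^ (j - 1) * s := by
    have h1 : p ^ j = p * p ^ (j - 1) := by
      rw [← pow_succ']
      congr 1
      omega
    rw [← hes, h1, mul_assoc, Nat.mul_div_cancel_left _ hp.pos]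
  haveI : Fact p.Prime := ⟨hp⟩
  have ho_dvd : orderOf ((q : ZMod p)) ∣ e / p := by
    rw [hep, ← hs_ord]
    exact dvd_mul_left s _
  have hyd : (p : ℤ) ∣ (q : ℤ) ^ (e / p) - 1 := by
    have hpow : ((q : ZMod p)) ^ (e / p) = 1 := orderOf_dvd_iff_pow_eq_one.mp ho_dvd
    have h0 : (((q : ℤ) ^ (e / p) - 1 : ℤ) : ZMod p) = 0 := by
      push_cast
      rw [hpow]
      ring
    exact (ZMod.intCast_zmod_eq_zero_iff_dvd _ p).mp h0
  have hND : (N : ℤ) ∣ ∑ i ∈ Finset.range p, ((q : ℤ) ^ (e / p)) ^ i := by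
    have hd1 := eval_dvd (p := cyclotomic e ℤ) (x := (q : ℤ)) (auxZ_cycl_dvd_geom hp hpe he0)
    simp only [eval_finset_sum, eval_pow, eval_X] at hd1
    rw [hZN]
    exact hd1
  rcases eq_or_ne p 2 with hp2 | hp2
  · -- p = 2 : contradiction
    exfalso
    have hs1 : s = 1 := by
      rw [hp2] at hs_r1
      simpa using Nat.dvd_one.mp hs_r1
    have he2 : e = 2 ^ j := by
      rw [← hes, hs1, hp2, mul_one]
    have hqodd : ¬ 2 ∣ q := by
      intro h2q
      have hA : 2 ∣ q ^ e := h2q.trans (dvd_pow_self q he0.ne')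
      have hB : 2 ∣ q ^ e - 1 := by
        rw [← hp2]
        exact hpN.trans hNdvd
      have := Nat.dvd_sub hA hB
      have heq : q ^ e - (q ^ e - 1) = 1 := by omega
      rw [heq] at this
      omega
    have hj2 : 2 ≤ j := by
      by_contra hcon
      have : j = 1 := by omega
      rw [this, pow_one] at he2
      omega
    have hq3 : 3 ≤ q := by
      rcases Nat.even_or_odd q with hev | _
      · exact absurd hev.two_dvd hqodd
      · omega
    have hphi2 : 2 ≤ e.totient := by
      have ht1 := Nat.totient_pos.mpr he0
      have ht2 := Nat.totient_even he
      rcases ht2 with ⟨k, hk⟩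
      omega
    have hN5 : 4 < N := by
      have hc : 2 ^ 2 ≤ (q - 1) ^ e.totient := by
        calc 2 ^ 2 ≤ (q - 1) ^ 2 := Nat.pow_le_pow_left (by omega) 2
        _ ≤ (q - 1) ^ e.totient := Nat.pow_le_pow_right (by omega) hphi2
      omega
    have hNK2 : N = 2 ^ K := by rw [hNK, hp2]
    have h4N : (4 : ℤ) ∣ (N : ℤ) := by
      have hK3 : 3 ≤ K := by
        by_contra hcon
        push_neg at hcon
        have hle : N ≤ 2 ^ 2 := by
          rw [hNK2]
          exact Nat.pow_le_pow_right (by omega) (by omega)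
        omega
      have hdq : (4 : ℕ) ∣ N := by
        rw [hNK2]
        have h22 : (2 : ℕ) ^ 2 ∣ 2 ^ K := pow_dvd_pow 2 (by omega)
        simpa using h22
      exact_mod_cast hdq
    have hyw : (q : ℤ) ^ (e / p) = ((q : ℤ) ^ (2 ^ (j - 2))) ^ 2 := by
      rw [← pow_mul]
      congr 1
      rw [hep, hs1, mul_one, hp2]
      have : 2 ^ (j - 2) * 2 = 2 ^ (j - 1) := by
        rw [← pow_succ]
        congr 1
        omega
      omega
    have hDval : (∑ i ∈ Finset.range p, ((q : ℤ) ^ (e / p)) ^ i)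
        = 1 + ((q : ℤ) ^ (2 ^ (j - 2))) ^ 2 := by
      rw [hyw, hp2, Finset.sum_range_succ, Finset.sum_range_one]
      ring
    have hwodd : Odd ((q : ℤ) ^ (2 ^ (j - 2))) := by
      have hqo : Odd (q : ℤ) := by
        have : q % 2 = 1 := by omega
        refine ⟨((q / 2 : ℕ) : ℤ), ?_⟩
        push_cast
        omega
      exact hqo.pow
    obtain ⟨t, ht⟩ := hwodd
    have h4D := h4N.trans hND
    rw [hDval, ht] at h4D
    have heq2 : 1 + (2 * t + 1) ^ 2 = 4 * (t ^ 2 + t) + 2 := by ring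
    rw [heq2] at h4D
    omega
  · -- p odd
    have hodd : Odd p := hp.odd_of_ne_two hp2
    have hsq : ¬ p ^ 2 ∣ N := by
      intro h2
      have hdz : ((p : ℤ)) ^ 2 ∣ ∑ i ∈ Finset.range p, ((q : ℤ) ^ (e / p)) ^ i := by
        have hc : ((p ^ 2 : ℕ) : ℤ) ∣ (N : ℤ) := Int.natCast_dvd_natCast.mpr h2
        push_cast at hc
        exact hc.trans hND
      exact auxZ_key2 hp hodd hyd hdz
    have hNp : N = p := by
      have hK1 : 1 ≤ K := by
        by_contra hcon
        have : K = 0 := by omega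
        rw [hNK, this, pow_zero] at hN2
        omega
      have hK2 : K < 2 := by
        by_contra hcon
        push_neg at hcon
        exact hsq (hNK ▸ pow_dvd_pow p hcon)
      have hK : K = 1 := by omega
      rw [hNK, hK, pow_one]
    have hp3 : 3 ≤ p := by
      rcases hodd with ⟨k, hk⟩
      have := hp.two_le
      omega
    set Qn : ℕ := q ^ p ^ (j - 1) with hQn_def
    have hQz : ((Qn : ℕ) : ℤ) = (q : ℤ) ^ p ^ (j - 1) := by
      rw [hQn_def]
      push_cast
      ring
    have hQ2 : 2 ≤ Qn := by
      have h1 : q ≤ q ^ p ^ (j - 1) := Nat.le_self_pow (by positivity) q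
      omega
    have hchain : Z = (cyclotomic (p * s) ℤ).eval ((Qn : ℤ)) := by
      rw [hZ_def, ← hes, auxZ_chain hp s j hj1 (q : ℤ), hQz]
    have hZp : Z = (p : ℤ) := by
      rw [← hZN, hNp]
    rcases Nat.lt_or_ge s 2 with hs1 | hs2
    · -- s = 1
      exfalso
      have hs1' : s = 1 := by omega
      rw [hs1', mul_one] at hchain
      rw [cyclotomic_prime ℤ p] at hchain
      have hsum : (∑ i ∈ Finset.range p, (X : ℤ[X]) ^ i).eval ((Qn : ℤ))
          = ∑ i ∈ Finset.range p, ((Qn : ℤ)) ^ i := by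
        simp [eval_finset_sum]
      rw [hsum] at hchain
      have hlow : (2 : ℤ) ^ p - 1 ≤ ∑ i ∈ Finset.range p, ((Qn : ℤ)) ^ i := by
        have h1 : ∑ i ∈ Finset.range p, (2 : ℤ) ^ i ≤ ∑ i ∈ Finset.range p, ((Qn : ℤ)) ^ i := by
          refine Finset.sum_le_sum fun i _ => ?_
          refine pow_le_pow_left₀ (by norm_num) ?_ i
          exact_mod_cast hQ2
        have h2 : (∑ i ∈ Finset.range p, (2 : ℤ) ^ i) * (2 - 1) = 2 ^ p - 1 :=
          geom_sum_mul 2 p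
        rw [show ((2 : ℤ) - 1) = 1 by ring, mul_one] at h2
        omega
      have hplt : (p : ℤ) + 1 < 2 ^ p := by
        have := auxZ_p_lt p hp.two_le
        exact_mod_cast this
      rw [hZp] at hchain
      rw [← hchain] at hlow
      omega
    · -- s ≥ 2
      have hB := cyclotomic_expand_eq_cyclotomic_mul hp hpns
      have hBe := congrArg (eval ((Qn : ℤ))) (hB ℤ)
      rw [expand_eval, eval_mul] at hBe
      have hsp : (cyclotomic (s * p) ℤ).eval ((Qn : ℤ)) = (p : ℤ) := by
        rw [mul_comm s p, ← hchain, hZp]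
      rw [hsp] at hBe
      set B := (cyclotomic s ℤ).eval ((Qn : ℤ)) with hB_def
      have hQ1Z : (1 : ℤ) < ((Qn : ℕ) : ℤ) := by exact_mod_cast hQ2
      have hBpos : 0 < B := cyclotomic_pos' s hQ1Z
      set t := s.totient with ht_def
      have ht1 : 0 < t := Nat.totient_pos.mpr (by omega)
      have hQnp : ((Qn ^ p : ℕ) : ℤ) = ((Qn : ℤ)) ^ p := by push_cast; ring
      have hlow : (Qn ^ p - 1) ^ t < ((cyclotomic s ℤ).eval (((Qn ^ p : ℕ) : ℤ))).natAbs := by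
        exact sub_one_pow_totient_lt_natAbs_cyclotomic_eval (by omega)
          (by
            have : 2 ≤ Qn ^ p := le_trans hQ2 (Nat.le_self_pow hp.pos.ne' Qn)
            omega)
      rw [hQnp, hBe] at hlow
      have hup : B.natAbs ≤ (Qn + 1) ^ t := by
        have hr1 : (1 : ℝ) < (Qn : ℝ) := by exact_mod_cast hQ2
        have h2 := cyclotomic_eval_le_add_one_pow_totient hr1 s
        have h3 : (cyclotomic s ℝ).eval ((Qn : ℝ)) = ((B : ℤ) : ℝ) := by
          have h4 := cyclotomic.eval_apply ((Qn : ℤ)) s (algebraMap ℤ ℝ)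
          have h5 : (algebraMap ℤ ℝ) ((Qn : ℤ)) = ((Qn : ℝ)) := by
            simp
          rw [h5] at h4
          rw [h4]
          simp [hB_def]
        rw [h3] at h2
        have h6 : ((B.natAbs : ℤ) : ℝ) ≤ (((Qn + 1) ^ t : ℕ) : ℝ) := by
          rw [Int.natAbs_of_nonneg hBpos.le]
          push_cast
          push_cast at h2
          convert h2 using 2
        exact_mod_cast h6
      have hAB : ((p : ℤ) * B).natAbs = p * B.natAbs := by
        rw [Int.natAbs_mul, Int.natAbs_natCast]
      rw [hAB] at hlow
      have hcomb : (Qn ^ p - 1) ^ t < p * (Qn + 1) ^ t :=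
        lt_of_lt_of_le hlow (Nat.mul_le_mul_left p hup)
      have hge : Qn + 1 ≤ Qn ^ p - 1 := by
        have hh1 : Qn ^ 3 ≤ Qn ^ p := Nat.pow_le_pow_right (by omega) hp3
        have hcube : Qn ^ 3 = Qn * (Qn * Qn) := by ring
        have h4 : 2 * (2 * Qn) ≤ Qn * (Qn * Qn) :=
          Nat.mul_le_mul hQ2 (Nat.mul_le_mul hQ2 le_rfl)
        omega
      have hfin : Qn ^ p - 1 < p * (Qn + 1) := by
        obtain ⟨t', ht'⟩ : ∃ t', t = t' + 1 := ⟨t - 1, by omega⟩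
        rw [ht'] at hcomb
        have hh1 : (Qn ^ p - 1) * (Qn + 1) ^ t' ≤ (Qn ^ p - 1) ^ (t' + 1) := by
          rw [pow_succ']
          exact Nat.mul_le_mul_left _ (Nat.pow_le_pow_left hge _)
        have hh2 : p * (Qn + 1) ^ (t' + 1) = (p * (Qn + 1)) * (Qn + 1) ^ t' := by
          rw [pow_succ']
          ring
        rw [hh2] at hcomb
        have := lt_of_le_of_lt hh1 hcomb
        exact Nat.lt_of_mul_lt_mul_right this
      obtain ⟨hp3', hQ2'⟩ := auxZ_final hp hodd hQ2 hfin
      have hqQ : q = 2 ∧ p ^ (j - 1) = 1 := by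
        rcases Nat.lt_or_ge (p ^ (j - 1)) 2 with hm | hm
        · have hm1 : p ^ (j - 1) = 1 := by
            have : 0 < p ^ (j - 1) := by positivity
            omega
          rw [hQn_def, hm1, pow_one] at hQ2'
          exact ⟨hQ2', hm1⟩
        · exfalso
          have hsq2 : q ^ 2 ≤ q ^ p ^ (j - 1) := Nat.pow_le_pow_right (by omega) hm
          have hsq3 : q ^ 2 = q * q := by ring
          have hq4 : 2 * 2 ≤ q * q := Nat.mul_le_mul hq2 hq2
          rw [hQn_def] at hQ2'
          omega
      have hj1' : j = 1 := by
        have := hqQ.2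
        rcases Nat.eq_zero_or_pos (j - 1) with h0 | h0
        · omega
        · exfalso
          have : p ≤ p ^ (j - 1) := Nat.le_self_pow (by omega) p
          omega
      have hs2' : s = 2 := by
        rw [hp3'] at hs_r1
        have hle := Nat.le_of_dvd (by omega) hs_r1
        omega
      refine ⟨hqQ.1, ?_⟩
      rw [← hes, hj1', hp3', pow_one, hs2']
end

section
/- Let G = A₅ (≅ PSL₂(5) ≅ PSL₂(4)). There exist three conjugate elements x, y, z of order 5 in G with xyz = 1 and ⟨x, y⟩ = G. -/
set_option maxRecDepth 4000

open Equiv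

private def pa : Equiv.Perm (Fin 5) := c[0,1,2,3,4]
private def pg : Equiv.Perm (Fin 5) := c[0,1,2]
private def pb : Equiv.Perm (Fin 5) := pg * pa * pg⁻¹
private def ph : Equiv.Perm (Fin 5) := c[1,3,2]

private lemma pa_mem : pa ∈ alternatingGroup (Fin 5) := by
  rw [Equiv.Perm.mem_alternatingGroup]; decide
private lemma pb_mem : pb ∈ alternatingGroup (Fin 5) := by
  rw [Equiv.Perm.mem_alternatingGroup]; decide
private lemma pz_mem : (pa * pb)⁻¹ ∈ alternatingGroup (Fin 5) := by
  rw [Equiv.Perm.mem_alternatingGroup]; decide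
private lemma pg_mem : pg ∈ alternatingGroup (Fin 5) := by
  rw [Equiv.Perm.mem_alternatingGroup]; decide
private lemma ph_mem : ph ∈ alternatingGroup (Fin 5) := by
  rw [Equiv.Perm.mem_alternatingGroup]; decide

private lemma normal_of_index_two {G : Type*} [Group G] (H : Subgroup G)
    (h : H.index = 2) : H.Normal := by
  constructor
  intro n hn g
  have h1 : g * n ∈ H ↔ (g ∈ H ↔ n ∈ H) := Subgroup.mul_mem_iff_of_index_two h
  have h2 : (g * n) * g⁻¹ ∈ H ↔ (g * n ∈ H ↔ g⁻¹ ∈ H) :=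
    Subgroup.mul_mem_iff_of_index_two h
  rw [h2, h1, inv_mem_iff]
  simp [hn]

private lemma ordG (u : alternatingGroup (Fin 5)) {p : ℕ} (hp : p.Prime)
    (h1 : (u : Equiv.Perm (Fin 5)) ^ p = 1) (h2 : (u : Equiv.Perm (Fin 5)) ≠ 1) :
    orderOf u = p := by
  haveI : Fact p.Prime := ⟨hp⟩
  refine orderOf_eq_prime (Subtype.ext ?_) ?_
  · rw [SubgroupClass.coe_pow, OneMemClass.coe_one]; exact h1
  · intro h
    exact h2 (by simpa using congrArg Subtype.val h)

/-- In `A₅` there exist three conjugate elements of order `5` with product `1`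
generating the group. -/
theorem stmt_18 :
    ∃ x y z : alternatingGroup (Fin 5),
      orderOf x = 5 ∧ IsConj x y ∧ IsConj x z ∧ x * y * z = 1 ∧
      Subgroup.closure {x, y} = (⊤ : Subgroup (alternatingGroup (Fin 5))) := by
  refine ⟨⟨pa, pa_mem⟩, ⟨pb, pb_mem⟩, ⟨(pa * pb)⁻¹, pz_mem⟩, ?_, ?_, ?_, ?_, ?_⟩
  · exact ordG _ (by norm_num) (by decide) (by decide)
  · rw [isConj_iff]
    refine ⟨⟨pg, pg_mem⟩, Subtype.ext ?_⟩
    simp only [Subgroup.coe_mul, InvMemClass.coe_inv]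
    rfl
  · rw [isConj_iff]
    refine ⟨⟨ph, ph_mem⟩, Subtype.ext ?_⟩
    simp only [Subgroup.coe_mul, InvMemClass.coe_inv]
    decide
  · refine Subtype.ext ?_
    simp only [Subgroup.coe_mul, InvMemClass.coe_inv, OneMemClass.coe_one]
    group
  · -- generation
    set H := Subgroup.closure
        ({⟨pa, pa_mem⟩, ⟨pb, pb_mem⟩} : Set (alternatingGroup (Fin 5))) with hH
    have hx : (⟨pa, pa_mem⟩ : alternatingGroup (Fin 5)) ∈ H :=
      Subgroup.subset_closure (by simp)
    have hy : (⟨pb, pb_mem⟩ : alternatingGroup (Fin 5)) ∈ H :=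
      Subgroup.subset_closure (by simp)
    set x : alternatingGroup (Fin 5) := ⟨pa, pa_mem⟩
    set y : alternatingGroup (Fin 5) := ⟨pb, pb_mem⟩
    have h3mem : x * y⁻¹ ∈ H := H.mul_mem hx (H.inv_mem hy)
    have h2mem : x * y * x * y * y ∈ H :=
      H.mul_mem (H.mul_mem (H.mul_mem (H.mul_mem hx hy) hx) hy) hy
    have co : ∀ u v : alternatingGroup (Fin 5),
        ((u * v : alternatingGroup (Fin 5)) : Equiv.Perm (Fin 5)) = u * v := fun _ _ => rfl
    have ho5 : orderOf x = 5 := ordG _ (by norm_num) (by decide) (by decide)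
    have ho3 : orderOf (x * y⁻¹) = 3 :=
      ordG _ (by norm_num) (by show (pa * pb⁻¹) ^ 3 = 1; decide)
        (by show pa * pb⁻¹ ≠ 1; decide)
    have ho2 : orderOf (x * y * x * y * y) = 2 :=
      ordG _ (by norm_num) (by show (pa * pb * pa * pb * pb) ^ 2 = 1; decide)
        (by show pa * pb * pa * pb * pb ≠ 1; decide)
    have dvd5 : 5 ∣ Nat.card H := by
      have hd := orderOf_dvd_natCard (⟨x, hx⟩ : H)
      rw [show orderOf (⟨x, hx⟩ : H) = 5 from (Subgroup.orderOf_coe _).symm.trans ho5] at hd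
      exact hd
    have dvd3 : 3 ∣ Nat.card H := by
      have hd := orderOf_dvd_natCard (⟨x * y⁻¹, h3mem⟩ : H)
      rw [show orderOf (⟨x * y⁻¹, h3mem⟩ : H) = 3 from
        (Subgroup.orderOf_coe _).symm.trans ho3] at hd
      exact hd
    have dvd2 : 2 ∣ Nat.card H := by
      have hd := orderOf_dvd_natCard (⟨x * y * x * y * y, h2mem⟩ : H)
      rw [show orderOf (⟨x * y * x * y * y, h2mem⟩ : H) = 2 from
        (Subgroup.orderOf_coe _).symm.trans ho2] at hd
      exact hd
    have dvd30 : 30 ∣ Nat.card H := by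
      have h6 : 6 ∣ Nat.card H := Nat.Coprime.mul_dvd_of_dvd_of_dvd (by norm_num) dvd2 dvd3
      exact Nat.Coprime.mul_dvd_of_dvd_of_dvd (by norm_num) h6 dvd5
    have hcardG : Nat.card (alternatingGroup (Fin 5)) = 60 := by
      have h := @two_mul_card_alternatingGroup (Fin 5) _ _ _
      rw [Fintype.card_perm, Fintype.card_fin,
        show Nat.factorial 5 = 120 from rfl] at h
      rw [Nat.card_eq_fintype_card]
      omega
    have hdvdG : H.index * Nat.card H = 60 := by
      rw [Subgroup.index_mul_card, hcardG]
    obtain ⟨k, hk⟩ := dvd30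
    have hik : H.index * k = 2 := by
      have h30 : 30 * (H.index * k) = 60 := by rw [hk] at hdvdG; rw [← hdvdG]; ring
      omega
    have hidx : H.index ∣ 2 := ⟨k, hik.symm⟩
    rcases (Nat.dvd_prime Nat.prime_two).mp hidx with hi | hi
    · exact Subgroup.index_eq_one.mp hi
    · have hnorm : H.Normal := normal_of_index_two H hi
      rcases IsSimpleGroup.eq_bot_or_eq_top_of_normal H hnorm with hbot | htop
      · exfalso
        rw [hbot] at hx
        have h1 : x = 1 := Subgroup.mem_bot.mp hx
        have h2 := congrArg Subtype.val h1
        revert h2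
        simp only [OneMemClass.coe_one]
        decide
      · exact htop
end
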